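/- arXiv:0805.3220 — 12 statements merged into one kernel-verified Lean document; each statement's English description precedes it below -/
import Mathlib

section
/- The function k(λ) = (1 − (λ+1)e^{−λ})^{1/2} / (1 − e^{−λ}) is strictly increasing on (0, ∞). -/
open Real Set

private lemma aux1 {x : ℝ} (hx : 0 < x) : (x + 1) * Real.exp (-x) < 1 := by
  have h := Real.add_one_lt_exp (ne_of_gt hx)
  have he : (0 : ℝ) < Real.exp (-x) := Real.exp_pos _
  have := mul_lt_mul_of_pos_right h he
  rwa [← Real.exp_add, add_neg_cancel, Real.exp_zero] at this

private lemma exp_neg_lt_one {x : ℝ} (hx : 0 < x) : Real.exp (-x) < 1 :=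
  Real.exp_lt_one_iff.mpr (neg_lt_zero.mpr hx)

private lemma g_pos {x : ℝ} (hx : 0 < x) :
    0 < x - 2 + (x + 2) * Real.exp (-x) := by
  set g : ℝ → ℝ := fun y => y - 2 + (y + 2) * Real.exp (-y) with hg
  have hderiv : ∀ y : ℝ, HasDerivAt g (1 - (y + 1) * Real.exp (-y)) y := by
    intro y
    have h1 : HasDerivAt (fun y : ℝ => Real.exp (-y)) (-Real.exp (-y)) y := by
      simpa [Function.comp_def] using (Real.hasDerivAt_exp (-y)).comp y (hasDerivAt_neg y)
    have h2 : HasDerivAt (fun y : ℝ => (y + 2) * Real.exp (-y))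
        (1 * Real.exp (-y) + (y + 2) * (-Real.exp (-y))) y :=
      (((hasDerivAt_id y).add_const 2).mul h1)
    have h3 : HasDerivAt (fun y : ℝ => y - 2) 1 y := (hasDerivAt_id y).sub_const 2
    have := h3.add h2
    refine this.congr_deriv ?_
    ring
  have hmono : StrictMonoOn g (Ici 0) := by
    apply strictMonoOn_of_deriv_pos (convex_Ici 0)
    · exact ((continuous_id.sub continuous_const).add
        ((continuous_id.add continuous_const).mul
          (Real.continuous_exp.comp continuous_neg))).continuousOn
    · intro y hy
      rw [interior_Ici] at hy
      rw [(hderiv y).deriv]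
      linarith [aux1 hy]
  have h0 : g 0 = 0 := by simp [hg]
  have := hmono (self_mem_Ici) (le_of_lt hx : (0:ℝ) ≤ x) hx
  rw [h0] at this
  simpa [hg] using this

private lemma f_strictMono :
    StrictMonoOn
      (fun l : ℝ => (1 - (l + 1) * Real.exp (-l)) / (1 - Real.exp (-l)) ^ 2)
      (Set.Ioi (0 : ℝ)) := by
  apply strictMonoOn_of_deriv_pos (convex_Ioi 0)
  · apply ContinuousOn.div
    · exact ((continuous_const.sub ((continuous_id.add continuous_const).mul
        (Real.continuous_exp.comp continuous_neg)))).continuousOn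
    · exact ((continuous_const.sub (Real.continuous_exp.comp continuous_neg)).pow 2).continuousOn
    · intro x hx
      have hd : (0:ℝ) < 1 - Real.exp (-x) := by
        linarith [exp_neg_lt_one (hx : (0:ℝ) < x)]
      exact pow_ne_zero 2 hd.ne'
  · intro x hx
    rw [interior_Ioi] at hx
    have hd : 0 < 1 - Real.exp (-x) := by linarith [exp_neg_lt_one hx]
    have hE : 0 < Real.exp (-x) := Real.exp_pos _
    have hexp : HasDerivAt (fun y : ℝ => Real.exp (-y)) (-Real.exp (-x)) x := by
      simpa [Function.comp_def] using (Real.hasDerivAt_exp (-x)).comp x (hasDerivAt_neg x)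
    have hu : HasDerivAt (fun y : ℝ => 1 - (y + 1) * Real.exp (-y))
        (x * Real.exp (-x)) x := by
      have h2 : HasDerivAt (fun y : ℝ => (y + 1) * Real.exp (-y))
          (1 * Real.exp (-x) + (x + 1) * (-Real.exp (-x))) x :=
        (((hasDerivAt_id x).add_const 1).mul hexp)
      have := (hasDerivAt_const x (1:ℝ)).sub h2
      refine this.congr_deriv ?_
      ring
    have hv : HasDerivAt (fun y : ℝ => (1 - Real.exp (-y)) ^ 2)
        (2 * (1 - Real.exp (-x)) * Real.exp (-x)) x := by
      have := ((hasDerivAt_const x (1:ℝ)).sub hexp).pow 2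
      refine this.congr_deriv ?_
      simp only [Pi.sub_apply]
      ring
    have hf : HasDerivAt
        (fun l : ℝ => (1 - (l + 1) * Real.exp (-l)) / (1 - Real.exp (-l)) ^ 2)
        ((x * Real.exp (-x) * (1 - Real.exp (-x)) ^ 2 -
          (1 - (x + 1) * Real.exp (-x)) * (2 * (1 - Real.exp (-x)) * Real.exp (-x))) /
          ((1 - Real.exp (-x)) ^ 2) ^ 2) x :=
      hu.div hv (by positivity)
    rw [hf.deriv]
    apply div_pos _ (by positivity)
    have hg := g_pos hx
    nlinarith [sq_nonneg (1 - Real.exp (-x)), mul_pos hE hd,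
      mul_pos (mul_pos hE hd) hg]

/-- The function `k(λ) = (1 − (λ+1)e^{−λ})^{1/2} / (1 − e^{−λ})` is strictly
increasing on `(0, ∞)`. -/
theorem k_strictMonoOn :
    StrictMonoOn
      (fun l : ℝ => Real.sqrt (1 - (l + 1) * Real.exp (-l)) / (1 - Real.exp (-l)))
      (Set.Ioi (0 : ℝ)) := by
  have key : ∀ x ∈ Set.Ioi (0:ℝ),
      Real.sqrt (1 - (x + 1) * Real.exp (-x)) / (1 - Real.exp (-x)) =
      Real.sqrt ((1 - (x + 1) * Real.exp (-x)) / (1 - Real.exp (-x)) ^ 2) := by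
    intro x hx
    have hx' : (0:ℝ) < x := hx
    have hd : 0 < 1 - Real.exp (-x) := by linarith [exp_neg_lt_one hx']
    have hu : 0 ≤ 1 - (x + 1) * Real.exp (-x) := by linarith [aux1 hx']
    rw [Real.sqrt_div hu, Real.sqrt_sq hd.le]
  intro a ha b hb hab
  simp only
  rw [key a ha, key b hb]
  have hfa : 0 ≤ (1 - (a + 1) * Real.exp (-a)) / (1 - Real.exp (-a)) ^ 2 := by
    have ha' : (0:ℝ) < a := ha
    have := aux1 ha'
    have h2 : (0:ℝ) ≤ (1 - Real.exp (-a)) ^ 2 := sq_nonneg _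
    apply div_nonneg (by linarith) h2
  exact Real.sqrt_lt_sqrt hfa (f_strictMono ha hb hab)
end

section
/- The infimum of k(λ) over λ ∈ (0,∞) equals 1/√2 and the supremum equals 1; more precisely, 1/√2 < k(λ) < 1 for all λ > 0, k(λ) → 1/√2 as λ → 0⁺, and k(λ) → 1 as λ → ∞. -/
open Real Set Filter Topology

/-- `k(λ) = (1 − (λ+1)e^{−λ})^{1/2} / (1 − e^{−λ})`. -/
noncomputable def kfun (l : ℝ) : ℝ :=
  Real.sqrt (1 - (l + 1) * Real.exp (-l)) / (1 - Real.exp (-l))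

private lemma exp_quad {x : ℝ} (hx : 0 < x) : 1 + x + x^2/2 < Real.exp x := by
  have h := Real.sum_le_exp_of_nonneg hx.le 4
  have hs : ∑ i ∈ Finset.range 4, x ^ i / (Nat.factorial i : ℝ)
      = 1 + x + x^2/2 + x^3/6 := by
    simp [Finset.sum_range_succ, Nat.factorial]
  rw [hs] at h
  nlinarith [pow_pos hx 3]

private lemma kfun_bounds {l : ℝ} (hl : 0 < l) :
    1 / Real.sqrt 2 < kfun l ∧ kfun l < 1 := by
  have hEpos : 0 < Real.exp (-l) := Real.exp_pos _
  have hU := Real.add_one_lt_exp hl.ne'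
  have hLb := Real.add_one_lt_exp (neg_ne_zero.mpr hl.ne')
  have hprod : Real.exp (-l) * Real.exp l = 1 := by
    rw [← Real.exp_add]; simp
  have h1U : (1:ℝ) < Real.exp l := by linarith
  have hden : 0 < 1 - Real.exp (-l) := by
    nlinarith [mul_pos hEpos (sub_pos.mpr h1U)]
  have hnum : 0 < 1 - (l+1)*Real.exp (-l) := by
    nlinarith [mul_pos hEpos (sub_pos.mpr hU)]
  constructor
  · have hq : 1 + l + l^2/2 < Real.exp l := exp_quad hl
    have h3 : 1 + l^2/2 < Real.exp l - l := by linarith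
    have h4 : (1 + l^2/2)^2 < (Real.exp l - l)^2 :=
      pow_lt_pow_left₀ h3 (by positivity) two_ne_zero
    have hq2 : 0 < Real.exp l ^ 2 - 2*l*Real.exp l - 1 := by
      nlinarith [sq_nonneg (l^2), sq_nonneg l]
    have hp1 : Real.exp (-l)^2 * Real.exp l = Real.exp (-l) := by
      rw [pow_two, mul_assoc, hprod, mul_one]
    have hp2 : Real.exp (-l)^2 * Real.exp l ^2 = 1 := by
      rw [← mul_pow, hprod, one_pow]
    have key : Real.exp (-l)^2 + 2*l*Real.exp (-l) < 1 := by
      nlinarith [mul_pos (mul_pos hEpos hEpos) hq2]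
    rw [kfun, div_lt_div_iff₀ (Real.sqrt_pos.mpr two_pos) hden, one_mul,
        ← Real.sqrt_mul hnum.le]
    refine (Real.lt_sqrt hden.le).mpr ?_
    nlinarith
  · rw [kfun, div_lt_one hden]
    refine (Real.sqrt_lt' hden).mpr ?_
    nlinarith [mul_pos hEpos (show 0 < Real.exp (-l) + l - 1 by linarith)]

private lemma hasDerivAt_expneg (x : ℝ) :
    HasDerivAt (fun x : ℝ => Real.exp (-x)) (-Real.exp (-x)) x := by
  have h := (Real.hasDerivAt_exp (-x)).comp x (hasDerivAt_neg x)
  simp only [mul_neg, mul_one] at h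
  exact h

private lemma hasDerivAt_N (x : ℝ) :
    HasDerivAt (fun x : ℝ => 1 - (x + 1) * Real.exp (-x)) (x * Real.exp (-x)) x := by
  have h := (((hasDerivAt_id x).add_const 1).mul (hasDerivAt_expneg x)).const_sub 1
  exact h.congr_deriv (by rw [id_eq]; ring)

private lemma hasDerivAt_D (x : ℝ) :
    HasDerivAt (fun x : ℝ => (1 - Real.exp (-x))^2)
      (2 * (1 - Real.exp (-x)) * Real.exp (-x)) x := by
  have hb : HasDerivAt (fun x : ℝ => 1 - Real.exp (-x)) (Real.exp (-x)) x := by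
    simpa using (hasDerivAt_expneg x).const_sub 1
  have h := hb.pow 2
  exact h.congr_deriv (by norm_num)

private lemma slope_lim :
    Tendsto (fun x : ℝ => (1 - Real.exp (-x)) / x) (𝓝[>] (0:ℝ)) (𝓝 1) := by
  have hb : HasDerivAt (fun x : ℝ => 1 - Real.exp (-x)) 1 0 := by
    simpa using (hasDerivAt_expneg 0).const_sub 1
  have h := hasDerivAt_iff_tendsto_slope.mp hb
  have h2 : Tendsto (fun x : ℝ => (1 - Real.exp (-x)) / x) (𝓝[≠] (0:ℝ)) (𝓝 1) := by
    refine h.congr fun x => ?_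
    simp [slope_def_field, div_eq_div_iff]
  exact h2.mono_left (nhdsWithin_mono 0 fun x hx => ne_of_gt hx)

private lemma kfun_zero_lim :
    Tendsto kfun (𝓝[>] (0:ℝ)) (𝓝 (1 / Real.sqrt 2)) := by
  have hdiv : Tendsto (fun x : ℝ =>
      (x * Real.exp (-x)) / (2 * (1 - Real.exp (-x)) * Real.exp (-x)))
      (𝓝[>] (0:ℝ)) (𝓝 (1/2)) := by
    have h1 : Tendsto (fun x : ℝ => (2 * ((1 - Real.exp (-x)) / x))⁻¹)
        (𝓝[>] (0:ℝ)) (𝓝 ((2 * 1)⁻¹)) :=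
      (tendsto_const_nhds.mul slope_lim).inv₀ (by norm_num)
    have h2 : (2 * (1:ℝ))⁻¹ = 1/2 := by norm_num
    rw [h2] at h1
    refine h1.congr' ?_
    filter_upwards [self_mem_nhdsWithin] with x hx
    have hx0 : (0:ℝ) < x := hx
    have hE : 0 < Real.exp (-x) := Real.exp_pos _
    have hEd : Real.exp (-x) < 1 := by
      rw [Real.exp_lt_one_iff]; linarith
    have hd : 0 < 1 - Real.exp (-x) := by linarith
    field_simp
  have hlhop : Tendsto (fun x : ℝ =>
      (1 - (x + 1) * Real.exp (-x)) / (1 - Real.exp (-x))^2)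
      (𝓝[>] (0:ℝ)) (𝓝 (1/2)) := by
    refine HasDerivAt.lhopital_zero_right_on_Ioo (f' := fun x => x * Real.exp (-x))
      (g' := fun x => 2 * (1 - Real.exp (-x)) * Real.exp (-x))
      (b := 1) one_pos (fun x _ => hasDerivAt_N x) (fun x _ => hasDerivAt_D x)
      (fun x hx => ?_) ?_ ?_ hdiv
    · have hE : 0 < Real.exp (-x) := Real.exp_pos _
      have hEd : Real.exp (-x) < 1 := by rw [Real.exp_lt_one_iff]; linarith [hx.1]
      have hd : 0 < 1 - Real.exp (-x) := by linarith
      exact (mul_pos (mul_pos two_pos hd) hE).ne'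
    · have hc : Continuous (fun x : ℝ => 1 - (x + 1) * Real.exp (-x)) := by continuity
      have := tendsto_nhdsWithin_of_tendsto_nhds (s := Set.Ioi 0) (hc.tendsto 0)
      simpa using this
    · have hc : Continuous (fun x : ℝ => (1 - Real.exp (-x))^2) := by continuity
      have := tendsto_nhdsWithin_of_tendsto_nhds (s := Set.Ioi 0) (hc.tendsto 0)
      simpa using this
  have hsqrt := (Real.continuous_sqrt.tendsto (1/2)).comp hlhop
  have hval : Real.sqrt (1/2) = 1 / Real.sqrt 2 := by
    rw [one_div, one_div, ← Real.sqrt_inv]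
  rw [hval] at hsqrt
  refine hsqrt.congr' ?_
  filter_upwards [self_mem_nhdsWithin] with x hx
  have hx0 : (0:ℝ) < x := hx
  have hEd : Real.exp (-x) < 1 := by rw [Real.exp_lt_one_iff]; linarith
  have hd : 0 < 1 - Real.exp (-x) := by linarith
  have hnum : 0 < 1 - (x + 1) * Real.exp (-x) := by
    have hU := Real.add_one_lt_exp hx0.ne'
    have hprod : Real.exp (-x) * Real.exp x = 1 := by
      rw [← Real.exp_add]; simp
    nlinarith [mul_pos (Real.exp_pos (-x)) (sub_pos.mpr hU)]
  show Real.sqrt _ = kfun x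
  rw [kfun, Real.sqrt_div hnum.le, Real.sqrt_sq hd.le]

private lemma kfun_atTop_lim : Tendsto kfun atTop (𝓝 1) := by
  have h1 : Tendsto (fun x : ℝ => x * Real.exp (-x)) atTop (𝓝 0) := by
    simpa using Real.tendsto_pow_mul_exp_neg_atTop_nhds_zero 1
  have h2 := Real.tendsto_exp_neg_atTop_nhds_zero
  have h3 : Tendsto (fun x : ℝ => 1 - (x * Real.exp (-x) + Real.exp (-x)))
      atTop (𝓝 (1 - (0 + 0))) := tendsto_const_nhds.sub (h1.add h2)
  have hnum : Tendsto (fun x : ℝ => 1 - (x + 1) * Real.exp (-x)) atTop (𝓝 1) := by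
    simpa using h3.congr fun x => by ring
  have hden : Tendsto (fun x : ℝ => 1 - Real.exp (-x)) atTop (𝓝 1) := by
    simpa using (tendsto_const_nhds.sub h2 :
      Tendsto (fun x : ℝ => 1 - Real.exp (-x)) atTop (𝓝 (1 - 0)))
  have hs := (Real.continuous_sqrt.tendsto 1).comp hnum
  rw [Real.sqrt_one] at hs
  have := hs.div hden one_ne_zero
  rw [div_one] at this
  exact this


/-- The infimum of `k` over `(0,∞)` is `1/√2` and the supremum is `1`;
more precisely `1/√2 < k(λ) < 1` for all `λ > 0`, `k(λ) → 1/√2` as `λ → 0⁺`,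
and `k(λ) → 1` as `λ → ∞`. -/
theorem kfun_inf_sup :
    (∀ l : ℝ, 0 < l → 1 / Real.sqrt 2 < kfun l ∧ kfun l < 1) ∧
    sInf (kfun '' Set.Ioi 0) = 1 / Real.sqrt 2 ∧
    sSup (kfun '' Set.Ioi 0) = 1 ∧
    Filter.Tendsto kfun (nhdsWithin 0 (Set.Ioi 0)) (nhds (1 / Real.sqrt 2)) ∧
    Filter.Tendsto kfun Filter.atTop (nhds 1) := by
  have hne : (kfun '' Set.Ioi 0).Nonempty := ⟨kfun 1, 1, by norm_num, rfl⟩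
  refine ⟨fun l hl => kfun_bounds hl, ?_, ?_, kfun_zero_lim, kfun_atTop_lim⟩
  · refine IsGLB.csInf_eq ⟨?_, ?_⟩ hne
    · rintro y ⟨x, hx, rfl⟩
      exact (kfun_bounds hx).1.le
    · intro b hb
      refine ge_of_tendsto kfun_zero_lim ?_
      filter_upwards [self_mem_nhdsWithin] with x hx
      exact hb ⟨x, hx, rfl⟩
  · refine IsLUB.csSup_eq ⟨?_, ?_⟩ hne
    · rintro y ⟨x, hx, rfl⟩
      exact (kfun_bounds hx).2.le
    · intro b hb
      refine le_of_tendsto kfun_atTop_lim ?_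
      filter_upwards [eventually_gt_atTop 0] with x hx
      exact hb ⟨x, hx, rfl⟩
end

section
/- For every λ > 0 and every p* with e^{−λ} < p* < 1, the off-diagonal entry of the Fisher information matrix of the reparameterized ZIP model in the parameters (p*, λ) vanishes: Σ_{x=0}^∞ f₁*(x|λ,p*) · (∂/∂p* log f₁*(x|λ,p*)) · (∂/∂λ log f₁*(x|λ,p*)) = 0. That is, p* and λ are orthogonal parameters. -/
/-- The zero-truncated Poisson probability function:
`f^T(x|λ) = e^{−λ}λ^x/(x!(1−e^{−λ}))` for `x ≥ 1`, and `f^T(0|λ) = 0`. -/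
noncomputable def truncPoisson (l : ℝ) (x : ℕ) : ℝ :=
  if x = 0 then 0
  else Real.exp (-l) * l ^ x / ((Nat.factorial x : ℝ) * (1 - Real.exp (-l)))

/-- The reparameterized zero-inflated Poisson probability function
`f₁*(x|λ,p*) = p*·1{x=0} + (1−p*)·f^T(x|λ)`. -/
noncomputable def zipStar (l p : ℝ) (x : ℕ) : ℝ :=
  (if x = 0 then p else 0) + (1 - p) * truncPoisson l x

lemma aux_tsum_exp (l : ℝ) : ∑' n : ℕ, l ^ n / (n.factorial : ℝ) = Real.exp l := by
  rw [Real.exp_eq_exp_ℝ, NormedSpace.exp_eq_tsum_div]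

lemma aux_summable_mul (l : ℝ) :
    Summable (fun x : ℕ => (x : ℝ) * l ^ x / (x.factorial : ℝ)) := by
  rw [← summable_nat_add_iff 1]
  have h : (fun n : ℕ => ((n + 1 : ℕ) : ℝ) * l ^ (n + 1) / ((n + 1).factorial : ℝ))
      = fun n : ℕ => l * (l ^ n / (n.factorial : ℝ)) := by
    funext n
    have h0 : ((n.factorial : ℝ)) ≠ 0 := Nat.cast_ne_zero.2 n.factorial_ne_zero
    rw [Nat.factorial_succ]
    push_cast
    field_simp
    ring
  exact h ▸ (Real.summable_pow_div_factorial l).mul_left l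

lemma aux_tsum_mul (l : ℝ) :
    ∑' x : ℕ, (x : ℝ) * l ^ x / (x.factorial : ℝ) = l * Real.exp l := by
  rw [Summable.tsum_eq_zero_add (aux_summable_mul l)]
  have h : (fun n : ℕ => ((n + 1 : ℕ) : ℝ) * l ^ (n + 1) / ((n + 1).factorial : ℝ))
      = fun n : ℕ => l * (l ^ n / (n.factorial : ℝ)) := by
    funext n
    have h0 : ((n.factorial : ℝ)) ≠ 0 := Nat.cast_ne_zero.2 n.factorial_ne_zero
    rw [Nat.factorial_succ]
    push_cast
    field_simp
    ring
  push_cast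
  rw [show (fun n : ℕ => ((n : ℝ) + 1) * l ^ (n + 1) / ((n + 1).factorial : ℝ))
      = fun n : ℕ => l * (l ^ n / (n.factorial : ℝ)) by push_cast at h ⊢; exact h]
  rw [tsum_mul_left, aux_tsum_exp]
  simp

/-- The off-diagonal entry of the Fisher information matrix of the reparameterized
ZIP model in the parameters `(p*, λ)` vanishes: `p*` and `λ` are orthogonal. -/
theorem zipStar_fisher_orthogonal (l p : ℝ) (hl : 0 < l)
    (hp1 : Real.exp (-l) < p) (hp2 : p < 1) :
    ∑' x : ℕ, zipStar l p x *
        deriv (fun q => Real.log (zipStar l q x)) p *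
        deriv (fun t => Real.log (zipStar t p x)) l = 0 := by
  set E := Real.exp (-l) with hE
  have hE0 : 0 < E := Real.exp_pos _
  have hE1 : E < 1 := by
    rw [hE]; exact Real.exp_lt_one_iff.mpr (by linarith)
  have h1E : (0 : ℝ) < 1 - E := by linarith
  have hp : (0 : ℝ) < 1 - p := by linarith
  have hEexp : E * Real.exp l = 1 := by
    rw [hE, ← Real.exp_add]; simp
  set A := E / (1 - E) ^ 2 with hA
  set B := E / ((1 - E) * l) with hB
  have hkey : ∀ x : ℕ, zipStar l p x * deriv (fun q => Real.log (zipStar l q x)) p *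
      deriv (fun t => Real.log (zipStar t p x)) l
      = A * (l ^ x / (x.factorial : ℝ)) - B * ((x : ℝ) * l ^ x / (x.factorial : ℝ))
        - (if x = 0 then A else 0) := by
    intro x
    cases x with
    | zero =>
      have h0 : (fun t => Real.log (zipStar t p 0)) = fun _ => Real.log p := by
        funext t; simp [zipStar, truncPoisson]
      rw [h0, deriv_const]
      simp
    | succ n =>
      set c : ℝ := ((n + 1).factorial : ℝ) with hc
      have hc0 : (0 : ℝ) < c := by
        rw [hc]; exact_mod_cast Nat.factorial_pos _
      set T : ℝ := E * l ^ (n + 1) / (c * (1 - E)) with hT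
      have hT0 : 0 < T := by
        rw [hT]; exact div_pos (mul_pos hE0 (pow_pos hl _)) (mul_pos hc0 h1E)
      have hzip : zipStar l p (n + 1) = (1 - p) * T := by
        simp [zipStar, truncPoisson, hT, hc, hE]
      -- derivative in q
      have hdq : deriv (fun q => Real.log (zipStar l q (n + 1))) p = -(1 / (1 - p)) := by
        have hfq : (fun q => Real.log (zipStar l q (n + 1)))
            = fun q => Real.log ((1 - q) * T) := by
          funext q; simp [zipStar, truncPoisson, hT, hc, hE]
        rw [hfq]
        have h1 : HasDerivAt (fun q : ℝ => (1 - q) * T) (-1 * T) p :=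
          ((hasDerivAt_id p).const_sub 1).mul_const T
        have hne : (1 - p) * T ≠ 0 := (mul_pos hp hT0).ne'
        have h2 : HasDerivAt (fun q => Real.log ((1 - q) * T)) (((1 - p) * T)⁻¹ * (-1 * T)) p :=
          by have := (Real.hasDerivAt_log hne).comp p h1; exact this
        rw [h2.deriv]
        field_simp
      -- derivative in t
      set G : ℝ := (1 - p) * (((-E * l ^ (n + 1) + E * (((n : ℝ) + 1) * l ^ n)) * (c * (1 - E))
          - (E * l ^ (n + 1)) * (c * E)) / (c * (1 - E)) ^ 2) with hG
      have hdt : deriv (fun t => Real.log (zipStar t p (n + 1))) l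
          = ((1 - p) * T)⁻¹ * G := by
        have hfq : (fun t => Real.log (zipStar t p (n + 1)))
            = fun t => Real.log ((1 - p) * (Real.exp (-t) * t ^ (n + 1) / (c * (1 - Real.exp (-t))))) := by
          funext t; simp [zipStar, truncPoisson, hc]
        rw [hfq]
        have hexp : HasDerivAt (fun t : ℝ => Real.exp (-t)) (-E) l := by
          simpa [hE] using (hasDerivAt_neg l).exp
        have hpow : HasDerivAt (fun t : ℝ => t ^ (n + 1)) (((n : ℝ) + 1) * l ^ n) l := by
          simpa using hasDerivAt_pow (n + 1) l
        have hu : HasDerivAt (fun t : ℝ => Real.exp (-t) * t ^ (n + 1))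
            (-E * l ^ (n + 1) + E * (((n : ℝ) + 1) * l ^ n)) l := hexp.mul hpow
        have hv : HasDerivAt (fun t : ℝ => c * (1 - Real.exp (-t))) (c * E) l := by
          simpa using ((hasDerivAt_const l (1 : ℝ)).sub hexp).const_mul c
        have hvne : c * (1 - E) ≠ 0 := (mul_pos hc0 h1E).ne'
        have hdiv : HasDerivAt (fun t : ℝ => Real.exp (-t) * t ^ (n + 1) / (c * (1 - Real.exp (-t))))
            (((-E * l ^ (n + 1) + E * (((n : ℝ) + 1) * l ^ n)) * (c * (1 - E))
              - (E * l ^ (n + 1)) * (c * E)) / (c * (1 - E)) ^ 2) l := by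
          simpa [hE, Pi.div_def] using hu.div hv (by simpa [hE] using hvne)
        have hg : HasDerivAt
            (fun t : ℝ => (1 - p) * (Real.exp (-t) * t ^ (n + 1) / (c * (1 - Real.exp (-t))))) G l := by
          rw [hG]; exact hdiv.const_mul (1 - p)
        have hgl : (1 - p) * (Real.exp (-l) * l ^ (n + 1) / (c * (1 - Real.exp (-l)))) = (1 - p) * T := by
          rw [hT, hE]
        have hne : (1 - p) * (Real.exp (-l) * l ^ (n + 1) / (c * (1 - Real.exp (-l)))) ≠ 0 := by
          rw [hgl]; exact (mul_pos hp hT0).ne'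
        have h3 := ((Real.hasDerivAt_log hne).comp l hg).deriv
        simp only [Function.comp_def] at h3
        rw [hgl] at h3
        exact h3
      rw [hzip, hdq, hdt]
      have hne1 : (1 - p) ≠ 0 := hp.ne'
      have hne2 : T ≠ 0 := hT0.ne'
      have hne3 : c ≠ 0 := hc0.ne'
      have hne4 : (1 - E) ≠ 0 := h1E.ne'
      have hne5 : l ≠ 0 := hl.ne'
      have hEne : E ≠ 0 := hE0.ne'
      simp only [Nat.succ_ne_zero, if_false, sub_zero, Nat.cast_succ]
      rw [hG, hT, hA, hB]
      field_simp
      ring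
  rw [tsum_congr hkey]
  have s1 : Summable (fun x : ℕ => A * (l ^ x / (x.factorial : ℝ))) :=
    (Real.summable_pow_div_factorial l).mul_left A
  have s2 : Summable (fun x : ℕ => B * ((x : ℝ) * l ^ x / (x.factorial : ℝ))) :=
    (aux_summable_mul l).mul_left B
  have s3 : Summable (fun x : ℕ => if x = 0 then A else 0) := by
    apply summable_of_ne_finset_zero (s := {0})
    intro x hx
    simp only [Finset.mem_singleton] at hx
    simp [hx]
  rw [Summable.tsum_sub (s1.sub s2) s3, Summable.tsum_sub s1 s2, tsum_mul_left, tsum_mul_left,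
    aux_tsum_exp, aux_tsum_mul, tsum_ite_eq]
  have hexpne : Real.exp l ≠ 0 := (Real.exp_pos l).ne'
  rw [hA, hB]
  field_simp
  linear_combination E * hEexp
end

section
/- For every λ > 0, the Fisher information of the zero-truncated Poisson model equals k(λ)²/λ; that is, Σ_{x=1}^∞ f^T(x|λ) · (∂/∂λ log f^T(x|λ))² = (1 − (λ+1)e^{−λ}) / (λ(1 − e^{−λ})²). Consequently the Jeffreys prior for λ under the zero-truncated Poisson model is π_J¹(λ) = k(λ)/√λ with k(λ) = (1 − (λ+1)e^{−λ})^{1/2}/(1 − e^{−λ}). -/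
lemma tsum_pow_div_fact (l : ℝ) : ∑' n : ℕ, l ^ n / (Nat.factorial n : ℝ) = Real.exp l := by
  rw [Real.exp_eq_exp_ℝ, NormedSpace.exp_eq_tsum_div]

lemma shift1 (l : ℝ) (n : ℕ) :
    ((n : ℝ) + 1) * (l ^ (n + 1) / (Nat.factorial (n + 1) : ℝ))
      = l * (l ^ n / (Nat.factorial n : ℝ)) := by
  have h : (Nat.factorial (n + 1) : ℝ) = ((n : ℝ) + 1) * (Nat.factorial n : ℝ) := by
    push_cast [Nat.factorial_succ]; ring
  have hn : ((n : ℝ) + 1) ≠ 0 := by positivity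
  have hf : (Nat.factorial n : ℝ) ≠ 0 := Nat.cast_ne_zero.2 (Nat.factorial_ne_zero n)
  rw [h]
  field_simp
  ring

lemma summable_s1 (l : ℝ) :
    Summable (fun n : ℕ => (n : ℝ) * (l ^ n / (Nat.factorial n : ℝ))) := by
  rw [← summable_nat_add_iff 1]
  have : (fun n : ℕ => ((n + 1 : ℕ) : ℝ) * (l ^ (n + 1) / (Nat.factorial (n + 1) : ℝ)))
      = fun n : ℕ => l * (l ^ n / (Nat.factorial n : ℝ)) := by
    funext n; push_cast; exact shift1 l n
  rw [this]
  exact (Real.summable_pow_div_factorial l).mul_left l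

lemma tsum_s1 (l : ℝ) :
    ∑' n : ℕ, (n : ℝ) * (l ^ n / (Nat.factorial n : ℝ)) = l * Real.exp l := by
  rw [Summable.tsum_eq_zero_add (summable_s1 l)]
  simp only [Nat.cast_zero, zero_mul, zero_add]
  have : (fun n : ℕ => ((n + 1 : ℕ) : ℝ) * (l ^ (n + 1) / (Nat.factorial (n + 1) : ℝ)))
      = fun n : ℕ => l * (l ^ n / (Nat.factorial n : ℝ)) := by
    funext n; push_cast; exact shift1 l n
  rw [this, tsum_mul_left, tsum_pow_div_fact]

lemma shift2 (l : ℝ) (n : ℕ) :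
    (((n : ℝ) + 2) * (((n : ℝ) + 2) - 1)) * (l ^ (n + 2) / (Nat.factorial (n + 2) : ℝ))
      = l ^ 2 * (l ^ n / (Nat.factorial n : ℝ)) := by
  have h : (Nat.factorial (n + 2) : ℝ)
      = ((n : ℝ) + 2) * (((n : ℝ) + 1) * (Nat.factorial n : ℝ)) := by
    push_cast [Nat.factorial_succ]; ring
  have hf : (Nat.factorial n : ℝ) ≠ 0 := Nat.cast_ne_zero.2 (Nat.factorial_ne_zero n)
  have h1 : ((n : ℝ) + 1) ≠ 0 := by positivity
  have h2 : ((n : ℝ) + 2) ≠ 0 := by positivity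
  rw [h]
  field_simp
  ring

lemma summable_s2 (l : ℝ) :
    Summable (fun n : ℕ => (n : ℝ) * ((n : ℝ) - 1) * (l ^ n / (Nat.factorial n : ℝ))) := by
  rw [← summable_nat_add_iff 2]
  have : (fun n : ℕ => ((n + 2 : ℕ) : ℝ) * (((n + 2 : ℕ) : ℝ) - 1)
        * (l ^ (n + 2) / (Nat.factorial (n + 2) : ℝ)))
      = fun n : ℕ => l ^ 2 * (l ^ n / (Nat.factorial n : ℝ)) := by
    funext n; push_cast; exact shift2 l n
  rw [this]
  exact (Real.summable_pow_div_factorial l).mul_left _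

lemma tsum_s2 (l : ℝ) :
    ∑' n : ℕ, (n : ℝ) * ((n : ℝ) - 1) * (l ^ n / (Nat.factorial n : ℝ))
      = l ^ 2 * Real.exp l := by
  rw [Summable.tsum_eq_zero_add (summable_s2 l)]
  rw [Summable.tsum_eq_zero_add ((summable_nat_add_iff 1).2 (summable_s2 l))]
  simp only [Nat.cast_zero, Nat.cast_one, zero_mul, zero_add, Nat.cast_ofNat]
  norm_num
  rw [tsum_congr (fun b : ℕ => show ((b : ℝ) + 1 + 1) * ((b : ℝ) + 1)
      * (l ^ (b + 1 + 1) / (Nat.factorial (b + 1 + 1) : ℝ))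
      = l ^ 2 * (l ^ b / (Nat.factorial b : ℝ)) by
    rw [show ((b : ℝ) + 1 + 1) = (b : ℝ) + 2 by ring,
      show ((b : ℝ) + 1) = ((b : ℝ) + 2) - 1 by ring]
    exact shift2 l b)]
  rw [tsum_mul_left, tsum_pow_div_fact]

lemma summable_s0 (l : ℝ) :
    Summable (fun n : ℕ => if n = 0 then (0 : ℝ) else l ^ n / (Nat.factorial n : ℝ)) := by
  rw [← summable_nat_add_iff 1]
  simp only [Nat.add_eq_zero, one_ne_zero, and_false, if_false]
  exact (summable_nat_add_iff 1).2 (Real.summable_pow_div_factorial l)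

lemma tsum_s0 (l : ℝ) :
    ∑' n : ℕ, (if n = 0 then (0 : ℝ) else l ^ n / (Nat.factorial n : ℝ))
      = Real.exp l - 1 := by
  rw [Summable.tsum_eq_zero_add (summable_s0 l)]
  simp only [Nat.add_eq_zero, one_ne_zero, and_false, if_false, reduceIte, zero_add]
  have h := Summable.tsum_eq_zero_add (Real.summable_pow_div_factorial l)
  rw [tsum_pow_div_fact] at h
  simp only [pow_zero, Nat.factorial_zero, Nat.cast_one, div_one] at h
  linarith

lemma deriv_log_truncPoisson (l : ℝ) (hl : 0 < l) (x : ℕ) (hx : x ≠ 0) :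
    deriv (fun t => Real.log (truncPoisson t x)) l
      = (x : ℝ) / l - 1 / (1 - Real.exp (-l)) := by
  have hev : (fun t => Real.log (truncPoisson t x)) =ᶠ[nhds l]
      fun t => -t + (x : ℝ) * Real.log t - Real.log (Nat.factorial x : ℝ)
        - Real.log (1 - Real.exp (-t)) := by
    filter_upwards [Ioi_mem_nhds hl] with t ht
    have ht0 : (0 : ℝ) < t := ht
    have he : (0 : ℝ) < 1 - Real.exp (-t) := by
      have : Real.exp (-t) < 1 := Real.exp_lt_one_iff.2 (by linarith)
      linarith
    have hf : (Nat.factorial x : ℝ) ≠ 0 := Nat.cast_ne_zero.2 (Nat.factorial_ne_zero x)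
    have hnum : Real.exp (-t) * t ^ x ≠ 0 := by positivity
    have hden : (Nat.factorial x : ℝ) * (1 - Real.exp (-t)) ≠ 0 :=
      mul_ne_zero hf he.ne'
    simp only [truncPoisson, if_neg hx]
    rw [Real.log_div hnum hden, Real.log_mul (Real.exp_ne_zero _) (by positivity),
      Real.log_mul hf he.ne', Real.log_exp, Real.log_pow]
    ring
  rw [hev.deriv_eq]
  have he : (0 : ℝ) < 1 - Real.exp (-l) := by
    have : Real.exp (-l) < 1 := Real.exp_lt_one_iff.2 (by linarith)
    linarith
  have h1 : HasDerivAt (fun t : ℝ => -t) (-1) l := (hasDerivAt_id l).neg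
  have h2 : HasDerivAt (fun t : ℝ => (x : ℝ) * Real.log t) ((x : ℝ) * l⁻¹) l :=
    (Real.hasDerivAt_log hl.ne').const_mul _
  have h4 : HasDerivAt (fun t : ℝ => 1 - Real.exp (-t)) (Real.exp (-l)) l := by
    have := ((Real.hasDerivAt_exp (-l)).comp l h1).const_sub 1
    rw [show Real.exp (-l) = -(Real.exp (-l) * -1) by ring]
    exact this
  have h5 : HasDerivAt (fun t : ℝ => Real.log (1 - Real.exp (-t)))
      ((1 - Real.exp (-l))⁻¹ * Real.exp (-l)) l :=
    by have := (Real.hasDerivAt_log he.ne').comp l h4; exact this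
  have hd := ((h1.add h2).sub (hasDerivAt_const l (Real.log (Nat.factorial x : ℝ)))).sub h5
  have hd' : HasDerivAt (fun t => -t + (x : ℝ) * Real.log t - Real.log (Nat.factorial x : ℝ)
    - Real.log (1 - Real.exp (-t))) _ l := hd
  rw [hd'.deriv]
  field_simp
  ring

lemma fisher_alg (l e : ℝ) (hl : l ≠ 0) (hme : (1:ℝ) - e ≠ 0) (he : e ≠ 0) :
    e * (1 - e)⁻¹ / l ^ 2 * (l ^ 2 * e⁻¹)
      + e * (1 - e)⁻¹ * (1 / l ^ 2 - 2 * (1 - e)⁻¹ / l) * (l * e⁻¹)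
      + e * (1 - e)⁻¹ * ((1 - e)⁻¹) ^ 2 * (e⁻¹ - 1)
      = (1 - (l + 1) * e) / (l * (1 - e) ^ 2) := by
  field_simp
  ring

/-- The Fisher information of the zero-truncated Poisson model equals
`(1 − (λ+1)e^{−λ}) / (λ(1 − e^{−λ})²) = k(λ)²/λ`; consequently the Jeffreys prior
for `λ` under this model is `k(λ)/√λ` with `k(λ) = (1−(λ+1)e^{−λ})^{1/2}/(1−e^{−λ})`. -/
theorem truncPoisson_fisher_info (l : ℝ) (hl : 0 < l) :
    (∑' x : ℕ, truncPoisson l x * (deriv (fun t => Real.log (truncPoisson t x)) l) ^ 2 =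
      (1 - (l + 1) * Real.exp (-l)) / (l * (1 - Real.exp (-l)) ^ 2)) ∧
    Real.sqrt ((1 - (l + 1) * Real.exp (-l)) / (l * (1 - Real.exp (-l)) ^ 2)) =
      (Real.sqrt (1 - (l + 1) * Real.exp (-l)) / (1 - Real.exp (-l))) / Real.sqrt l := by
  set e := Real.exp (-l) with hedef
  have he0 : 0 < e := Real.exp_pos _
  have he1 : e < 1 := Real.exp_lt_one_iff.2 (by linarith)
  have hem : (0 : ℝ) < 1 - e := by linarith
  constructor
  · set A := e * (1 - e)⁻¹ / l ^ 2 with hA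
    set B := e * (1 - e)⁻¹ * (1 / l ^ 2 - 2 * (1 - e)⁻¹ / l) with hB
    set C := e * (1 - e)⁻¹ * ((1 - e)⁻¹) ^ 2 with hC
    have hterm : ∀ x : ℕ,
        truncPoisson l x * (deriv (fun t => Real.log (truncPoisson t x)) l) ^ 2
          = A * ((x : ℝ) * ((x : ℝ) - 1) * (l ^ x / (Nat.factorial x : ℝ)))
            + B * ((x : ℝ) * (l ^ x / (Nat.factorial x : ℝ)))
            + C * (if x = 0 then (0 : ℝ) else l ^ x / (Nat.factorial x : ℝ)) := by
      intro x
      rcases eq_or_ne x 0 with rfl | hx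
      · simp [truncPoisson]
      · rw [deriv_log_truncPoisson l hl x hx]
        simp only [truncPoisson, if_neg hx, hA, hB, hC]
        rw [← hedef]
        have hf : (Nat.factorial x : ℝ) ≠ 0 := Nat.cast_ne_zero.2 (Nat.factorial_ne_zero x)
        field_simp
        ring
    rw [tsum_congr hterm]
    rw [Summable.tsum_add (((summable_s2 l).mul_left A).add ((summable_s1 l).mul_left B))
      ((summable_s0 l).mul_left C),
      Summable.tsum_add ((summable_s2 l).mul_left A) ((summable_s1 l).mul_left B),
      tsum_mul_left, tsum_mul_left, tsum_mul_left, tsum_s2, tsum_s1, tsum_s0]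
    have hE : Real.exp l = e⁻¹ := by rw [hedef, Real.exp_neg, inv_inv]
    rw [hE]
    exact fisher_alg l e hl.ne' hem.ne' he0.ne'
  · have hA0 : 0 ≤ 1 - (l + 1) * e := by
      have h1 : l + 1 ≤ Real.exp l := Real.add_one_le_exp l
      have h2 : (l + 1) * e ≤ Real.exp l * e := by
        apply mul_le_mul_of_nonneg_right h1 he0.le
      have h3 : Real.exp l * e = 1 := by
        rw [hedef, ← Real.exp_add]; simp
      linarith
    rw [Real.sqrt_div hA0, Real.sqrt_mul hl.le, Real.sqrt_sq hem.le,
      mul_comm (Real.sqrt l) (1 - e), ← div_div]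
end

section
/- Let n ≥ 1, let k be an integer with 0 ≤ k ≤ n−1, and let s ≥ 0 be an integer. Then ∫₀^∞ ∫₀^1 (p + (1−p)e^{−λ})^k (1−p)^{n−k} e^{−(n−k)λ} λ^{s−1/2} dp dλ = (k!/(n+1)!) · Γ(s + 1/2) · Σ_{j=0}^{k} ((n−j)!/(k−j)!) · (n−j)^{−(s+1/2)}; in particular this integral is finite. -/
open MeasureTheory Real Set

lemma prod_fac (a b : ℕ) :
    (∏ j ∈ Finset.range (b + 1), (a + 1 + j)) * a.factorial = (a + b + 1).factorial := by
  induction b with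
  | zero => simp [Nat.factorial_succ]
  | succ b ih =>
      rw [Finset.prod_range_succ, mul_right_comm, ih,
        show a + (b + 1) + 1 = (a + b + 1) + 1 by ring, Nat.factorial_succ, mul_comm]
      congr 1
      omega

lemma beta_nat (a b : ℕ) :
    ∫ x in (0:ℝ)..1, x ^ a * (1 - x) ^ b
      = (a.factorial * b.factorial : ℝ) / (a + b + 1).factorial := by
  have hu : 0 < ((a : ℂ) + 1).re := by
    simp only [Complex.add_re, Complex.natCast_re, Complex.one_re]
    positivity
  have h := Complex.betaIntegral_eval_nat_add_one_right hu b
  have h1 : Complex.betaIntegral ((a : ℂ) + 1) ((b : ℂ) + 1)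
      = ((∫ x in (0:ℝ)..1, x ^ a * (1 - x) ^ b : ℝ) : ℂ) := by
    rw [Complex.betaIntegral, ← intervalIntegral.integral_ofReal]
    refine intervalIntegral.integral_congr fun x _ => ?_
    push_cast
    rw [add_sub_cancel_right, add_sub_cancel_right, Complex.cpow_natCast,
      Complex.cpow_natCast]
  have h2 : (∏ j ∈ Finset.range (b + 1), ((a : ℂ) + 1 + j))
      = ((∏ j ∈ Finset.range (b + 1), (a + 1 + j) : ℕ) : ℂ) := by
    push_cast; rfl
  rw [h1, h2] at h
  have hQ : ((∏ j ∈ Finset.range (b + 1), (a + 1 + j) : ℕ) : ℂ) ≠ 0 := by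
    norm_cast
    exact Finset.prod_ne_zero_iff.2 fun j _ => by omega
  rw [eq_div_iff hQ] at h
  have h3 : (∫ x in (0:ℝ)..1, x ^ a * (1 - x) ^ b)
      * ((∏ j ∈ Finset.range (b + 1), (a + 1 + j) : ℕ) : ℝ) = (b.factorial : ℝ) := by
    have := h
    rw [show ((b.factorial : ℕ) : ℂ) = ((b.factorial : ℝ) : ℂ) by push_cast; rfl] at this
    exact_mod_cast this
  have hfac : ((∏ j ∈ Finset.range (b + 1), (a + 1 + j) : ℕ) : ℝ) * (a.factorial : ℝ)
      = ((a + b + 1).factorial : ℝ) := by exact_mod_cast congrArg Nat.cast (prod_fac a b)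
  have hane : (a.factorial : ℝ) ≠ 0 := Nat.cast_ne_zero.2 a.factorial_ne_zero
  have hfne : ((a + b + 1).factorial : ℝ) ≠ 0 := Nat.cast_ne_zero.2 (a + b + 1).factorial_ne_zero
  rw [eq_div_iff hfne]
  linear_combination (a.factorial : ℝ) * h3 - (∫ x in (0:ℝ)..1, x ^ a * (1 - x) ^ b) * hfac

lemma gamma_integrable {a r : ℝ} (ha : 0 < a) (hr : 0 < r) :
    IntegrableOn (fun x : ℝ => x ^ (a - 1) * exp (-(r * x))) (Ioi 0) := by
  have h0 := Real.GammaIntegral_convergent ha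
  have h1 : IntegrableOn (fun x : ℝ => exp (-(r * x)) * (r * x) ^ (a - 1)) (Ioi 0) := by
    exact (integrableOn_Ioi_comp_mul_left_iff
      (fun x : ℝ => exp (-x) * x ^ (a - 1)) 0 hr).2 (by simpa using h0)
  have h2 : IntegrableOn
      (fun x : ℝ => (r ^ (a - 1))⁻¹ * (exp (-(r * x)) * (r * x) ^ (a - 1))) (Ioi 0) :=
    h1.const_mul _
  refine h2.congr_fun (fun x hx => ?_) measurableSet_Ioi
  beta_reduce
  rw [Real.mul_rpow hr.le (le_of_lt hx)]
  have : r ^ (a - 1) ≠ 0 := (Real.rpow_pos_of_pos hr _).ne'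
  field_simp

/-- Marginal density computation for the ZIP model under the prior
`π₁(p,λ) = λ^{−1/2}·1{0 < p ≤ 1}`:
`∫₀^∞ ∫₀^1 (p + (1−p)e^{−λ})^k (1−p)^{n−k} e^{−(n−k)λ} λ^{s−1/2} dp dλ
 = (k!/(n+1)!) Γ(s+1/2) Σ_{j=0}^k ((n−j)!/(k−j)!) (n−j)^{−(s+1/2)}`,
in particular the integral is finite. -/
theorem zip_marginal_eq (n k s : ℕ) (hn : 1 ≤ n) (hk : k ≤ n - 1) :
    (∫⁻ l in Set.Ioi (0 : ℝ), ∫⁻ p in Set.Ioc (0 : ℝ) 1,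
        ENNReal.ofReal ((p + (1 - p) * Real.exp (-l)) ^ k * (1 - p) ^ (n - k) *
          Real.exp (-((n : ℝ) - (k : ℝ)) * l) * l ^ ((s : ℝ) - 1 / 2))) =
      ENNReal.ofReal (((Nat.factorial k : ℝ) / (Nat.factorial (n + 1) : ℝ)) *
        Real.Gamma ((s : ℝ) + 1 / 2) *
        ∑ j ∈ Finset.range (k + 1),
          ((Nat.factorial (n - j) : ℝ) / (Nat.factorial (k - j) : ℝ)) *
            ((n : ℝ) - (j : ℝ)) ^ (-((s : ℝ) + 1 / 2))) := by
  have hkn : k ≤ n := hk.trans (Nat.sub_le n 1)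
  have hknlt : k < n := by omega
  have hs2 : (0:ℝ) < (s:ℝ) + 1/2 := by positivity
  set c : ℕ → ℝ := fun j => (k.choose j : ℝ) *
    ((j.factorial : ℝ) * ((n - j).factorial : ℝ) / ((n+1).factorial : ℝ)) with hc
  have hcnn : ∀ j, 0 ≤ c j := fun j => by rw [hc]; positivity
  set g : ℝ → ℝ := fun l => ∑ j ∈ Finset.range (k+1),
    c j * (l ^ (((s:ℝ) + 1/2) - 1) * exp (-(((n - j : ℕ) : ℝ) * l))) with hg
  -- Step A : inner integral
  have stepA : ∀ l ∈ Ioi (0:ℝ),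
      (∫⁻ p in Set.Ioc (0:ℝ) 1,
        ENNReal.ofReal ((p + (1 - p) * Real.exp (-l)) ^ k * (1 - p) ^ (n - k) *
          Real.exp (-((n : ℝ) - (k : ℝ)) * l) * l ^ ((s : ℝ) - 1 / 2)))
        = ENNReal.ofReal (g l) := by
    intro l hl
    have hl0 : (0:ℝ) < l := hl
    have hcont : Continuous (fun p : ℝ => (p + (1 - p) * Real.exp (-l)) ^ k * (1 - p) ^ (n - k) *
        Real.exp (-((n : ℝ) - (k : ℝ)) * l) * l ^ ((s : ℝ) - 1 / 2)) := by fun_prop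
    have hint : IntegrableOn (fun p : ℝ => (p + (1 - p) * Real.exp (-l)) ^ k * (1 - p) ^ (n - k) *
        Real.exp (-((n : ℝ) - (k : ℝ)) * l) * l ^ ((s : ℝ) - 1 / 2)) (Ioc (0:ℝ) 1) :=
      hcont.integrableOn_Ioc
    have hnn : 0 ≤ᵐ[volume.restrict (Ioc (0:ℝ) 1)]
        (fun p : ℝ => (p + (1 - p) * Real.exp (-l)) ^ k * (1 - p) ^ (n - k) *
          Real.exp (-((n : ℝ) - (k : ℝ)) * l) * l ^ ((s : ℝ) - 1 / 2)) := by
      filter_upwards [ae_restrict_mem measurableSet_Ioc] with p hp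
      have h1p : (0:ℝ) ≤ 1 - p := by linarith [hp.2]
      have hbase : (0:ℝ) ≤ p + (1 - p) * Real.exp (-l) :=
        add_nonneg hp.1.le (mul_nonneg h1p (exp_nonneg _))
      exact mul_nonneg (mul_nonneg (mul_nonneg (pow_nonneg hbase _) (pow_nonneg h1p _))
        (exp_nonneg _)) (Real.rpow_nonneg hl0.le _)
    rw [← MeasureTheory.ofReal_integral_eq_lintegral_ofReal hint hnn]
    congr 1
    rw [← intervalIntegral.integral_of_le (zero_le_one)]
    have expand : ∀ p : ℝ, (p + (1 - p) * Real.exp (-l)) ^ k * (1 - p) ^ (n - k) *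
          Real.exp (-((n : ℝ) - (k : ℝ)) * l) * l ^ ((s : ℝ) - 1 / 2)
        = ∑ j ∈ Finset.range (k+1),
          ((k.choose j : ℝ) * Real.exp (-l) ^ (k - j) *
            (Real.exp (-((n : ℝ) - (k : ℝ)) * l) * l ^ ((s : ℝ) - 1 / 2))) *
          (p ^ j * (1 - p) ^ (k - j + (n - k))) := by
      intro p
      rw [add_pow, Finset.sum_mul, Finset.sum_mul, Finset.sum_mul]
      refine Finset.sum_congr rfl fun j hj => ?_
      rw [pow_add, mul_pow]
      ring
    rw [intervalIntegral.integral_congr (g := fun p => ∑ j ∈ Finset.range (k+1),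
        ((k.choose j : ℝ) * Real.exp (-l) ^ (k - j) *
          (Real.exp (-((n : ℝ) - (k : ℝ)) * l) * l ^ ((s : ℝ) - 1 / 2))) *
        (p ^ j * (1 - p) ^ (k - j + (n - k)))) (fun p _ => expand p)]
    rw [intervalIntegral.integral_finset_sum (f := fun j (p : ℝ) =>
        ((k.choose j : ℝ) * Real.exp (-l) ^ (k - j) *
          (Real.exp (-((n : ℝ) - (k : ℝ)) * l) * l ^ ((s : ℝ) - 1 / 2))) *
        (p ^ j * (1 - p) ^ (k - j + (n - k))))
      (fun j _ => (Continuous.intervalIntegrable (by fun_prop) 0 1))]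
    simp_rw [intervalIntegral.integral_const_mul]
    rw [hg]
    refine Finset.sum_congr rfl fun j hj => ?_
    have hjk : j ≤ k := by
      simpa [Nat.lt_succ_iff] using Finset.mem_range.1 hj
    have hjn : j ≤ n := hjk.trans hkn
    have e1 : k - j + (n - k) = n - j := by omega
    have e2 : j + (n - j) + 1 = n + 1 := by omega
    rw [e1, beta_nat, e2]
    have hexp : Real.exp (-l) ^ (k - j) * Real.exp (-((n:ℝ) - (k:ℝ)) * l)
        = Real.exp (-(((n - j : ℕ) : ℝ) * l)) := by
      rw [← Real.exp_nat_mul, ← Real.exp_add]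
      congr 1
      rw [Nat.cast_sub hjk, Nat.cast_sub hjn]
      ring
    rw [hc]
    simp only
    rw [← hexp]
    have : ((s:ℝ) - 1/2) = ((s:ℝ) + 1/2) - 1 := by ring
    rw [this]
    ring
  rw [setLIntegral_congr_fun measurableSet_Ioi stepA]
  -- Step B : outer integral
  have hrj : ∀ j ∈ Finset.range (k+1), (0:ℝ) < ((n - j : ℕ) : ℝ) := by
    intro j hj
    have hjk : j ≤ k := by simpa [Nat.lt_succ_iff] using Finset.mem_range.1 hj
    have : 0 < n - j := by omega
    exact_mod_cast this
  have hint_j : ∀ j ∈ Finset.range (k+1), IntegrableOn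
      (fun l : ℝ => c j * (l ^ (((s:ℝ) + 1/2) - 1) * exp (-(((n - j : ℕ) : ℝ) * l)))) (Ioi 0) :=
    fun j hj => (gamma_integrable hs2 (hrj j hj)).const_mul _
  have hgint : IntegrableOn g (Ioi (0:ℝ)) := by
    rw [hg]; exact integrable_finset_sum _ hint_j
  have hgnn : 0 ≤ᵐ[volume.restrict (Ioi (0:ℝ))] g := by
    filter_upwards [ae_restrict_mem measurableSet_Ioi] with l hl
    rw [hg]
    exact Finset.sum_nonneg fun j _ => mul_nonneg (hcnn j)
      (mul_nonneg (Real.rpow_nonneg (le_of_lt hl) _) (exp_nonneg _))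
  rw [← MeasureTheory.ofReal_integral_eq_lintegral_ofReal hgint hgnn]
  congr 1
  rw [hg]
  rw [integral_finset_sum _ hint_j]
  simp_rw [MeasureTheory.integral_const_mul]
  rw [Finset.mul_sum]
  refine Finset.sum_congr rfl fun j hj => ?_
  have hjk : j ≤ k := by simpa [Nat.lt_succ_iff] using Finset.mem_range.1 hj
  have hjn : j ≤ n := hjk.trans hkn
  rw [integral_rpow_mul_exp_neg_mul_Ioi hs2 (hrj j hj)]
  have hcast : ((n:ℝ) - (j:ℝ)) = ((n - j : ℕ) : ℝ) := by
    rw [Nat.cast_sub hjn]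
  rw [hcast]
  have hpow : (((n - j : ℕ) : ℝ)) ^ (-((s:ℝ) + 1/2))
      = (1 / ((n - j : ℕ) : ℝ)) ^ ((s:ℝ) + 1/2) := by
    rw [Real.rpow_neg (by positivity),
      show (1 / (((n - j : ℕ)) : ℝ)) = (((n - j : ℕ) : ℝ))⁻¹ from one_div _,
      Real.inv_rpow (by positivity)]
  have hchoose : (k.choose j : ℝ) * (j.factorial : ℝ) * ((k - j).factorial : ℝ)
      = (k.factorial : ℝ) := by exact_mod_cast Nat.choose_mul_factorial_mul_factorial hjk
  have hne1 : ((n + 1).factorial : ℝ) ≠ 0 := Nat.cast_ne_zero.2 (n + 1).factorial_ne_zero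
  have hne2 : ((k - j).factorial : ℝ) ≠ 0 := Nat.cast_ne_zero.2 (k - j).factorial_ne_zero
  have hcj : c j = (k.factorial : ℝ) / ((n + 1).factorial : ℝ)
      * (((n - j).factorial : ℝ) / ((k - j).factorial : ℝ)) := by
    rw [hc]
    simp only
    field_simp
    linear_combination hchoose
  rw [hpow, hcj]
  ring
end

section
/- Fix an integer n ≥ 2 and a real s ≥ 0. For integers k with 0 ≤ k ≤ n−2, define B(k) = (k!/(n+1)!) · Σ_{j=0}^{k} ((n−j)!/(k−j)!) · (1 − j/n)^{−(s+1/2)}. Then B(k) < B(k+1) for all 0 ≤ k ≤ n−2; that is, the Bayes factor is strictly increasing in the number of zero counts k for fixed n and s. -/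
open Real Set

/-- The objective Bayes factor
`B(k) = (k!/(n+1)!) Σ_{j=0}^k ((n−j)!/(k−j)!) (1 − j/n)^{−(s+1/2)}`
is strictly increasing in the number of zero counts `k`, for fixed `n ≥ 2` and
fixed total count `s ≥ 0`. -/
theorem bayes_factor_strictMono_in_k (n : ℕ) (hn : 2 ≤ n) (s : ℝ) (hs : 0 ≤ s)
    (k : ℕ) (hk : k ≤ n - 2) :
    ((Nat.factorial k : ℝ) / (Nat.factorial (n + 1) : ℝ)) *
        ∑ j ∈ Finset.range (k + 1),
          ((Nat.factorial (n - j) : ℝ) / (Nat.factorial (k - j) : ℝ)) *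
            (1 - (j : ℝ) / (n : ℝ)) ^ (-(s + 1 / 2)) <
      ((Nat.factorial (k + 1) : ℝ) / (Nat.factorial (n + 1) : ℝ)) *
        ∑ j ∈ Finset.range (k + 2),
          ((Nat.factorial (n - j) : ℝ) / (Nat.factorial (k + 1 - j) : ℝ)) *
            (1 - (j : ℝ) / (n : ℝ)) ^ (-(s + 1 / 2)) := by
  have hnpos : (0 : ℝ) < n := by
    have : 0 < n := by omega
    exact_mod_cast this
  have hc : ∀ j : ℕ, j < n → (0 : ℝ) < (1 - (j : ℝ) / (n : ℝ)) ^ (-(s + 1 / 2)) := by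
    intro j hj
    apply Real.rpow_pos_of_pos
    have hjn : (j : ℝ) < n := by exact_mod_cast hj
    have : (j : ℝ) / n < 1 := (div_lt_one hnpos).mpr hjn
    linarith
  have hkn : k + 1 < n := by omega
  rw [Finset.mul_sum, Finset.mul_sum]
  conv_rhs => rw [Finset.sum_range_succ]
  have hmain : ∑ j ∈ Finset.range (k + 1),
      (Nat.factorial k : ℝ) / (Nat.factorial (n + 1) : ℝ) *
        (((Nat.factorial (n - j) : ℝ) / (Nat.factorial (k - j) : ℝ)) *
          (1 - (j : ℝ) / (n : ℝ)) ^ (-(s + 1 / 2))) ≤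
      ∑ j ∈ Finset.range (k + 1),
      (Nat.factorial (k + 1) : ℝ) / (Nat.factorial (n + 1) : ℝ) *
        (((Nat.factorial (n - j) : ℝ) / (Nat.factorial (k + 1 - j) : ℝ)) *
          (1 - (j : ℝ) / (n : ℝ)) ^ (-(s + 1 / 2))) := by
    apply Finset.sum_le_sum
    intro j hj
    have hjk : j ≤ k := by
      have := Finset.mem_range.mp hj; omega
    have key : (Nat.factorial k : ℝ) / (Nat.factorial (k - j) : ℝ) ≤
        (Nat.factorial (k + 1) : ℝ) / (Nat.factorial (k + 1 - j) : ℝ) := by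
      rw [div_le_div_iff₀ (by exact_mod_cast (Nat.factorial_pos _))
        (by exact_mod_cast (Nat.factorial_pos _))]
      have hnat : Nat.factorial k * Nat.factorial (k + 1 - j) ≤
          Nat.factorial (k + 1) * Nat.factorial (k - j) := by
        have h1 : k + 1 - j = (k - j) + 1 := by omega
        rw [h1, Nat.factorial_succ, Nat.factorial_succ k]
        calc Nat.factorial k * ((k - j + 1) * Nat.factorial (k - j))
            = (k - j + 1) * (Nat.factorial k * Nat.factorial (k - j)) := by ring
          _ ≤ (k + 1) * (Nat.factorial k * Nat.factorial (k - j)) :=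
              Nat.mul_le_mul_right _ (by omega)
          _ = (k + 1) * Nat.factorial k * Nat.factorial (k - j) := by ring
      exact_mod_cast hnat
    have hcn : (0 : ℝ) ≤ (Nat.factorial (n - j) : ℝ) / (Nat.factorial (n + 1) : ℝ) *
        (1 - (j : ℝ) / (n : ℝ)) ^ (-(s + 1 / 2)) := by
      have := hc j (by omega)
      positivity
    have := mul_le_mul_of_nonneg_right key hcn
    calc (Nat.factorial k : ℝ) / (Nat.factorial (n + 1) : ℝ) *
          (((Nat.factorial (n - j) : ℝ) / (Nat.factorial (k - j) : ℝ)) *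
            (1 - (j : ℝ) / (n : ℝ)) ^ (-(s + 1 / 2)))
        = (Nat.factorial k : ℝ) / (Nat.factorial (k - j) : ℝ) *
          ((Nat.factorial (n - j) : ℝ) / (Nat.factorial (n + 1) : ℝ) *
            (1 - (j : ℝ) / (n : ℝ)) ^ (-(s + 1 / 2))) := by ring
      _ ≤ (Nat.factorial (k + 1) : ℝ) / (Nat.factorial (k + 1 - j) : ℝ) *
          ((Nat.factorial (n - j) : ℝ) / (Nat.factorial (n + 1) : ℝ) *
            (1 - (j : ℝ) / (n : ℝ)) ^ (-(s + 1 / 2))) := this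
      _ = (Nat.factorial (k + 1) : ℝ) / (Nat.factorial (n + 1) : ℝ) *
          (((Nat.factorial (n - j) : ℝ) / (Nat.factorial (k + 1 - j) : ℝ)) *
            (1 - (j : ℝ) / (n : ℝ)) ^ (-(s + 1 / 2))) := by ring
  have hextra : (0 : ℝ) < (Nat.factorial (k + 1) : ℝ) / (Nat.factorial (n + 1) : ℝ) *
      (((Nat.factorial (n - (k + 1)) : ℝ) / (Nat.factorial (k + 1 - (k + 1)) : ℝ)) *
        (1 - ((k + 1 : ℕ) : ℝ) / (n : ℝ)) ^ (-(s + 1 / 2))) := by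
    have := hc (k + 1) hkn
    have h1 : (0 : ℝ) < Nat.factorial (k + 1) := by exact_mod_cast Nat.factorial_pos _
    have h2 : (0 : ℝ) < Nat.factorial (n + 1) := by exact_mod_cast Nat.factorial_pos _
    have h3 : (0 : ℝ) < Nat.factorial (n - (k + 1)) := by exact_mod_cast Nat.factorial_pos _
    have h4 : (0 : ℝ) < Nat.factorial (k + 1 - (k + 1)) := by exact_mod_cast Nat.factorial_pos _
    positivity
  linarith
end

section
/- Let n ≥ 1, let h be a probability density on (0,1) (h ≥ 0 measurable with ∫₀^1 h(p) dp = 1), and let π : (0,∞) → [0,∞) be measurable with ∫₀^∞ π(λ) dλ = ∞ (an improper prior). Then the marginal density of the all-zero sample under the ZIP model is infinite: ∫₀^∞ ∫₀^1 (p + (1−p)e^{−λ})^n h(p) π(λ) dp dλ = ∞. -/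
open MeasureTheory Real Set

/-- If `h` is a probability density on `(0,1)` and `π` is an improper prior on
`(0,∞)` (nonnegative, measurable, with infinite total mass), then the marginal
density of the all-zero sample of size `n` under the ZIP model is infinite:
`∫₀^∞ ∫₀^1 (p + (1−p)e^{−λ})^n h(p) π(λ) dp dλ = ∞`. -/
theorem zip_all_zero_marginal_infinite (n : ℕ) (hn : 1 ≤ n) (h pr : ℝ → ℝ)
    (hmeas : Measurable h) (hnonneg : ∀ p ∈ Set.Ioo (0 : ℝ) 1, 0 ≤ h p)
    (hprob : ∫⁻ p in Set.Ioo (0 : ℝ) 1, ENNReal.ofReal (h p) = 1)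
    (prmeas : Measurable pr) (prnonneg : ∀ l ∈ Set.Ioi (0 : ℝ), 0 ≤ pr l)
    (primproper : ∫⁻ l in Set.Ioi (0 : ℝ), ENNReal.ofReal (pr l) = ⊤) :
    ∫⁻ l in Set.Ioi (0 : ℝ), ∫⁻ p in Set.Ioo (0 : ℝ) 1,
        ENNReal.ofReal ((p + (1 - p) * Real.exp (-l)) ^ n * h p * pr l) = ⊤ := by
  set c := ∫⁻ p in Set.Ioo (0 : ℝ) 1, ENNReal.ofReal (p ^ n * h p) with hc
  have hmeas' : Measurable fun p : ℝ => ENNReal.ofReal (p ^ n * h p) :=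
    ((measurable_id.pow_const n).mul hmeas).ennreal_ofReal
  have hcle : c ≤ 1 := by
    rw [hc, ← hprob]
    refine lintegral_mono_ae ?_
    filter_upwards [ae_restrict_mem measurableSet_Ioo] with p hp
    exact ENNReal.ofReal_le_ofReal
      (mul_le_of_le_one_left (hnonneg p hp) (pow_le_one₀ hp.1.le hp.2.le))
  have hcpos : 0 < c := by
    by_contra hz
    push_neg at hz
    have hc0 : c = 0 := le_antisymm hz zero_le
    rw [hc, lintegral_eq_zero_iff hmeas'] at hc0
    have h0 : ∫⁻ p in Set.Ioo (0 : ℝ) 1, ENNReal.ofReal (h p) = 0 := by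
      rw [lintegral_eq_zero_iff hmeas.ennreal_ofReal]
      filter_upwards [hc0, ae_restrict_mem measurableSet_Ioo] with p h0 hp
      have hle : p ^ n * h p ≤ 0 := by
        simpa [ENNReal.ofReal_eq_zero] using h0
      have : h p ≤ 0 := by nlinarith [pow_pos hp.1 n]
      simp [ENNReal.ofReal_eq_zero, this]
    rw [h0] at hprob
    exact zero_ne_one hprob
  have key : ∀ l ∈ Set.Ioi (0 : ℝ),
      c * ENNReal.ofReal (pr l) ≤ ∫⁻ p in Set.Ioo (0 : ℝ) 1,
        ENNReal.ofReal ((p + (1 - p) * Real.exp (-l)) ^ n * h p * pr l) := by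
    intro l hl
    calc c * ENNReal.ofReal (pr l)
        = ∫⁻ p in Set.Ioo (0 : ℝ) 1,
            ENNReal.ofReal (p ^ n * h p) * ENNReal.ofReal (pr l) := by
          rw [lintegral_mul_const' _ _ ENNReal.ofReal_ne_top, hc]
      _ ≤ _ := by
          refine lintegral_mono_ae ?_
          filter_upwards [ae_restrict_mem measurableSet_Ioo] with p hp
          rw [← ENNReal.ofReal_mul (mul_nonneg (pow_nonneg hp.1.le n) (hnonneg p hp))]
          refine ENNReal.ofReal_le_ofReal ?_
          have hpe : p ≤ p + (1 - p) * Real.exp (-l) := by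
            nlinarith [Real.exp_pos (-l), hp.2]
          have hpow : p ^ n ≤ (p + (1 - p) * Real.exp (-l)) ^ n :=
            pow_le_pow_left₀ hp.1.le hpe n
          have := mul_le_mul_of_nonneg_right hpow (hnonneg p hp)
          exact mul_le_mul_of_nonneg_right this (prnonneg l hl)
  have hle : ∫⁻ l in Set.Ioi (0 : ℝ), c * ENNReal.ofReal (pr l) ≤
      ∫⁻ l in Set.Ioi (0 : ℝ), ∫⁻ p in Set.Ioo (0 : ℝ) 1,
        ENNReal.ofReal ((p + (1 - p) * Real.exp (-l)) ^ n * h p * pr l) := by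
    refine lintegral_mono_ae ?_
    filter_upwards [ae_restrict_mem measurableSet_Ioi] with l hl
    exact key l hl
  have hct : c ≠ ⊤ := (lt_of_le_of_lt hcle ENNReal.one_lt_top).ne
  rw [lintegral_const_mul' _ _ hct, primproper, ENNReal.mul_top hcpos.ne'] at hle
  exact top_le_iff.mp hle
end

section
/- (Theorem 4.1) Consider the Poisson log-linear regression model: for i = 1,…,n, λᵢ(β) = exp(a₀ᵢ + aᵢᵀβ) with β ∈ ℝ^q, covariate vectors aᵢ ∈ ℝ^q, offsets a₀ᵢ ∈ ℝ, and counts xᵢ ∈ ℕ. Assume the n×q matrix A with rows aᵢᵀ has rank q. Then the marginal density under the Jeffreys prior is finite: ∫_{ℝ^q} Π_{i=1}^n (e^{−λᵢ(β)} λᵢ(β)^{xᵢ}/xᵢ!) · det(Σ_{i=1}^n λᵢ(β) aᵢ aᵢᵀ)^{1/2} dβ < ∞. -/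
open MeasureTheory Real Set Filter

lemma sqrt_add_le' {a b : ℝ} (ha : 0 ≤ a) (hb : 0 ≤ b) :
    Real.sqrt (a + b) ≤ Real.sqrt a + Real.sqrt b := by
  have h1 := Real.sq_sqrt ha
  have h2 := Real.sq_sqrt hb
  have h3 := Real.sqrt_nonneg a
  have h4 := Real.sqrt_nonneg b
  have : a + b ≤ (Real.sqrt a + Real.sqrt b) ^ 2 := by nlinarith [mul_nonneg h3 h4]
  calc Real.sqrt (a + b) ≤ Real.sqrt ((Real.sqrt a + Real.sqrt b) ^ 2) := Real.sqrt_le_sqrt this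
    _ = Real.sqrt a + Real.sqrt b := Real.sqrt_sq (by positivity)

lemma sqrt_sum_le {ι : Type*} (s : Finset ι) (v : ι → ℝ) (hv : ∀ i ∈ s, 0 ≤ v i) :
    Real.sqrt (∑ i ∈ s, v i) ≤ ∑ i ∈ s, Real.sqrt (v i) := by
  classical
  induction s using Finset.cons_induction with
  | empty => simp
  | cons i s hi ih =>
    rw [Finset.sum_cons, Finset.sum_cons]
    have h1 : 0 ≤ v i := hv i (Finset.mem_cons_self i s)
    have h2 : ∀ j ∈ s, 0 ≤ v j := fun j hj => hv j (Finset.mem_cons_of_mem hj)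
    calc Real.sqrt (v i + ∑ j ∈ s, v j) ≤ Real.sqrt (v i) + Real.sqrt (∑ j ∈ s, v j) :=
          sqrt_add_le' h1 (Finset.sum_nonneg h2)
      _ ≤ _ := by gcongr; exact ih h2

lemma sqrt_prod {ι : Type*} (s : Finset ι) (v : ι → ℝ) (hv : ∀ i ∈ s, 0 ≤ v i) :
    Real.sqrt (∏ i ∈ s, v i) = ∏ i ∈ s, Real.sqrt (v i) := by
  classical
  induction s using Finset.cons_induction with
  | empty => simp
  | cons i s hi ih =>
    rw [Finset.prod_cons, Finset.prod_cons, Real.sqrt_mul (hv i (Finset.mem_cons_self i s)),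
      ih (fun j hj => hv j (Finset.mem_cons_of_mem hj))]

lemma det_expand {n q : ℕ} (w : Fin n → ℝ) (a : Fin n → Fin q → ℝ) :
    Matrix.det (Matrix.of fun r c : Fin q => ∑ i, w i * a i r * a i c)
      = ∑ f : Fin q → Fin n, (∏ r, w (f r) * a (f r) r) *
          Matrix.det (Matrix.of fun r c => a (f r) c) := by
  have hM : (Matrix.of fun r c : Fin q => ∑ i, w i * a i r * a i c)
      = fun r : Fin q => ∑ i, (w i * a i r) • a i := by
    ext r c
    simp [Finset.sum_apply, mul_assoc]
  have key : (Matrix.detRowAlternating (R := ℝ) (n := Fin q)).toMultilinearMap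
        (fun r : Fin q => ∑ i, (w i * a i r) • a i)
      = ∑ f : Fin q → Fin n, (∏ r, w (f r) * a (f r) r) *
          Matrix.det (Matrix.of fun r c => a (f r) c) := by
    rw [(Matrix.detRowAlternating (R := ℝ) (n := Fin q)).toMultilinearMap.map_sum
      (g := fun r i => (w i * a i r) • a i)]
    refine Finset.sum_congr rfl fun f _ => ?_
    rw [(Matrix.detRowAlternating (R := ℝ) (n := Fin q)).toMultilinearMap.map_smul_univ
      (fun r => w (f r) * a (f r) r) (fun r => a (f r))]
    rfl
  calc Matrix.det (Matrix.of fun r c : Fin q => ∑ i, w i * a i r * a i c)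
      = (Matrix.detRowAlternating (R := ℝ) (n := Fin q)).toMultilinearMap
        (fun r : Fin q => ∑ i, (w i * a i r) • a i) := by rw [← hM]; rfl
    _ = _ := key

lemma p_le_one (u : ℝ) (x : ℕ) :
    Real.exp (-Real.exp u) * Real.exp u ^ x / (x.factorial : ℝ) ≤ 1 := by
  have h := Real.pow_div_factorial_le_exp (x := Real.exp u) (Real.exp_pos u).le x
  have hfac : (0:ℝ) < x.factorial := by positivity
  rw [div_le_one hfac]
  calc Real.exp (-Real.exp u) * Real.exp u ^ x
      ≤ Real.exp (-Real.exp u) * (Real.exp (Real.exp u) * x.factorial) :=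
        mul_le_mul_of_nonneg_left ((div_le_iff₀ hfac).mp h) (Real.exp_pos _).le
    _ = x.factorial := by rw [← mul_assoc, ← Real.exp_add]; simp

lemma p_sqrt_le (u : ℝ) (x : ℕ) :
    Real.exp (-Real.exp u) * Real.exp u ^ x / (x.factorial : ℝ) * Real.sqrt (Real.exp u)
      ≤ 2 ^ x * Real.exp (u / 2 - Real.exp u / 2) := by
  have hfac : (0:ℝ) < x.factorial := by positivity
  have hsq : Real.sqrt (Real.exp u) = Real.exp (u / 2) := by
    rw [show u = u / 2 + u / 2 by ring, Real.exp_add, Real.sqrt_mul_self (Real.exp_pos _).le]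
    ring_nf
  have hpow : Real.exp u ^ x / (x.factorial : ℝ) ≤ 2 ^ x * Real.exp (Real.exp u / 2) := by
    have h := Real.pow_div_factorial_le_exp (x := Real.exp u / 2) (by positivity) x
    have he : (Real.exp u / 2) ^ x = Real.exp u ^ x / 2 ^ x := div_pow _ _ _
    rw [he] at h
    rw [div_le_iff₀ hfac] at h ⊢
    calc Real.exp u ^ x = 2 ^ x * (Real.exp u ^ x / 2 ^ x) := by field_simp
      _ ≤ 2 ^ x * (Real.exp (Real.exp u / 2) * x.factorial) := by
          apply mul_le_mul_of_nonneg_left _ (by positivity)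
          rw [← div_le_iff₀ hfac] at h ⊢
          exact h
      _ = 2 ^ x * Real.exp (Real.exp u / 2) * x.factorial := by ring
  rw [hsq]
  calc Real.exp (-Real.exp u) * Real.exp u ^ x / (x.factorial : ℝ) * Real.exp (u / 2)
      = (Real.exp u ^ x / (x.factorial : ℝ)) * (Real.exp (-Real.exp u) * Real.exp (u / 2)) := by
        ring
    _ ≤ (2 ^ x * Real.exp (Real.exp u / 2)) * (Real.exp (-Real.exp u) * Real.exp (u / 2)) := by
        apply mul_le_mul_of_nonneg_right hpow (by positivity)
    _ = 2 ^ x * Real.exp (u / 2 - Real.exp u / 2) := by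
        rw [← Real.exp_add, mul_assoc, ← Real.exp_add]; ring_nf

lemma pointwise_bound {n q : ℕ} (a : Fin n → Fin q → ℝ) (u : Fin n → ℝ) (x : Fin n → ℕ) :
    (∏ i, Real.exp (-Real.exp (u i)) * Real.exp (u i) ^ (x i) / ((x i).factorial : ℝ)) *
      Real.sqrt (Matrix.det (Matrix.of fun r c : Fin q => ∑ i, Real.exp (u i) * a i r * a i c))
    ≤ ∑ f : Fin q → Fin n,
        (Real.sqrt |(Matrix.of fun r c : Fin q => a (f r) c).det| *
          ∏ r, (Real.sqrt |a (f r) r| * 2 ^ (x (f r)))) *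
          ∏ r, Real.exp (u (f r) / 2 - Real.exp (u (f r)) / 2) := by
  classical
  have hP : 0 ≤ ∏ i, Real.exp (-Real.exp (u i)) * Real.exp (u i) ^ (x i) /
      ((x i).factorial : ℝ) := Finset.prod_nonneg fun i _ => by positivity
  have hD := det_expand (fun i => Real.exp (u i)) a
  have h1 : Real.sqrt (Matrix.det (Matrix.of fun r c : Fin q =>
        ∑ i, Real.exp (u i) * a i r * a i c))
      ≤ ∑ f : Fin q → Fin n, Real.sqrt |(∏ r, Real.exp (u (f r)) * a (f r) r) *
          (Matrix.of fun r c : Fin q => a (f r) c).det| := by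
    rw [hD]
    refine le_trans (Real.sqrt_le_sqrt (Finset.sum_le_sum fun f _ => le_abs_self _)) ?_
    exact sqrt_sum_le _ _ (fun f _ => abs_nonneg _)
  calc (∏ i, Real.exp (-Real.exp (u i)) * Real.exp (u i) ^ (x i) / ((x i).factorial : ℝ)) *
      Real.sqrt (Matrix.det (Matrix.of fun r c : Fin q => ∑ i, Real.exp (u i) * a i r * a i c))
      ≤ (∏ i, Real.exp (-Real.exp (u i)) * Real.exp (u i) ^ (x i) / ((x i).factorial : ℝ)) *
        ∑ f : Fin q → Fin n, Real.sqrt |(∏ r, Real.exp (u (f r)) * a (f r) r) *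
          (Matrix.of fun r c : Fin q => a (f r) c).det| := mul_le_mul_of_nonneg_left h1 hP
    _ = ∑ f : Fin q → Fin n,
        (∏ i, Real.exp (-Real.exp (u i)) * Real.exp (u i) ^ (x i) / ((x i).factorial : ℝ)) *
          Real.sqrt |(∏ r, Real.exp (u (f r)) * a (f r) r) *
            (Matrix.of fun r c : Fin q => a (f r) c).det| := Finset.mul_sum _ _ _
    _ ≤ _ := by
      refine Finset.sum_le_sum fun f _ => ?_
      by_cases hdet : (Matrix.of fun r c : Fin q => a (f r) c).det = 0
      · rw [hdet, mul_zero, abs_zero, Real.sqrt_zero, mul_zero]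
        positivity
      · have hinj : Function.Injective f := by
          intro r s hrs
          by_contra hne
          exact hdet (Matrix.det_zero_of_row_eq hne
            (funext fun c => by simp [Matrix.of_apply, hrs]))
        have habs : |(∏ r, Real.exp (u (f r)) * a (f r) r) *
              (Matrix.of fun r c : Fin q => a (f r) c).det|
            = (∏ r, Real.exp (u (f r)) * |a (f r) r|) *
              |(Matrix.of fun r c : Fin q => a (f r) c).det| := by
          rw [abs_mul, Finset.abs_prod]
          congr 1
          exact Finset.prod_congr rfl fun r _ => by
            rw [abs_mul, abs_of_pos (Real.exp_pos _)]
        have hsqrt : Real.sqrt |(∏ r, Real.exp (u (f r)) * a (f r) r) *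
              (Matrix.of fun r c : Fin q => a (f r) c).det|
            = (∏ r, Real.sqrt (Real.exp (u (f r))) * Real.sqrt |a (f r) r|) *
              Real.sqrt |(Matrix.of fun r c : Fin q => a (f r) c).det| := by
          rw [habs, Real.sqrt_mul (Finset.prod_nonneg fun r _ => by positivity),
            sqrt_prod _ _ (fun r _ => by positivity)]
          congr 1
          exact Finset.prod_congr rfl fun r _ => Real.sqrt_mul (Real.exp_pos _).le _
        have hA : (∏ i, Real.exp (-Real.exp (u i)) * Real.exp (u i) ^ (x i) /
              ((x i).factorial : ℝ))
            ≤ ∏ r, Real.exp (-Real.exp (u (f r))) * Real.exp (u (f r)) ^ (x (f r)) /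
              ((x (f r)).factorial : ℝ) := by
          have himg : Finset.image f Finset.univ ⊆ Finset.univ := Finset.subset_univ _
          have hsplit := Finset.prod_sdiff (f := fun i =>
            Real.exp (-Real.exp (u i)) * Real.exp (u i) ^ (x i) / ((x i).factorial : ℝ)) himg
          calc (∏ i, Real.exp (-Real.exp (u i)) * Real.exp (u i) ^ (x i) /
              ((x i).factorial : ℝ))
              = (∏ i ∈ Finset.univ \ Finset.image f Finset.univ,
                  Real.exp (-Real.exp (u i)) * Real.exp (u i) ^ (x i) / ((x i).factorial : ℝ)) *
                (∏ i ∈ Finset.image f Finset.univ,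
                  Real.exp (-Real.exp (u i)) * Real.exp (u i) ^ (x i) / ((x i).factorial : ℝ)) :=
                hsplit.symm
            _ ≤ 1 * (∏ i ∈ Finset.image f Finset.univ,
                  Real.exp (-Real.exp (u i)) * Real.exp (u i) ^ (x i) / ((x i).factorial : ℝ)) := by
                apply mul_le_mul_of_nonneg_right
                  (Finset.prod_le_one (fun i _ => by positivity)
                    (fun i _ => p_le_one (u i) (x i)))
                  (Finset.prod_nonneg fun i _ => by positivity)
            _ = ∏ r, Real.exp (-Real.exp (u (f r))) * Real.exp (u (f r)) ^ (x (f r)) /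
                  ((x (f r)).factorial : ℝ) := by
                rw [one_mul, Finset.prod_image (fun r _ s _ h => hinj h)]
        rw [hsqrt]
        calc (∏ i, Real.exp (-Real.exp (u i)) * Real.exp (u i) ^ (x i) / ((x i).factorial : ℝ)) *
            ((∏ r, Real.sqrt (Real.exp (u (f r))) * Real.sqrt |a (f r) r|) *
              Real.sqrt |(Matrix.of fun r c : Fin q => a (f r) c).det|)
            ≤ (∏ r, Real.exp (-Real.exp (u (f r))) * Real.exp (u (f r)) ^ (x (f r)) /
                ((x (f r)).factorial : ℝ)) *
              ((∏ r, Real.sqrt (Real.exp (u (f r))) * Real.sqrt |a (f r) r|) *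
                Real.sqrt |(Matrix.of fun r c : Fin q => a (f r) c).det|) := by
              apply mul_le_mul_of_nonneg_right hA
              positivity
          _ = (∏ r, Real.exp (-Real.exp (u (f r))) * Real.exp (u (f r)) ^ (x (f r)) /
                ((x (f r)).factorial : ℝ) *
                (Real.sqrt (Real.exp (u (f r))) * Real.sqrt |a (f r) r|)) *
              Real.sqrt |(Matrix.of fun r c : Fin q => a (f r) c).det| := by
              rw [← mul_assoc, ← Finset.prod_mul_distrib]
          _ ≤ (∏ r, 2 ^ (x (f r)) * Real.exp (u (f r) / 2 - Real.exp (u (f r)) / 2) *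
                Real.sqrt |a (f r) r|) *
              Real.sqrt |(Matrix.of fun r c : Fin q => a (f r) c).det| := by
              apply mul_le_mul_of_nonneg_right _ (Real.sqrt_nonneg _)
              apply Finset.prod_le_prod (fun r _ => by positivity) (fun r _ => ?_)
              calc Real.exp (-Real.exp (u (f r))) * Real.exp (u (f r)) ^ (x (f r)) /
                    ((x (f r)).factorial : ℝ) *
                    (Real.sqrt (Real.exp (u (f r))) * Real.sqrt |a (f r) r|)
                  = (Real.exp (-Real.exp (u (f r))) * Real.exp (u (f r)) ^ (x (f r)) /
                      ((x (f r)).factorial : ℝ) * Real.sqrt (Real.exp (u (f r)))) *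
                    Real.sqrt |a (f r) r| := by ring
                _ ≤ (2 ^ (x (f r)) * Real.exp (u (f r) / 2 - Real.exp (u (f r)) / 2)) *
                    Real.sqrt |a (f r) r| :=
                    mul_le_mul_of_nonneg_right (p_sqrt_le (u (f r)) (x (f r)))
                      (Real.sqrt_nonneg _)
          _ = (Real.sqrt |(Matrix.of fun r c : Fin q => a (f r) c).det| *
                ∏ r, (Real.sqrt |a (f r) r| * 2 ^ (x (f r)))) *
              ∏ r, Real.exp (u (f r) / 2 - Real.exp (u (f r)) / 2) := by
              rw [Finset.prod_mul_distrib, Finset.prod_mul_distrib, Finset.prod_mul_distrib]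
              ring

lemma g_cont : Continuous (fun t : ℝ => Real.exp (t / 2 - Real.exp t / 2)) := by fun_prop

lemma two_mul_le_exp {t : ℝ} (ht : 0 ≤ t) : 2 * t ≤ Real.exp t := by
  have h := Real.add_one_le_exp (t / 2)
  have h2 : (1 + t / 2) ^ 2 ≤ Real.exp t := by
    calc (1 + t / 2) ^ 2 ≤ Real.exp (t / 2) ^ 2 := by nlinarith
      _ = Real.exp t := by rw [sq, ← Real.exp_add]; ring_nf
  nlinarith [sq_nonneg (1 - t / 2)]

lemma integrable_g : Integrable (fun t : ℝ => Real.exp (t / 2 - Real.exp t / 2)) := by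
  have hIoi : IntegrableOn (fun t : ℝ => Real.exp (t / 2 - Real.exp t / 2)) (Ioi 0) := by
    apply integrable_of_isBigO_exp_neg (b := 1/2) (by norm_num) g_cont.continuousOn
    apply Asymptotics.IsBigO.of_bound 1
    filter_upwards [eventually_ge_atTop (0 : ℝ)] with t ht
    rw [one_mul, Real.norm_eq_abs, Real.norm_eq_abs, abs_of_nonneg (Real.exp_pos _).le,
      abs_of_nonneg (Real.exp_pos _).le]
    apply Real.exp_le_exp.2
    have := two_mul_le_exp ht
    linarith
  have hIic : IntegrableOn (fun t : ℝ => Real.exp (t / 2 - Real.exp t / 2)) (Iic 0) := by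
    have hneg : IntegrableOn (fun t : ℝ => Real.exp (-t / 2 - Real.exp (-t) / 2)) (Ioi (-1)) := by
      apply integrable_of_isBigO_exp_neg (b := 1/2) (by norm_num)
        (Continuous.continuousOn (by fun_prop))
      apply Asymptotics.IsBigO.of_bound 1
      filter_upwards with t
      rw [one_mul, Real.norm_eq_abs, Real.norm_eq_abs, abs_of_nonneg (Real.exp_pos _).le,
        abs_of_nonneg (Real.exp_pos _).le]
      apply Real.exp_le_exp.2
      have := (Real.exp_pos (-t)).le
      linarith
    have hm : MeasurableEmbedding fun t : ℝ => -t :=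
      (Homeomorph.neg ℝ).isClosedEmbedding.measurableEmbedding
    rw [← Measure.map_neg_eq_self (volume : Measure ℝ)]
    rw [hm.integrableOn_map_iff]
    simp only [Function.comp_def, neg_preimage, neg_Iic, neg_zero]
    apply (hneg.mono_set (by intro t ht; simp at ht ⊢; linarith)).congr_fun ?_ measurableSet_Ici
    intro t _
    simp [neg_div]
  have := hIic.union hIoi
  rwa [Iic_union_Ioi, integrableOn_univ] at this

lemma integrable_comp_mulVec {q : ℕ} {B : Matrix (Fin q) (Fin q) ℝ} (hB : B.det ≠ 0)
    {F : (Fin q → ℝ) → ℝ} (hFc : Continuous F) (hF : Integrable F) :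
    Integrable (fun β => F (B.mulVec β)) := by
  have hmap := Real.map_matrix_volume_pi_eq_smul_volume_pi hB
  have h1 : Integrable F (Measure.map (Matrix.toLin' B) volume) := by
    rw [hmap]; exact hF.smul_measure ENNReal.ofReal_ne_top
  have h2 := (integrable_map_measure hFc.aestronglyMeasurable
    (Matrix.toLin' B).continuous_of_finiteDimensional.measurable.aemeasurable).mp h1
  have : (F ∘ Matrix.toLin' B) = fun β => F (B.mulVec β) := by
    ext β; simp [Function.comp, Matrix.toLin'_apply]
  rwa [this] at h2

lemma integrable_G {n q : ℕ} (a : Fin n → Fin q → ℝ) (a0 : Fin n → ℝ) (x : Fin n → ℕ) :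
    Integrable (fun β : Fin q → ℝ => ∑ f : Fin q → Fin n,
      (Real.sqrt |(Matrix.of fun r c : Fin q => a (f r) c).det| *
        ∏ r, (Real.sqrt |a (f r) r| * 2 ^ (x (f r)))) *
        ∏ r, Real.exp ((a0 (f r) + ∑ c, a (f r) c * β c) / 2
          - Real.exp (a0 (f r) + ∑ c, a (f r) c * β c) / 2)) := by
  apply integrable_finset_sum
  intro f _
  by_cases hdet : (Matrix.of fun r c : Fin q => a (f r) c).det = 0
  · have hz : (fun β : Fin q → ℝ =>
        (Real.sqrt |(Matrix.of fun r c : Fin q => a (f r) c).det| *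
          ∏ r, (Real.sqrt |a (f r) r| * 2 ^ (x (f r)))) *
          ∏ r, Real.exp ((a0 (f r) + ∑ c, a (f r) c * β c) / 2
            - Real.exp (a0 (f r) + ∑ c, a (f r) c * β c) / 2)) = fun _ => (0:ℝ) := by
      funext β
      rw [hdet, abs_zero, Real.sqrt_zero, zero_mul, zero_mul]
    rw [hz]
    exact integrable_zero _ _ _
  · have hFint : Integrable (fun v : Fin q → ℝ =>
        ∏ r, Real.exp ((a0 (f r) + v r) / 2 - Real.exp (a0 (f r) + v r) / 2)) := by
      apply Integrable.fintype_prod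
        (f := fun r t => Real.exp ((a0 (f r) + t) / 2 - Real.exp (a0 (f r) + t) / 2))
      intro r
      exact integrable_g.comp_add_left (a0 (f r))
    have hFc : Continuous (fun v : Fin q → ℝ =>
        ∏ r, Real.exp ((a0 (f r) + v r) / 2 - Real.exp (a0 (f r) + v r) / 2)) := by
      fun_prop
    have h2 := (integrable_comp_mulVec hdet hFc hFint).const_mul
      (Real.sqrt |(Matrix.of fun r c : Fin q => a (f r) c).det| *
        ∏ r, (Real.sqrt |a (f r) r| * 2 ^ (x (f r))))
    have heq : (fun β : Fin q → ℝ =>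
        (Real.sqrt |(Matrix.of fun r c : Fin q => a (f r) c).det| *
          ∏ r, (Real.sqrt |a (f r) r| * 2 ^ (x (f r)))) *
          ∏ r, Real.exp ((a0 (f r) + ((Matrix.of fun r c : Fin q => a (f r) c).mulVec β) r) / 2
            - Real.exp (a0 (f r) + ((Matrix.of fun r c : Fin q => a (f r) c).mulVec β) r) / 2))
        = (fun β : Fin q → ℝ =>
        (Real.sqrt |(Matrix.of fun r c : Fin q => a (f r) c).det| *
          ∏ r, (Real.sqrt |a (f r) r| * 2 ^ (x (f r)))) *
          ∏ r, Real.exp ((a0 (f r) + ∑ c, a (f r) c * β c) / 2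
            - Real.exp (a0 (f r) + ∑ c, a (f r) c * β c) / 2)) := by
      funext β
      simp [Matrix.mulVec, dotProduct]
    rw [← heq]
    exact h2

/-- (Theorem 4.1) In the Poisson log-linear regression model with
`λᵢ(β) = exp(a₀ᵢ + aᵢᵀβ)` and full-column-rank design matrix `A`,
the marginal density under the Jeffreys prior
`π₀ᴿ(β) = det(Σᵢ λᵢ(β) aᵢ aᵢᵀ)^{1/2}` is finite. -/
theorem poisson_regression_marginal_finite (n q : ℕ) (hq : 1 ≤ q)
    (a : Fin n → Fin q → ℝ) (a0 : Fin n → ℝ) (x : Fin n → ℕ)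
    (hrank : (Matrix.of a).rank = q) :
    (∫⁻ β : Fin q → ℝ,
        ENNReal.ofReal (
          (∏ i, Real.exp (-(Real.exp (a0 i + ∑ r, a i r * β r))) *
            Real.exp (a0 i + ∑ r, a i r * β r) ^ (x i) /
              ((x i).factorial : ℝ)) *
          Real.sqrt (Matrix.det (Matrix.of fun r c : Fin q =>
            ∑ i, Real.exp (a0 i + ∑ r', a i r' * β r') * a i r * a i c)))) ≠ ⊤ := by
  have hG := integrable_G a a0 x
  have key : (∫⁻ β : Fin q → ℝ,
      ENNReal.ofReal (∑ f : Fin q → Fin n,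
        (Real.sqrt |(Matrix.of fun r c : Fin q => a (f r) c).det| *
          ∏ r, (Real.sqrt |a (f r) r| * 2 ^ (x (f r)))) *
          ∏ r, Real.exp ((a0 (f r) + ∑ c, a (f r) c * β c) / 2
            - Real.exp (a0 (f r) + ∑ c, a (f r) c * β c) / 2))) ≠ ⊤ := by
    have hle : (∫⁻ β : Fin q → ℝ,
        ENNReal.ofReal (∑ f : Fin q → Fin n,
          (Real.sqrt |(Matrix.of fun r c : Fin q => a (f r) c).det| *
            ∏ r, (Real.sqrt |a (f r) r| * 2 ^ (x (f r)))) *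
            ∏ r, Real.exp ((a0 (f r) + ∑ c, a (f r) c * β c) / 2
              - Real.exp (a0 (f r) + ∑ c, a (f r) c * β c) / 2)))
        ≤ ∫⁻ β : Fin q → ℝ, ‖∑ f : Fin q → Fin n,
          (Real.sqrt |(Matrix.of fun r c : Fin q => a (f r) c).det| *
            ∏ r, (Real.sqrt |a (f r) r| * 2 ^ (x (f r)))) *
            ∏ r, Real.exp ((a0 (f r) + ∑ c, a (f r) c * β c) / 2
              - Real.exp (a0 (f r) + ∑ c, a (f r) c * β c) / 2)‖₊ :=
      lintegral_mono fun β => Real.ofReal_le_enorm _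
    exact ne_of_lt (lt_of_le_of_lt hle hG.hasFiniteIntegral)
  refine ne_top_of_le_ne_top key (lintegral_mono fun β => ENNReal.ofReal_le_ofReal ?_)
  exact pointwise_bound a (fun i => a0 i + ∑ r, a i r * β r) x
end

section
/- (Theorem 4.2, Jeffreys prior case) Consider the ZIP log-linear regression model with λᵢ(β) = exp(a₀ᵢ + aᵢᵀβ), β ∈ ℝ^q, and counts x₁ = ⋯ = x_k = 0 and xᵢ ≥ 1 for i = k+1,…,n, where 0 ≤ k < n. Assume the n×q matrix A with rows aᵢᵀ has rank q, and that for each j = 1,…,k the covariate vector a_j can be written as a_j = Σ_{m=k+1}^n c_{mj} a_m with all coefficients c_{mj} ≥ 0. Then the marginal density under the Jeffreys prior π₀ᴿ(β) = det(Σ_{i=1}^n λᵢ(β) aᵢ aᵢᵀ)^{1/2} and independent uniform prior on p is finite: ∫_{ℝ^q} ∫₀^1 Π_{i=1}^k (p + (1−p)e^{−λᵢ(β)}) · (1−p)^{n−k} · Π_{i=k+1}^n (e^{−λᵢ(β)} λᵢ(β)^{xᵢ}/xᵢ!) · π₀ᴿ(β) dp dβ < ∞. -/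
open MeasureTheory Real Set



lemma key_ineq {t : ℝ} (ht : 0 < t) (u : ℝ) : t * u - Real.exp u ≤ t * Real.log t - t := by
  have h1 : (u - Real.log t) + 1 ≤ Real.exp (u - Real.log t) := Real.add_one_le_exp _
  have h2 : Real.exp (u - Real.log t) * t = Real.exp u := by
    rw [Real.exp_sub, Real.exp_log ht]; field_simp
  nlinarith [ht]

lemma factor_le_const {t : ℝ} (ht : 1 ≤ t) (u : ℝ) :
    Real.exp (t * u - Real.exp u) ≤ Real.exp (t * Real.log t) := by
  apply Real.exp_le_exp.2
  have := key_ineq (lt_of_lt_of_le one_pos ht) u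
  linarith

lemma factor_le_decay {t : ℝ} (ht : 1 ≤ t) (u : ℝ) :
    Real.exp (t * u - Real.exp u) ≤
      Real.exp ((t + 1) * Real.log (t + 1)) * Real.exp (-|u|) := by
  rw [← Real.exp_add]
  apply Real.exp_le_exp.2
  have hlog : 0 ≤ (t + 1) * Real.log (t + 1) := by
    have h1 : (0:ℝ) ≤ Real.log (t + 1) := Real.log_nonneg (by linarith)
    nlinarith
  rcases le_or_gt u 0 with hu | hu
  · rw [abs_of_nonpos hu]
    have : Real.exp u > 0 := Real.exp_pos u
    nlinarith
  · rw [abs_of_pos hu]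
    have := key_ineq (t := t + 1) (by linarith) u
    nlinarith

lemma integrable_exp_neg_abs' : Integrable (fun u : ℝ => Real.exp (-|u|)) := by
  rw [← integrableOn_univ, ← Set.Iic_union_Ioi (a := (0:ℝ))]
  apply IntegrableOn.union
  · apply (integrableOn_exp_Iic 0).congr_fun _ measurableSet_Iic
    intro u hu
    simp only [Set.mem_Iic] at hu
    simp [abs_of_nonpos hu]
  · apply (exp_neg_integrableOn_Ioi 0 one_pos).congr_fun _ measurableSet_Ioi
    intro u hu
    simp only [Set.mem_Ioi] at hu
    simp [abs_of_pos hu]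

lemma integrable_core {t : ℝ} (ht : 1 ≤ t) :
    Integrable (fun u : ℝ => Real.exp (t * u - Real.exp u)) := by
  apply Integrable.mono' (integrable_exp_neg_abs'.const_mul (Real.exp ((t+1) * Real.log (t+1))))
  · apply Continuous.aestronglyMeasurable; continuity
  · refine Filter.Eventually.of_forall (fun u => ?_)
    rw [Real.norm_eq_abs, abs_of_pos (Real.exp_pos _)]
    exact factor_le_decay ht u

lemma integrable_core' {t : ℝ} (ht : 1 ≤ t) (d : ℝ) :
    Integrable (fun u : ℝ => Real.exp (t * (d + u) - Real.exp (d + u))) :=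
  (integrable_core ht).comp_add_left d


lemma core_finite {q : ℕ} (b : Matrix (Fin q) (Fin q) ℝ) (hdet : b.det ≠ 0)
    (d t : Fin q → ℝ) (ht : ∀ r, 1 ≤ t r) :
    ∫⁻ β : Fin q → ℝ, ENNReal.ofReal (∏ r,
      Real.exp (t r * (d r + ∑ s, b r s * β s) - Real.exp (d r + ∑ s, b r s * β s))) ≠ ⊤ := by
  classical
  set F : (Fin q → ℝ) → ℝ := fun u => ∏ r, Real.exp (t r * (d r + u r) - Real.exp (d r + u r))
    with hF
  have hFi : Integrable F := by
    have := Integrable.fintype_prod (𝕜 := ℝ)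
      (f := fun (r : Fin q) (v : ℝ) => Real.exp (t r * (d r + v) - Real.exp (d r + v)))
      (fun r => integrable_core' (ht r) (d r))
    exact this
  have hFm : Measurable fun u => ENNReal.ofReal (F u) := by
    apply Measurable.ennreal_ofReal
    apply Finset.measurable_prod
    intro r _
    have h1 : Measurable fun u : Fin q → ℝ => d r + u r :=
      (measurable_pi_apply r).const_add _
    exact ((h1.const_mul _).sub h1.exp).exp
  set M : (Fin q → ℝ) →ₗ[ℝ] (Fin q → ℝ) := Matrix.toLin' b with hM
  have hMdet : LinearMap.det M ≠ 0 := by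
    rw [hM, LinearMap.det_toLin']; exact hdet
  have hMmeas : Measurable M := by
    have : Continuous M := LinearMap.continuous_of_finiteDimensional M
    exact this.measurable
  have hrw : (fun β : Fin q → ℝ => ENNReal.ofReal (∏ r,
      Real.exp (t r * (d r + ∑ s, b r s * β s) - Real.exp (d r + ∑ s, b r s * β s)))) =
      fun β => ENNReal.ofReal (F (M β)) := by
    funext β
    have hrr : ∀ r, M β r = ∑ s, b r s * β s := by
      intro r
      rw [hM, Matrix.toLin'_apply]
      simp [Matrix.mulVec, dotProduct]
    exact congrArg ENNReal.ofReal (Finset.prod_congr rfl fun r _ => by rw [hrr r])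
  rw [hrw]
  have h1 : ∫⁻ β, ENNReal.ofReal (F (M β)) = ∫⁻ y, ENNReal.ofReal (F y) ∂(Measure.map M volume) :=
    (lintegral_map hFm hMmeas).symm
  rw [h1, Real.map_linearMap_volume_pi_eq_smul_volume_pi hMdet, lintegral_smul_measure]
  exact ENNReal.mul_ne_top ENNReal.ofReal_ne_top hFi.lintegral_lt_top.ne


lemma main_term {n q k : ℕ} (a : Fin n → Fin q → ℝ) (a0 : Fin n → ℝ)
    (t : Fin n → ℝ) (ht : ∀ i : Fin n, k ≤ (i:ℕ) → 1 ≤ t i)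
    (e : Fin q → Fin n) (he : Function.Injective e) (hek : ∀ r, k ≤ ((e r):ℕ))
    (hdet : (Matrix.of fun r s => a (e r) s).det ≠ 0) :
    ∫⁻ β : Fin q → ℝ, ENNReal.ofReal (∏ i ∈ Finset.univ.filter (fun i : Fin n => k ≤ (i:ℕ)),
      Real.exp (t i * (a0 i + ∑ r, a i r * β r) - Real.exp (a0 i + ∑ r, a i r * β r))) ≠ ⊤ := by
  classical
  set S : Finset (Fin n) := Finset.univ.filter (fun i : Fin n => k ≤ (i:ℕ)) with hS
  set T : Finset (Fin n) := Finset.image e Finset.univ with hT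
  have hTS : T ⊆ S := by
    intro i hi
    rw [hT] at hi
    obtain ⟨r, _, rfl⟩ := Finset.mem_image.1 hi
    rw [hS, Finset.mem_filter]
    exact ⟨Finset.mem_univ _, hek r⟩
  set C : ℝ := ∏ i ∈ S \ T, Real.exp (t i * Real.log (t i)) with hC
  have hC0 : 0 ≤ C := Finset.prod_nonneg fun i _ => (Real.exp_pos _).le
  have hpoint : ∀ β : Fin q → ℝ,
      (∏ i ∈ S, Real.exp (t i * (a0 i + ∑ r, a i r * β r)
          - Real.exp (a0 i + ∑ r, a i r * β r)))
      ≤ C * ∏ r : Fin q, Real.exp (t (e r) * (a0 (e r) + ∑ s, a (e r) s * β s)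
          - Real.exp (a0 (e r) + ∑ s, a (e r) s * β s)) := by
    intro β
    have hsplit := Finset.prod_sdiff (f := fun i => Real.exp (t i * (a0 i + ∑ r, a i r * β r)
          - Real.exp (a0 i + ∑ r, a i r * β r))) hTS
    rw [← hsplit]
    have h1 : (∏ i ∈ S \ T, Real.exp (t i * (a0 i + ∑ r, a i r * β r)
          - Real.exp (a0 i + ∑ r, a i r * β r))) ≤ C := by
      apply Finset.prod_le_prod (fun i _ => (Real.exp_pos _).le)
      intro i hi
      have hik : k ≤ (i:ℕ) := by
        have := (Finset.mem_sdiff.1 hi).1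
        rw [hS, Finset.mem_filter] at this
        exact this.2
      exact factor_le_const (ht i hik) _
    have h2 : (∏ i ∈ T, Real.exp (t i * (a0 i + ∑ r, a i r * β r)
          - Real.exp (a0 i + ∑ r, a i r * β r)))
        = ∏ r : Fin q, Real.exp (t (e r) * (a0 (e r) + ∑ s, a (e r) s * β s)
          - Real.exp (a0 (e r) + ∑ s, a (e r) s * β s)) := by
      rw [hT, Finset.prod_image (fun r _ r' _ h => he h)]
    rw [h2]
    apply mul_le_mul_of_nonneg_right h1
    exact Finset.prod_nonneg fun r _ => (Real.exp_pos _).le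
  have hle : (∫⁻ β : Fin q → ℝ, ENNReal.ofReal (∏ i ∈ S,
      Real.exp (t i * (a0 i + ∑ r, a i r * β r) - Real.exp (a0 i + ∑ r, a i r * β r))))
      ≤ ENNReal.ofReal C * ∫⁻ β : Fin q → ℝ, ENNReal.ofReal
        (∏ r : Fin q, Real.exp (t (e r) * (a0 (e r) + ∑ s, a (e r) s * β s)
          - Real.exp (a0 (e r) + ∑ s, a (e r) s * β s))) := by
    rw [← lintegral_const_mul' _ _ ENNReal.ofReal_ne_top]
    apply lintegral_mono
    intro β
    simp only []
    rw [← ENNReal.ofReal_mul hC0]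
    exact ENNReal.ofReal_le_ofReal (hpoint β)
  apply ne_top_of_le_ne_top _ hle
  apply ENNReal.mul_ne_top ENNReal.ofReal_ne_top
  exact core_finite (Matrix.of fun r s => a (e r) s) hdet (fun r => a0 (e r)) (fun r => t (e r))
    (fun r => ht (e r) (hek r))


lemma exists_good_rows {n q k : ℕ} (a : Fin n → Fin q → ℝ)
    (hrank : (Matrix.of a).rank = q)
    (hspan : ∀ j : Fin n, (j:ℕ) < k → a j ∈ Submodule.span ℝ (a '' {i : Fin n | k ≤ (i:ℕ)})) :
    ∃ e : Fin q → Fin n, Function.Injective e ∧ (∀ r, k ≤ ((e r):ℕ)) ∧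
      (Matrix.of fun r s => a (e r) s).det ≠ 0 := by
  classical
  have h1 : Submodule.span ℝ (Set.range a) = ⊤ := by
    apply Submodule.eq_top_of_finrank_eq
    have := (Matrix.of a).rank_eq_finrank_span_row
    rw [hrank] at this
    rw [Module.finrank_fin_fun ℝ]
    exact this.symm
  set s : Set (Fin q → ℝ) := a '' {i : Fin n | k ≤ (i:ℕ)} with hs
  have h2 : Submodule.span ℝ s = ⊤ := by
    rw [← top_le_iff, ← h1]
    apply Submodule.span_le.2
    rintro v ⟨i, rfl⟩
    by_cases hik : (i:ℕ) < k
    · exact hspan i hik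
    · exact Submodule.subset_span ⟨i, not_lt.1 hik, rfl⟩
  obtain ⟨b, hbs, hbspan, li⟩ := exists_linearIndependent ℝ s
  have hbfin : b.Finite := (Set.toFinite {i : Fin n | k ≤ (i:ℕ)} |>.image a).subset hbs
  haveI : Fintype b := hbfin.fintype
  have hbtop : Submodule.span ℝ (Set.range ((↑) : b → (Fin q → ℝ))) = ⊤ := by
    rw [Subtype.range_coe, hbspan, h2]
  let basis : Module.Basis b ℝ (Fin q → ℝ) := Module.Basis.mk li (by rw [hbtop])
  have hcard : Fintype.card b = q := by
    have := Module.finrank_eq_card_basis basis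
    rw [Module.finrank_fin_fun ℝ] at this
    exact this.symm
  let g : Fin q ≃ b := (Fintype.equivFinOfCardEq hcard).symm
  have hmem : ∀ v : b, ∃ i : Fin n, k ≤ (i:ℕ) ∧ a i = (v : Fin q → ℝ) := by
    intro v
    obtain ⟨i, hi, hai⟩ := hbs v.2
    exact ⟨i, hi, hai⟩
  set e : Fin q → Fin n := fun r => (hmem (g r)).choose with he
  have hek : ∀ r, k ≤ ((e r):ℕ) := fun r => (hmem (g r)).choose_spec.1
  have hae : ∀ r, a (e r) = ((g r : b) : Fin q → ℝ) := fun r => (hmem (g r)).choose_spec.2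
  have hli : LinearIndependent ℝ (fun r : Fin q => a (e r)) := by
    have : (fun r : Fin q => a (e r)) = ((↑) : b → (Fin q → ℝ)) ∘ g := by
      funext r; exact hae r
    rw [this]
    exact li.comp g g.injective
  have hinj : Function.Injective e := by
    intro r r' h
    have : a (e r) = a (e r') := by rw [h]
    rw [hae r, hae r'] at this
    exact g.injective (Subtype.ext this)
  refine ⟨e, hinj, hek, ?_⟩
  have hu : IsUnit (Matrix.of fun r s => a (e r) s) := by
    rw [← Matrix.linearIndependent_rows_iff_isUnit]
    exact hli
  rw [← isUnit_iff_ne_zero, ← Matrix.isUnit_iff_isUnit_det]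
  exact hu


lemma cone_convert {n q k : ℕ} (a : Fin n → Fin q → ℝ) (a0 : Fin n → ℝ)
    (hcone : ∀ j : Fin n, (j:ℕ) < k → ∃ c : Fin n → ℝ, (∀ m, 0 ≤ c m) ∧
      (∀ m : Fin n, (m:ℕ) < k → c m = 0) ∧ ∀ r, a j r = ∑ m, c m * a m r)
    (σ : Fin q → Fin n) :
    ∃ (D : ℝ) (s : Fin n → ℝ), 0 ≤ D ∧ (∀ i, 0 ≤ s i) ∧
      ∀ β : Fin q → ℝ, (∏ r : Fin q, Real.exp (a0 (σ r) + ∑ u, a (σ r) u * β u)) =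
        D * ∏ i ∈ Finset.univ.filter (fun i : Fin n => k ≤ (i:ℕ)),
          Real.exp (s i * (a0 i + ∑ u, a i u * β u)) := by
  classical
  have hcc : ∀ r : Fin q, ∃ c : Fin n → ℝ, (∀ m, 0 ≤ c m) ∧
      (∀ m : Fin n, (m:ℕ) < k → c m = 0) ∧ ∀ u, a (σ r) u = ∑ m, c m * a m u := by
    intro r
    by_cases h : ((σ r : ℕ)) < k
    · exact hcone (σ r) h
    · refine ⟨fun i => if i = σ r then 1 else 0, ?_, ?_, ?_⟩
      · intro m; simp only []; split <;> norm_num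
      · intro m hm
        have : m ≠ σ r := by
          intro hEq; rw [hEq] at hm; exact h hm
        simp [this]
      · intro u
        rw [Finset.sum_eq_single (σ r)]
        · simp
        · intro m _ hm; simp [hm]
        · intro hm; exact absurd (Finset.mem_univ _) hm
  choose cc hcc0 hcck hcca using hcc
  set s : Fin n → ℝ := fun i => ∑ r : Fin q, cc r i with hsdef
  set D : ℝ := ∏ r : Fin q, Real.exp (a0 (σ r) - ∑ i, cc r i * a0 i) with hD
  refine ⟨D, s, Finset.prod_nonneg fun r _ => (Real.exp_pos _).le,
    fun i => Finset.sum_nonneg fun r _ => hcc0 r i, ?_⟩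
  intro β
  have hper : ∀ r : Fin q, Real.exp (a0 (σ r) + ∑ u, a (σ r) u * β u) =
      Real.exp (a0 (σ r) - ∑ i, cc r i * a0 i) *
        Real.exp (∑ i, cc r i * (a0 i + ∑ u, a i u * β u)) := by
    intro r
    rw [← Real.exp_add]
    congr 1
    have key : ∑ i, cc r i * ∑ u, a i u * β u = ∑ u, a (σ r) u * β u := by
      have h1 : ∀ i : Fin n, cc r i * ∑ u, a i u * β u = ∑ u, cc r i * a i u * β u := by
        intro i; rw [Finset.mul_sum]; exact Finset.sum_congr rfl fun u _ => by ring
      rw [Finset.sum_congr rfl fun i _ => h1 i, Finset.sum_comm]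
      apply Finset.sum_congr rfl
      intro u _
      rw [hcca r u, Finset.sum_mul]
    have h2 : ∑ i, cc r i * (a0 i + ∑ u, a i u * β u)
        = (∑ i, cc r i * a0 i) + ∑ i, cc r i * ∑ u, a i u * β u := by
      rw [← Finset.sum_add_distrib]
      exact Finset.sum_congr rfl fun i _ => by ring
    rw [h2, key]
    ring
  calc (∏ r : Fin q, Real.exp (a0 (σ r) + ∑ u, a (σ r) u * β u))
      = ∏ r : Fin q, (Real.exp (a0 (σ r) - ∑ i, cc r i * a0 i) *
          Real.exp (∑ i, cc r i * (a0 i + ∑ u, a i u * β u))) :=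
        Finset.prod_congr rfl fun r _ => hper r
    _ = D * ∏ r : Fin q, Real.exp (∑ i, cc r i * (a0 i + ∑ u, a i u * β u)) := by
        rw [Finset.prod_mul_distrib]
    _ = D * Real.exp (∑ r : Fin q, ∑ i, cc r i * (a0 i + ∑ u, a i u * β u)) := by
        rw [Real.exp_sum]
    _ = D * Real.exp (∑ i, s i * (a0 i + ∑ u, a i u * β u)) := by
        congr 1
        rw [Finset.sum_comm]
        apply congrArg Real.exp
        apply Finset.sum_congr rfl
        intro i _
        rw [hsdef]
        simp only []
        rw [Finset.sum_mul]
    _ = D * ∏ i : Fin n, Real.exp (s i * (a0 i + ∑ u, a i u * β u)) := by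
        rw [Real.exp_sum]
    _ = D * ∏ i ∈ Finset.univ.filter (fun i : Fin n => k ≤ (i:ℕ)),
          Real.exp (s i * (a0 i + ∑ u, a i u * β u)) := by
        congr 1
        symm
        apply Finset.prod_subset (Finset.filter_subset _ _)
        intro i _ hi
        have hik : (i:ℕ) < k := by
          by_contra h
          exact hi (Finset.mem_filter.2 ⟨Finset.mem_univ _, not_lt.1 h⟩)
        have : s i = 0 := by
          rw [hsdef]
          exact Finset.sum_eq_zero fun r _ => hcck r i hik
        rw [this, zero_mul, Real.exp_zero]


lemma sqrt_le_one_add {y : ℝ} (hy : 0 ≤ y) : Real.sqrt y ≤ 1 + y := by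
  nlinarith [Real.sq_sqrt hy, Real.sqrt_nonneg y]

lemma inner_bound {n k : ℕ} (lam : Fin n → ℝ) (W₁ W₂ : ℝ) (h1 : 0 ≤ W₁) (h2 : 0 ≤ W₂)
    (hlam : ∀ i, 0 ≤ lam i) :
    ∫⁻ p in Set.Ioc (0:ℝ) 1, ENNReal.ofReal
      ((∏ i ∈ Finset.univ.filter (fun i : Fin n => (i:ℕ) < k),
        (p + (1 - p) * Real.exp (-(lam i)))) * (1 - p) ^ (n - k) * W₁ * W₂)
      ≤ ENNReal.ofReal (W₁ * W₂) := by
  have hmono : ∀ p ∈ Set.Ioc (0:ℝ) 1, ENNReal.ofReal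
      ((∏ i ∈ Finset.univ.filter (fun i : Fin n => (i:ℕ) < k),
        (p + (1 - p) * Real.exp (-(lam i)))) * (1 - p) ^ (n - k) * W₁ * W₂)
      ≤ ENNReal.ofReal (W₁ * W₂) := by
    intro p hp
    obtain ⟨hp0, hp1⟩ := hp
    apply ENNReal.ofReal_le_ofReal
    have hA1 : (∏ i ∈ Finset.univ.filter (fun i : Fin n => (i:ℕ) < k),
        (p + (1 - p) * Real.exp (-(lam i)))) ≤ 1 := by
      apply Finset.prod_le_one
      · intro i _
        have := Real.exp_pos (-(lam i))
        nlinarith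
      · intro i _
        have hexp : Real.exp (-(lam i)) ≤ 1 := Real.exp_le_one_iff.2 (by linarith [hlam i])
        nlinarith [Real.exp_pos (-(lam i))]
    have hA1n : (0:ℝ) ≤ ∏ i ∈ Finset.univ.filter (fun i : Fin n => (i:ℕ) < k),
        (p + (1 - p) * Real.exp (-(lam i))) := by
      apply Finset.prod_nonneg
      intro i _
      have := Real.exp_pos (-(lam i))
      nlinarith
    have hA2 : (1 - p) ^ (n - k) ≤ 1 := pow_le_one₀ (by linarith) (by linarith)
    have hA2n : (0:ℝ) ≤ (1 - p) ^ (n - k) := pow_nonneg (by linarith) _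
    have e1 : (∏ i ∈ Finset.univ.filter (fun i : Fin n => (i:ℕ) < k),
        (p + (1 - p) * Real.exp (-(lam i)))) * (1 - p) ^ (n - k) ≤ 1 :=
      mul_le_one₀ hA1 hA2n hA2
    calc (∏ i ∈ Finset.univ.filter (fun i : Fin n => (i:ℕ) < k),
        (p + (1 - p) * Real.exp (-(lam i)))) * (1 - p) ^ (n - k) * W₁ * W₂
        = ((∏ i ∈ Finset.univ.filter (fun i : Fin n => (i:ℕ) < k),
          (p + (1 - p) * Real.exp (-(lam i)))) * (1 - p) ^ (n - k)) * (W₁ * W₂) := by ring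
      _ ≤ W₁ * W₂ := mul_le_of_le_one_left (mul_nonneg h1 h2) e1
  refine le_trans (setLIntegral_mono' measurableSet_Ioc hmono) ?_
  rw [setLIntegral_const, Real.volume_Ioc]
  norm_num

lemma det_sqrt_bound {n q : ℕ} (a : Fin n → Fin q → ℝ) (lam : Fin n → ℝ) (hlam : ∀ i, 0 ≤ lam i)
    (K : ℝ) (hK0 : 0 ≤ K) (hK : ∀ i r, |a i r| ≤ K) :
    Real.sqrt (Matrix.det (Matrix.of fun r c : Fin q => ∑ i, lam i * a i r * a i c)) ≤
      Real.sqrt (q.factorial : ℝ) * K ^ q * (1 + (∑ i, lam i) ^ q) := by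
  set M : Matrix (Fin q) (Fin q) ℝ := Matrix.of fun r c : Fin q => ∑ i, lam i * a i r * a i c
    with hM
  set S : ℝ := ∑ i, lam i with hSd
  have hS0 : 0 ≤ S := Finset.sum_nonneg fun i _ => hlam i
  have hentry : ∀ r c : Fin q, |M r c| ≤ K ^ 2 * S := by
    intro r c
    have e0 : |M r c| = |∑ i, lam i * a i r * a i c| := by rw [hM]; rfl
    rw [e0]
    calc |∑ i, lam i * a i r * a i c| ≤ ∑ i, |lam i * a i r * a i c| :=
          Finset.abs_sum_le_sum_abs _ _
      _ ≤ ∑ i, K ^ 2 * lam i := by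
          apply Finset.sum_le_sum
          intro i _
          rw [abs_mul, abs_mul, abs_of_nonneg (hlam i)]
          nlinarith [mul_le_mul_of_nonneg_left
            (mul_le_mul (hK i r) (hK i c) (abs_nonneg (a i c)) hK0) (hlam i)]
      _ = K ^ 2 * S := by rw [← Finset.mul_sum]
  have hdet : |M.det| ≤ (q.factorial : ℝ) * (K ^ 2 * S) ^ q := by
    have := Matrix.det_le (A := M) (abv := AbsoluteValue.abs) (x := K ^ 2 * S) hentry
    simpa [Fintype.card_fin, nsmul_eq_mul] using this
  have h1 : Real.sqrt M.det ≤ Real.sqrt ((q.factorial : ℝ) * (K ^ 2 * S) ^ q) :=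
    Real.sqrt_le_sqrt ((le_abs_self _).trans hdet)
  have h2 : Real.sqrt ((q.factorial : ℝ) * (K ^ 2 * S) ^ q)
      = Real.sqrt (q.factorial : ℝ) * (K ^ q * Real.sqrt (S ^ q)) := by
    rw [Real.sqrt_mul (by positivity)]
    congr 1
    have : (K ^ 2 * S) ^ q = (K ^ q) ^ 2 * S ^ q := by ring
    rw [this, Real.sqrt_mul (by positivity), Real.sqrt_sq (by positivity)]
  have h3 : Real.sqrt (S ^ q) ≤ 1 + S ^ q := sqrt_le_one_add (by positivity)
  calc Real.sqrt M.det ≤ Real.sqrt (q.factorial : ℝ) * (K ^ q * Real.sqrt (S ^ q)) := by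
        rw [← h2]; exact h1
    _ ≤ Real.sqrt (q.factorial : ℝ) * (K ^ q * (1 + S ^ q)) := by
        apply mul_le_mul_of_nonneg_left _ (Real.sqrt_nonneg _)
        exact mul_le_mul_of_nonneg_left h3 (by positivity)
    _ = Real.sqrt (q.factorial : ℝ) * K ^ q * (1 + S ^ q) := by ring

/-- (Theorem 4.2, Jeffreys prior case) In the ZIP log-linear regression model with
`λᵢ(β) = exp(a₀ᵢ + aᵢᵀβ)`, zero counts at indices `i < k` and positive counts at
indices `i ≥ k`, if the design matrix `A` has rank `q` and each covariate vector
of a zero count is a nonnegative linear combination of the covariate vectors of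
the positive counts, then the marginal density under the Jeffreys prior
`π₀ᴿ(β) = det(Σ_{i=1}^n λᵢ(β) aᵢ aᵢᵀ)^{1/2}` and an independent uniform prior
on `p` is finite. -/
theorem zip_regression_marginal_finite_jeffreys (n q k : ℕ) (hq : 1 ≤ q) (hk : k < n)
    (a : Fin n → Fin q → ℝ) (a0 : Fin n → ℝ) (x : Fin n → ℕ)
    (hx0 : ∀ i : Fin n, (i : ℕ) < k → x i = 0)
    (hx1 : ∀ i : Fin n, k ≤ (i : ℕ) → 1 ≤ x i)
    (hrank : (Matrix.of a).rank = q)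
    (hcone : ∀ j : Fin n, (j : ℕ) < k → ∃ c : Fin n → ℝ,
      (∀ m, 0 ≤ c m) ∧ (∀ m : Fin n, (m : ℕ) < k → c m = 0) ∧
      ∀ r, a j r = ∑ m, c m * a m r) :
    (∫⁻ β : Fin q → ℝ, ∫⁻ p in Set.Ioc (0 : ℝ) 1,
        ENNReal.ofReal (
          (∏ i ∈ Finset.univ.filter (fun i : Fin n => (i : ℕ) < k),
            (p + (1 - p) * Real.exp (-(Real.exp (a0 i + ∑ r, a i r * β r))))) *
          (1 - p) ^ (n - k) *
          (∏ i ∈ Finset.univ.filter (fun i : Fin n => k ≤ (i : ℕ)),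
            Real.exp (-(Real.exp (a0 i + ∑ r, a i r * β r))) *
              Real.exp (a0 i + ∑ r, a i r * β r) ^ (x i) /
                ((x i).factorial : ℝ)) *
          Real.sqrt (Matrix.det (Matrix.of fun r c : Fin q =>
            ∑ i, Real.exp (a0 i + ∑ r', a i r' * β r') * a i r * a i c)))) ≠ ⊤ := by
  classical
  -- constants
  set K : ℝ := 1 + ∑ i, ∑ r, |a i r| with hKdef
  have hK0 : 0 ≤ K := by positivity
  have hKb : ∀ (i : Fin n) (r : Fin q), |a i r| ≤ K := by
    intro i r
    have h1 : |a i r| ≤ ∑ r', |a i r'| :=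
      Finset.single_le_sum (f := fun r' => |a i r'|) (fun r' _ => abs_nonneg _)
        (Finset.mem_univ r)
    have h2 : (∑ r', |a i r'|) ≤ ∑ i', ∑ r', |a i' r'| :=
      Finset.single_le_sum (f := fun i' => ∑ r', |a i' r'|)
        (fun i' _ => Finset.sum_nonneg fun _ _ => abs_nonneg _) (Finset.mem_univ i)
    rw [hKdef]; linarith
  set C1 : ℝ := Real.sqrt (q.factorial : ℝ) * K ^ q with hC1def
  have hC10 : 0 ≤ C1 := by positivity
  -- the good rows
  have hspan : ∀ j : Fin n, (j:ℕ) < k →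
      a j ∈ Submodule.span ℝ (a '' {i : Fin n | k ≤ (i:ℕ)}) := by
    intro j hj
    obtain ⟨c, hc0, hck, hca⟩ := hcone j hj
    have hval : a j = ∑ m, c m • a m := by
      funext r
      rw [Finset.sum_apply]
      rw [hca r]
      exact Finset.sum_congr rfl fun m _ => by simp [smul_eq_mul]
    rw [hval]
    apply Submodule.sum_mem
    intro m _
    by_cases hmk : (m:ℕ) < k
    · rw [hck m hmk, zero_smul]; exact Submodule.zero_mem _
    · exact Submodule.smul_mem _ _
        (Submodule.subset_span ⟨m, not_lt.1 hmk, rfl⟩)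
  obtain ⟨e, he, hek, hdet⟩ := exists_good_rows a hrank hspan
  -- measurability
  have hLm : ∀ i : Fin n, Measurable (fun β : Fin q → ℝ => a0 i + ∑ r, a i r * β r) :=
    fun i => (Finset.measurable_sum Finset.univ
      (fun r _ => (measurable_pi_apply r : Measurable fun β : Fin q → ℝ => β r).const_mul (a i r))).const_add (a0 i)
  have hPmr : Measurable (fun β : Fin q → ℝ =>
      ∏ i ∈ Finset.univ.filter (fun i : Fin n => k ≤ (i:ℕ)),
        Real.exp ((x i : ℝ) * (a0 i + ∑ r, a i r * β r)
          - Real.exp (a0 i + ∑ r, a i r * β r))) :=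
    Finset.measurable_prod _ fun i _ => (((hLm i).const_mul _).sub (hLm i).exp).exp
  have hPm : Measurable (fun β : Fin q → ℝ => ENNReal.ofReal
      (∏ i ∈ Finset.univ.filter (fun i : Fin n => k ≤ (i:ℕ)),
        Real.exp ((x i : ℝ) * (a0 i + ∑ r, a i r * β r)
          - Real.exp (a0 i + ∑ r, a i r * β r)))) := hPmr.ennreal_ofReal
  have hgm : ∀ σ : Fin q → Fin n, Measurable (fun β : Fin q → ℝ => ENNReal.ofReal
      ((∏ r, Real.exp (a0 (σ r) + ∑ u, a (σ r) u * β u)) *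
        ∏ i ∈ Finset.univ.filter (fun i : Fin n => k ≤ (i:ℕ)),
          Real.exp ((x i : ℝ) * (a0 i + ∑ r, a i r * β r)
            - Real.exp (a0 i + ∑ r, a i r * β r)))) :=
    fun σ => ((Finset.measurable_prod _ fun r _ => (hLm (σ r)).exp).mul hPmr).ennreal_ofReal
  -- pointwise nonnegativity
  have hP0 : ∀ β : Fin q → ℝ, 0 ≤ ∏ i ∈ Finset.univ.filter (fun i : Fin n => k ≤ (i:ℕ)),
      Real.exp ((x i : ℝ) * (a0 i + ∑ r, a i r * β r)
        - Real.exp (a0 i + ∑ r, a i r * β r)) :=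
    fun β => Finset.prod_nonneg fun i _ => (Real.exp_pos _).le
  -- step 1 : integrate out p
  have h1 : (∫⁻ β : Fin q → ℝ, ∫⁻ p in Set.Ioc (0 : ℝ) 1,
        ENNReal.ofReal (
          (∏ i ∈ Finset.univ.filter (fun i : Fin n => (i : ℕ) < k),
            (p + (1 - p) * Real.exp (-(Real.exp (a0 i + ∑ r, a i r * β r))))) *
          (1 - p) ^ (n - k) *
          (∏ i ∈ Finset.univ.filter (fun i : Fin n => k ≤ (i : ℕ)),
            Real.exp (-(Real.exp (a0 i + ∑ r, a i r * β r))) *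
              Real.exp (a0 i + ∑ r, a i r * β r) ^ (x i) /
                ((x i).factorial : ℝ)) *
          Real.sqrt (Matrix.det (Matrix.of fun r c : Fin q =>
            ∑ i, Real.exp (a0 i + ∑ r', a i r' * β r') * a i r * a i c))))
      ≤ ∫⁻ β : Fin q → ℝ, ENNReal.ofReal (
          (∏ i ∈ Finset.univ.filter (fun i : Fin n => k ≤ (i : ℕ)),
            Real.exp (-(Real.exp (a0 i + ∑ r, a i r * β r))) *
              Real.exp (a0 i + ∑ r, a i r * β r) ^ (x i) /
                ((x i).factorial : ℝ)) *
          Real.sqrt (Matrix.det (Matrix.of fun r c : Fin q =>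
            ∑ i, Real.exp (a0 i + ∑ r', a i r' * β r') * a i r * a i c))) := by
    apply lintegral_mono
    intro β
    exact inner_bound (fun i => Real.exp (a0 i + ∑ r, a i r * β r)) _ _
      (Finset.prod_nonneg fun i _ => by positivity) (Real.sqrt_nonneg _)
      (fun i => (Real.exp_pos _).le)
  -- step 2 : pointwise bound by nice product
  have h2 : (∫⁻ β : Fin q → ℝ, ENNReal.ofReal (
          (∏ i ∈ Finset.univ.filter (fun i : Fin n => k ≤ (i : ℕ)),
            Real.exp (-(Real.exp (a0 i + ∑ r, a i r * β r))) *
              Real.exp (a0 i + ∑ r, a i r * β r) ^ (x i) /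
                ((x i).factorial : ℝ)) *
          Real.sqrt (Matrix.det (Matrix.of fun r c : Fin q =>
            ∑ i, Real.exp (a0 i + ∑ r', a i r' * β r') * a i r * a i c))))
      ≤ ∫⁻ β : Fin q → ℝ, ENNReal.ofReal (C1 *
          ((1 + (∑ i, Real.exp (a0 i + ∑ r, a i r * β r)) ^ q) *
            ∏ i ∈ Finset.univ.filter (fun i : Fin n => k ≤ (i:ℕ)),
              Real.exp ((x i : ℝ) * (a0 i + ∑ r, a i r * β r)
                - Real.exp (a0 i + ∑ r, a i r * β r)))) := by
    apply lintegral_mono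
    intro β
    apply ENNReal.ofReal_le_ofReal
    have hQP : (∏ i ∈ Finset.univ.filter (fun i : Fin n => k ≤ (i : ℕ)),
        Real.exp (-(Real.exp (a0 i + ∑ r, a i r * β r))) *
          Real.exp (a0 i + ∑ r, a i r * β r) ^ (x i) / ((x i).factorial : ℝ))
        ≤ ∏ i ∈ Finset.univ.filter (fun i : Fin n => k ≤ (i:ℕ)),
            Real.exp ((x i : ℝ) * (a0 i + ∑ r, a i r * β r)
              - Real.exp (a0 i + ∑ r, a i r * β r)) := by
      apply Finset.prod_le_prod (fun i _ => by positivity)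
      intro i _
      have hfac : (1:ℝ) ≤ ((x i).factorial : ℝ) := by
        exact_mod_cast Nat.one_le_iff_ne_zero.2 (Nat.factorial_ne_zero _)
      have hpow : Real.exp (a0 i + ∑ r, a i r * β r) ^ (x i)
          = Real.exp ((x i : ℝ) * (a0 i + ∑ r, a i r * β r)) :=
        (Real.exp_nat_mul _ _).symm
      rw [hpow, ← Real.exp_add]
      refine le_trans (div_le_self (Real.exp_pos _).le hfac) ?_
      apply le_of_eq
      congr 1
      ring
    have hdet1 : Real.sqrt (Matrix.det (Matrix.of fun r c : Fin q =>
          ∑ i, Real.exp (a0 i + ∑ r', a i r' * β r') * a i r * a i c))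
        ≤ C1 * (1 + (∑ i, Real.exp (a0 i + ∑ r, a i r * β r)) ^ q) := by
      rw [hC1def]
      exact det_sqrt_bound a (fun i => Real.exp (a0 i + ∑ r, a i r * β r))
        (fun i => (Real.exp_pos _).le) K hK0 hKb
    calc (∏ i ∈ Finset.univ.filter (fun i : Fin n => k ≤ (i : ℕ)),
        Real.exp (-(Real.exp (a0 i + ∑ r, a i r * β r))) *
          Real.exp (a0 i + ∑ r, a i r * β r) ^ (x i) / ((x i).factorial : ℝ)) *
        Real.sqrt (Matrix.det (Matrix.of fun r c : Fin q =>
            ∑ i, Real.exp (a0 i + ∑ r', a i r' * β r') * a i r * a i c))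
        ≤ (∏ i ∈ Finset.univ.filter (fun i : Fin n => k ≤ (i:ℕ)),
            Real.exp ((x i : ℝ) * (a0 i + ∑ r, a i r * β r)
              - Real.exp (a0 i + ∑ r, a i r * β r))) *
          (C1 * (1 + (∑ i, Real.exp (a0 i + ∑ r, a i r * β r)) ^ q)) :=
        mul_le_mul hQP hdet1 (Real.sqrt_nonneg _) (hP0 β)
      _ = C1 * ((1 + (∑ i, Real.exp (a0 i + ∑ r, a i r * β r)) ^ q) *
            ∏ i ∈ Finset.univ.filter (fun i : Fin n => k ≤ (i:ℕ)),
              Real.exp ((x i : ℝ) * (a0 i + ∑ r, a i r * β r)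
                - Real.exp (a0 i + ∑ r, a i r * β r))) := by ring
  -- expansion at the ENNReal level
  have hpt : ∀ β : Fin q → ℝ, ENNReal.ofReal (C1 *
          ((1 + (∑ i, Real.exp (a0 i + ∑ r, a i r * β r)) ^ q) *
            ∏ i ∈ Finset.univ.filter (fun i : Fin n => k ≤ (i:ℕ)),
              Real.exp ((x i : ℝ) * (a0 i + ∑ r, a i r * β r)
                - Real.exp (a0 i + ∑ r, a i r * β r))))
      = ENNReal.ofReal C1 *
        (ENNReal.ofReal (∏ i ∈ Finset.univ.filter (fun i : Fin n => k ≤ (i:ℕ)),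
            Real.exp ((x i : ℝ) * (a0 i + ∑ r, a i r * β r)
              - Real.exp (a0 i + ∑ r, a i r * β r)))
          + ∑ σ : Fin q → Fin n, ENNReal.ofReal
            ((∏ r, Real.exp (a0 (σ r) + ∑ u, a (σ r) u * β u)) *
              ∏ i ∈ Finset.univ.filter (fun i : Fin n => k ≤ (i:ℕ)),
                Real.exp ((x i : ℝ) * (a0 i + ∑ r, a i r * β r)
                  - Real.exp (a0 i + ∑ r, a i r * β r)))) := by
    intro β
    have hreal : (1 + (∑ i, Real.exp (a0 i + ∑ r, a i r * β r)) ^ q) *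
          (∏ i ∈ Finset.univ.filter (fun i : Fin n => k ≤ (i:ℕ)),
            Real.exp ((x i : ℝ) * (a0 i + ∑ r, a i r * β r)
              - Real.exp (a0 i + ∑ r, a i r * β r)))
        = (∏ i ∈ Finset.univ.filter (fun i : Fin n => k ≤ (i:ℕ)),
            Real.exp ((x i : ℝ) * (a0 i + ∑ r, a i r * β r)
              - Real.exp (a0 i + ∑ r, a i r * β r)))
          + ∑ σ : Fin q → Fin n,
            (∏ r, Real.exp (a0 (σ r) + ∑ u, a (σ r) u * β u)) *
              ∏ i ∈ Finset.univ.filter (fun i : Fin n => k ≤ (i:ℕ)),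
                Real.exp ((x i : ℝ) * (a0 i + ∑ r, a i r * β r)
                  - Real.exp (a0 i + ∑ r, a i r * β r)) := by
      rw [add_mul, one_mul, ← Finset.sum_mul]
      congr 1
      have hconst : (∑ i, Real.exp (a0 i + ∑ r, a i r * β r)) ^ q
          = ∏ _r : Fin q, (∑ i, Real.exp (a0 i + ∑ r, a i r * β r)) := by
        rw [Finset.prod_const, Finset.card_univ, Fintype.card_fin]
      rw [hconst, Finset.prod_univ_sum, Fintype.piFinset_univ]
    rw [hreal, ENNReal.ofReal_mul hC10, ENNReal.ofReal_add (hP0 β)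
      (Finset.sum_nonneg fun σ _ => mul_nonneg
        (Finset.prod_nonneg fun r _ => (Real.exp_pos _).le) (hP0 β)),
      ENNReal.ofReal_sum_of_nonneg (fun σ _ => mul_nonneg
        (Finset.prod_nonneg fun r _ => (Real.exp_pos _).le) (hP0 β))]
  -- finiteness of the base term
  have h6 : (∫⁻ β : Fin q → ℝ, ENNReal.ofReal
      (∏ i ∈ Finset.univ.filter (fun i : Fin n => k ≤ (i:ℕ)),
        Real.exp ((x i : ℝ) * (a0 i + ∑ r, a i r * β r)
          - Real.exp (a0 i + ∑ r, a i r * β r)))) ≠ ⊤ :=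
    main_term a a0 (fun i => (x i : ℝ))
      (fun i hi => by exact_mod_cast hx1 i hi) e he hek hdet
  -- finiteness of the sigma terms
  have h7 : ∀ σ : Fin q → Fin n, (∫⁻ β : Fin q → ℝ, ENNReal.ofReal
      ((∏ r, Real.exp (a0 (σ r) + ∑ u, a (σ r) u * β u)) *
        ∏ i ∈ Finset.univ.filter (fun i : Fin n => k ≤ (i:ℕ)),
          Real.exp ((x i : ℝ) * (a0 i + ∑ r, a i r * β r)
            - Real.exp (a0 i + ∑ r, a i r * β r)))) ≠ ⊤ := by
    intro σ
    obtain ⟨D, s, hD0, hs0, hDs⟩ := cone_convert a a0 hcone σ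
    have hrw : ∀ β : Fin q → ℝ,
        (∏ r, Real.exp (a0 (σ r) + ∑ u, a (σ r) u * β u)) *
          (∏ i ∈ Finset.univ.filter (fun i : Fin n => k ≤ (i:ℕ)),
            Real.exp ((x i : ℝ) * (a0 i + ∑ r, a i r * β r)
              - Real.exp (a0 i + ∑ r, a i r * β r)))
        = D * ∏ i ∈ Finset.univ.filter (fun i : Fin n => k ≤ (i:ℕ)),
            Real.exp (((x i : ℝ) + s i) * (a0 i + ∑ r, a i r * β r)
              - Real.exp (a0 i + ∑ r, a i r * β r)) := by
      intro β
      rw [hDs β, mul_assoc, ← Finset.prod_mul_distrib]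
      congr 1
      apply Finset.prod_congr rfl
      intro i _
      rw [← Real.exp_add]
      congr 1
      ring
    have hmeas2 : Measurable (fun β : Fin q → ℝ => ENNReal.ofReal
        (∏ i ∈ Finset.univ.filter (fun i : Fin n => k ≤ (i:ℕ)),
          Real.exp (((x i : ℝ) + s i) * (a0 i + ∑ r, a i r * β r)
            - Real.exp (a0 i + ∑ r, a i r * β r)))) :=
      (Finset.measurable_prod _ fun i _ =>
        (((hLm i).const_mul _).sub (hLm i).exp).exp).ennreal_ofReal
    have : (∫⁻ β : Fin q → ℝ, ENNReal.ofReal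
        ((∏ r, Real.exp (a0 (σ r) + ∑ u, a (σ r) u * β u)) *
          ∏ i ∈ Finset.univ.filter (fun i : Fin n => k ≤ (i:ℕ)),
            Real.exp ((x i : ℝ) * (a0 i + ∑ r, a i r * β r)
              - Real.exp (a0 i + ∑ r, a i r * β r))))
        = ENNReal.ofReal D * ∫⁻ β : Fin q → ℝ, ENNReal.ofReal
          (∏ i ∈ Finset.univ.filter (fun i : Fin n => k ≤ (i:ℕ)),
            Real.exp (((x i : ℝ) + s i) * (a0 i + ∑ r, a i r * β r)
              - Real.exp (a0 i + ∑ r, a i r * β r))) := by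
      rw [← lintegral_const_mul' _ _ ENNReal.ofReal_ne_top]
      apply lintegral_congr
      intro β
      rw [hrw β, ENNReal.ofReal_mul hD0]
    rw [this]
    apply ENNReal.mul_ne_top ENNReal.ofReal_ne_top
    exact main_term a a0 (fun i => (x i : ℝ) + s i)
      (fun i hi => by
        have h1 : (1:ℝ) ≤ (x i : ℝ) := by exact_mod_cast hx1 i hi
        linarith [hs0 i]) e he hek hdet
  -- put everything together
  apply ne_top_of_le_ne_top _ (h1.trans h2)
  rw [lintegral_congr hpt, lintegral_const_mul' _ _ ENNReal.ofReal_ne_top,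
    lintegral_add_left hPm, lintegral_finset_sum _ (fun σ _ => hgm σ)]
  apply ENNReal.mul_ne_top ENNReal.ofReal_ne_top
  apply ENNReal.add_ne_top.2
  constructor
  · exact h6
  · exact (ENNReal.sum_lt_top.2 fun σ _ => (h7 σ).lt_top).ne
end

section
/- (Theorem 4.2, modified Jeffreys prior case) Consider the ZIP log-linear regression model with λᵢ(β) = exp(a₀ᵢ + aᵢᵀβ), β ∈ ℝ^q, and counts x₁ = ⋯ = x_k = 0 and xᵢ ≥ 1 for i = k+1,…,n, where 0 ≤ k < n. Assume the (n−k)×q matrix A₊ with rows a_{k+1}ᵀ,…,a_nᵀ has rank q. Then the marginal density under the modified Jeffreys prior π₁ᴿ(β) = det(Σ_{i=k+1}^n λᵢ(β) aᵢ aᵢᵀ)^{1/2} and independent uniform prior on p is finite: ∫_{ℝ^q} ∫₀^1 Π_{i=1}^k (p + (1−p)e^{−λᵢ(β)}) · (1−p)^{n−k} · Π_{i=k+1}^n (e^{−λᵢ(β)} λᵢ(β)^{xᵢ}/xᵢ!) · π₁ᴿ(β) dp dβ < ∞. -/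
open MeasureTheory Real Set

lemma zip_aux_pow_le_exp (m : ℕ) {c t : ℝ} (hc : 0 < c) (ht : 0 ≤ t) :
    t ^ m ≤ (m.factorial : ℝ) / c ^ m * Real.exp (c * t) := by
  have h := Real.pow_div_factorial_le_exp (x := c * t) (by positivity) m
  rw [mul_pow, div_le_iff₀ (by positivity)] at h
  rw [div_mul_eq_mul_div, le_div_iff₀ (by positivity)]
  nlinarith [h]

lemma zip_aux_key (L : ℝ) : L + |L| - Real.exp L / 4 ≤ 8 := by
  rcases le_or_gt L 0 with h | h
  · rw [abs_of_nonpos h]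
    have := Real.exp_pos L
    linarith
  · rw [abs_of_pos h]
    have := Real.quadratic_le_exp_of_nonneg h.le
    nlinarith [sq_nonneg (L - 8)]

lemma zip_h1 {m : Type*} [Fintype m] (l : m → ℝ) (x : m → ℕ) (hx : ∀ i, 1 ≤ x i) :
    (∏ i, Real.exp (-(Real.exp (l i))) * Real.exp (l i) ^ (x i) / ((x i).factorial : ℝ))
      ≤ (∏ i, ((x i - 1).factorial : ℝ) / (1/2 : ℝ) ^ (x i - 1)) *
        Real.exp (∑ i, (l i - Real.exp (l i) / 2)) := by
  rw [Real.exp_sum, ← Finset.prod_mul_distrib]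
  apply Finset.prod_le_prod (fun i _ => by positivity)
  intro i _
  generalize l i = L
  generalize hXg : x i = X
  have hX1 : 1 ≤ X := hXg ▸ hx i
  have hpow : Real.exp L ^ X = Real.exp L ^ (X - 1) * Real.exp L := by
    rw [← pow_succ, Nat.sub_add_cancel hX1]
  have hb := zip_aux_pow_le_exp (X - 1) (by norm_num : (0:ℝ) < 1/2) (Real.exp_pos L).le
  have hfac : (1:ℝ) ≤ (X.factorial : ℝ) := by exact_mod_cast X.factorial_pos
  calc Real.exp (-(Real.exp L)) * Real.exp L ^ X / (X.factorial : ℝ)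
      ≤ Real.exp (-(Real.exp L)) * Real.exp L ^ X := by
        apply div_le_self (by positivity) hfac
    _ = Real.exp L ^ (X - 1) * (Real.exp (-(Real.exp L)) * Real.exp L) := by
        rw [hpow]; ring
    _ ≤ (((X-1).factorial : ℝ) / (1/2:ℝ) ^ (X-1) * Real.exp ((1/2) * Real.exp L)) *
          (Real.exp (-(Real.exp L)) * Real.exp L) := by
        apply mul_le_mul_of_nonneg_right hb (by positivity)
    _ = ((X-1).factorial : ℝ) / (1/2:ℝ) ^ (X-1) * Real.exp (L - Real.exp L / 2) := by
        rw [show L - Real.exp L / 2 = (1/2) * Real.exp L + (-(Real.exp L)) + L by ring,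
          Real.exp_add, Real.exp_add]
        ring

lemma zip_h2 {q : ℕ} {m : Type*} [Fintype m] (A : Matrix m (Fin q) ℝ) (l : m → ℝ) :
    Real.sqrt (Matrix.det (Matrix.of fun r c : Fin q =>
      ∑ i, Real.exp (l i) * A i r * A i c)) ≤
    Real.sqrt ((q.factorial : ℝ) *
        (1 + ∑ i : m, ∑ r : Fin q, ∑ c : Fin q, |A i r * A i c|) ^ q) *
      (1 + ∑ i, Real.exp (l i)) ^ q := by
  classical
  set T : ℝ := ∑ i, Real.exp (l i) with hTdef
  set Kq : ℝ := 1 + ∑ i : m, ∑ r : Fin q, ∑ c : Fin q, |A i r * A i c| with hKqdef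
  have hT0 : 0 ≤ T := Finset.sum_nonneg fun i _ => (Real.exp_pos _).le
  have hKq0 : 0 ≤ Kq := by rw [hKqdef]; positivity
  have hKi : ∀ (i : m) (r c : Fin q), |A i r * A i c| ≤ Kq := by
    intro i r c
    have t1 : |A i r * A i c| ≤ ∑ c', |A i r * A i c'| :=
      Finset.single_le_sum (f := fun c' => |A i r * A i c'|)
        (fun _ _ => abs_nonneg _) (Finset.mem_univ c)
    have t2 : (∑ c', |A i r * A i c'|) ≤ ∑ r', ∑ c', |A i r' * A i c'| :=
      Finset.single_le_sum (f := fun r' => ∑ c', |A i r' * A i c'|)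
        (fun _ _ => Finset.sum_nonneg fun _ _ => abs_nonneg _) (Finset.mem_univ r)
    have t3 : (∑ r', ∑ c', |A i r' * A i c'|) ≤ ∑ i', ∑ r', ∑ c', |A i' r' * A i' c'| :=
      Finset.single_le_sum (f := fun i' => ∑ r', ∑ c', |A i' r' * A i' c'|)
        (fun _ _ => by positivity) (Finset.mem_univ i)
    rw [hKqdef]
    linarith
  have hE : ∀ r c : Fin q, |(Matrix.of fun r c : Fin q =>
      ∑ i, Real.exp (l i) * A i r * A i c) r c| ≤ Kq * T := by
    intro r c
    rw [Matrix.of_apply]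
    calc |∑ i, Real.exp (l i) * A i r * A i c| ≤ ∑ i, |Real.exp (l i) * A i r * A i c| :=
        Finset.abs_sum_le_sum_abs _ _
      _ = ∑ i, Real.exp (l i) * |A i r * A i c| := by
          refine Finset.sum_congr rfl fun i _ => ?_
          rw [mul_assoc, abs_mul, abs_of_pos (Real.exp_pos _)]
      _ ≤ ∑ i, Real.exp (l i) * Kq :=
          Finset.sum_le_sum fun i _ => mul_le_mul_of_nonneg_left (hKi i r c) (Real.exp_pos _).le
      _ = Kq * T := by rw [← Finset.sum_mul, mul_comm]
  have hdet : |Matrix.det (Matrix.of fun r c : Fin q =>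
      ∑ i, Real.exp (l i) * A i r * A i c)| ≤ (q.factorial : ℝ) * (Kq * T) ^ q := by
    have := Matrix.det_le (abv := (AbsoluteValue.abs : AbsoluteValue ℝ ℝ)) hE
    simpa [Fintype.card_fin, nsmul_eq_mul] using this
  have hTsq : Real.sqrt (T ^ q) ≤ (1 + T) ^ q := by
    have h0 : T ≤ (1 + T) ^ 2 := by nlinarith
    have h1 : T ^ q ≤ ((1 + T) ^ q) ^ 2 := by
      calc T ^ q ≤ ((1 + T) ^ 2) ^ q := pow_le_pow_left₀ hT0 h0 q
        _ = ((1 + T) ^ q) ^ 2 := by rw [← pow_mul, ← pow_mul, mul_comm]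
    calc Real.sqrt (T ^ q) ≤ Real.sqrt (((1 + T) ^ q) ^ 2) := Real.sqrt_le_sqrt h1
      _ = (1 + T) ^ q := Real.sqrt_sq (by positivity)
  calc Real.sqrt (Matrix.det (Matrix.of fun r c : Fin q =>
      ∑ i, Real.exp (l i) * A i r * A i c))
      ≤ Real.sqrt ((q.factorial : ℝ) * Kq ^ q * T ^ q) := by
        apply Real.sqrt_le_sqrt
        calc Matrix.det _ ≤ |Matrix.det (Matrix.of fun r c : Fin q =>
            ∑ i, Real.exp (l i) * A i r * A i c)| := le_abs_self _
          _ ≤ (q.factorial : ℝ) * (Kq * T) ^ q := hdet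
          _ = (q.factorial : ℝ) * Kq ^ q * T ^ q := by rw [mul_pow]; ring
    _ = Real.sqrt ((q.factorial : ℝ) * Kq ^ q) * Real.sqrt (T ^ q) :=
        Real.sqrt_mul (by positivity) _
    _ ≤ Real.sqrt ((q.factorial : ℝ) * Kq ^ q) * (1 + T) ^ q :=
        mul_le_mul_of_nonneg_left hTsq (Real.sqrt_nonneg _)

lemma zip_h3 {q : ℕ} (T : ℝ) (hT0 : 0 ≤ T) :
    (1 + T) ^ q ≤ (q.factorial : ℝ) / (1/4 : ℝ) ^ q * Real.exp (1/4) * Real.exp (T / 4) := by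
  have hb := zip_aux_pow_le_exp q (show (0:ℝ) < 1/4 by norm_num) (by linarith : (0:ℝ) ≤ 1 + T)
  rw [show (1/4 : ℝ) * (1 + T) = 1/4 + T/4 by ring, Real.exp_add] at hb
  exact hb.trans_eq (by ring)

lemma zip_h4 {m : Type*} [Fintype m] (l : m → ℝ) :
    Real.exp (∑ i, (l i - Real.exp (l i) / 2)) * Real.exp ((∑ i, Real.exp (l i)) / 4) ≤
      Real.exp (8 * (Fintype.card m)) * Real.exp (-(∑ i, |l i|)) := by
  rw [← Real.exp_add, ← Real.exp_add]
  apply Real.exp_le_exp.mpr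
  have hb := Finset.sum_le_sum (fun i (_ : i ∈ Finset.univ) => zip_aux_key (l i))
  rw [Finset.sum_const, nsmul_eq_mul, Finset.card_univ] at hb
  have hsplit : ∑ i, (l i - Real.exp (l i) / 2) + (∑ i, Real.exp (l i)) / 4 =
      (∑ i, (l i + |l i| - Real.exp (l i) / 4)) - ∑ i, |l i| := by
    rw [Finset.sum_div, ← Finset.sum_add_distrib, ← Finset.sum_sub_distrib]
    exact Finset.sum_congr rfl fun i _ => by ring
  linarith

lemma zip_h5 {q : ℕ} {m : Type*} [Fintype m] (A : Matrix m (Fin q) ℝ) (a0 : m → ℝ)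
    (β : Fin q → ℝ) (K : NNReal) (hKR : (0:ℝ) < K) (hK : AntilipschitzWith K A.mulVecLin)
    (l : m → ℝ) (hl : l = fun i => a0 i + ∑ r, A i r * β r) :
    Real.exp (-(∑ i, |l i|)) ≤ Real.exp (∑ i, |a0 i|) * Real.exp (-((K:ℝ)⁻¹ * ‖β‖)) := by
  rw [← Real.exp_add]
  apply Real.exp_le_exp.mpr
  have hd := hK.le_mul_dist β 0
  simp only [map_zero, dist_zero_right] at hd
  have h7 : (K:ℝ)⁻¹ * ‖β‖ ≤ ‖A.mulVec β‖ := by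
    rw [inv_mul_le_iff₀ hKR]
    simpa [Matrix.mulVecLin_apply] using hd
  have h8 : ‖A.mulVec β‖ ≤ ∑ i, |A.mulVec β i| := by
    rw [pi_norm_le_iff_of_nonneg (by positivity)]
    intro i
    rw [Real.norm_eq_abs]
    exact Finset.single_le_sum (f := fun j => |A.mulVec β j|)
      (fun _ _ => abs_nonneg _) (Finset.mem_univ i)
  have h9 : ∀ i, |A.mulVec β i| ≤ |l i| + |a0 i| := by
    intro i
    have hv : A.mulVec β i = l i - a0 i := by
      simp [Matrix.mulVec, dotProduct, hl]
    rw [hv]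
    calc |l i - a0 i| = |l i + -(a0 i)| := by ring_nf
      _ ≤ |l i| + |-(a0 i)| := abs_add_le _ _
      _ = |l i| + |a0 i| := by rw [abs_neg]
  have h10 : ∑ i, |A.mulVec β i| ≤ (∑ i, |l i|) + ∑ i, |a0 i| := by
    rw [← Finset.sum_add_distrib]
    exact Finset.sum_le_sum fun i _ => h9 i
  linarith

lemma zip_h6 {q : ℕ} (β : Fin q → ℝ) (ε : ℝ) (hε : 0 < ε) :
    Real.exp (-(ε * ‖β‖)) ≤ ((q+1).factorial : ℝ) / ε ^ (q+1) * Real.exp ε *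
      (1 + ‖β‖) ^ (-((q : ℝ) + 1)) := by
  have ht0 : (0:ℝ) ≤ ‖β‖ := norm_nonneg β
  have hp : (0:ℝ) < 1 + ‖β‖ := by linarith
  have hb := zip_aux_pow_le_exp (q+1) hε (by linarith : (0:ℝ) ≤ 1 + ‖β‖)
  rw [show ε * (1 + ‖β‖) = ε + ε * ‖β‖ by ring, Real.exp_add] at hb
  have hb2 : (1 + ‖β‖) ^ (q+1) ≤ ((q+1).factorial : ℝ) / ε ^ (q+1) * Real.exp ε *
      Real.exp (ε * ‖β‖) := hb.trans_eq (by ring)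
  have hrpow : (1 + ‖β‖) ^ (-((q:ℝ) + 1)) = ((1 + ‖β‖) ^ (q+1))⁻¹ := by
    rw [show -((q:ℝ) + 1) = -(((q+1 : ℕ)):ℝ) by push_cast; ring, Real.rpow_neg hp.le,
      Real.rpow_natCast]
  rw [hrpow, ← div_eq_mul_inv, le_div_iff₀ (by positivity)]
  calc Real.exp (-(ε * ‖β‖)) * (1 + ‖β‖) ^ (q+1)
      ≤ Real.exp (-(ε * ‖β‖)) * (((q+1).factorial : ℝ) / ε ^ (q+1) * Real.exp ε *
          Real.exp (ε * ‖β‖)) := mul_le_mul_of_nonneg_left hb2 (Real.exp_pos _).le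
    _ = ((q+1).factorial : ℝ) / ε ^ (q+1) * Real.exp ε *
          (Real.exp (-(ε * ‖β‖)) * Real.exp (ε * ‖β‖)) := by ring
    _ = ((q+1).factorial : ℝ) / ε ^ (q+1) * Real.exp ε := by
        rw [← Real.exp_add, neg_add_cancel, Real.exp_zero, mul_one]

set_option maxHeartbeats 1000000 in
lemma zip_master {q : ℕ} {m : Type*} [Fintype m] (A : Matrix m (Fin q) ℝ)
    (hker : LinearMap.ker A.mulVecLin = ⊥) (a0 : m → ℝ) (x : m → ℕ) (hx : ∀ i, 1 ≤ x i) :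
    ∃ C : ℝ, 0 ≤ C ∧ ∀ β : Fin q → ℝ,
      (∏ i, Real.exp (-(Real.exp (a0 i + ∑ r, A i r * β r))) *
          Real.exp (a0 i + ∑ r, A i r * β r) ^ (x i) / ((x i).factorial : ℝ)) *
        Real.sqrt (Matrix.det (Matrix.of fun r c : Fin q =>
          ∑ i, Real.exp (a0 i + ∑ r', A i r' * β r') * A i r * A i c)) ≤
      C * (1 + ‖β‖) ^ (-((q : ℝ) + 1)) := by
  classical
  obtain ⟨K, hKpos, hK⟩ := A.mulVecLin.exists_antilipschitzWith hker
  have hKR : (0:ℝ) < K := hKpos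
  have hε : (0:ℝ) < (K:ℝ)⁻¹ := by positivity
  refine ⟨(∏ i, ((x i - 1).factorial : ℝ) / (1/2 : ℝ) ^ (x i - 1)) *
      Real.sqrt ((q.factorial : ℝ) *
        (1 + ∑ i : m, ∑ r : Fin q, ∑ c : Fin q, |A i r * A i c|) ^ q) *
      ((q.factorial : ℝ) / (1/4 : ℝ) ^ q * Real.exp (1/4)) *
      Real.exp (8 * (Fintype.card m)) *
      Real.exp (∑ i, |a0 i|) *
      (((q+1).factorial : ℝ) / ((K:ℝ)⁻¹) ^ (q+1) * Real.exp ((K:ℝ)⁻¹)), by positivity,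
    fun β => ?_⟩
  set l : m → ℝ := fun i => a0 i + ∑ r, A i r * β r with hl
  show (∏ i, Real.exp (-(Real.exp (l i))) * Real.exp (l i) ^ (x i) / ((x i).factorial : ℝ)) *
        Real.sqrt (Matrix.det (Matrix.of fun r c : Fin q =>
          ∑ i, Real.exp (l i) * A i r * A i c)) ≤ _
  have hT0 : (0:ℝ) ≤ ∑ i, Real.exp (l i) := Finset.sum_nonneg fun i _ => (Real.exp_pos _).le
  have h1 := zip_h1 l x hx
  have h2 := zip_h2 A l
  have h3 := zip_h3 (q := q) (∑ i, Real.exp (l i)) hT0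
  have h4 := zip_h4 l
  have h5 := zip_h5 A a0 β K hKR hK l hl
  have h6 := zip_h6 β ((K:ℝ)⁻¹) hε
  have hrp : (0:ℝ) ≤ (1 + ‖β‖) ^ (-((q : ℝ) + 1)) := Real.rpow_nonneg (by positivity) _
  -- abbreviations as nonneg facts
  have c1 : (0:ℝ) ≤ ∏ i, ((x i - 1).factorial : ℝ) / (1/2 : ℝ) ^ (x i - 1) := by positivity
  have c2 : (0:ℝ) ≤ Real.sqrt ((q.factorial : ℝ) *
      (1 + ∑ i : m, ∑ r : Fin q, ∑ c : Fin q, |A i r * A i c|) ^ q) := Real.sqrt_nonneg _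
  have c3 : (0:ℝ) ≤ (q.factorial : ℝ) / (1/4 : ℝ) ^ q * Real.exp (1/4) := by positivity
  calc (∏ i, Real.exp (-(Real.exp (l i))) * Real.exp (l i) ^ (x i) / ((x i).factorial : ℝ)) *
        Real.sqrt (Matrix.det (Matrix.of fun r c : Fin q =>
          ∑ i, Real.exp (l i) * A i r * A i c))
      ≤ ((∏ i, ((x i - 1).factorial : ℝ) / (1/2 : ℝ) ^ (x i - 1)) *
          Real.exp (∑ i, (l i - Real.exp (l i) / 2))) *
        (Real.sqrt ((q.factorial : ℝ) *
            (1 + ∑ i : m, ∑ r : Fin q, ∑ c : Fin q, |A i r * A i c|) ^ q) *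
          (1 + ∑ i, Real.exp (l i)) ^ q) := by
        apply mul_le_mul h1 h2 (Real.sqrt_nonneg _) (by positivity)
    _ ≤ ((∏ i, ((x i - 1).factorial : ℝ) / (1/2 : ℝ) ^ (x i - 1)) *
          Real.exp (∑ i, (l i - Real.exp (l i) / 2))) *
        (Real.sqrt ((q.factorial : ℝ) *
            (1 + ∑ i : m, ∑ r : Fin q, ∑ c : Fin q, |A i r * A i c|) ^ q) *
          ((q.factorial : ℝ) / (1/4 : ℝ) ^ q * Real.exp (1/4) *
            Real.exp ((∑ i, Real.exp (l i)) / 4))) := by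
        apply mul_le_mul_of_nonneg_left (mul_le_mul_of_nonneg_left h3 c2) (by positivity)
    _ = ((∏ i, ((x i - 1).factorial : ℝ) / (1/2 : ℝ) ^ (x i - 1)) *
          Real.sqrt ((q.factorial : ℝ) *
            (1 + ∑ i : m, ∑ r : Fin q, ∑ c : Fin q, |A i r * A i c|) ^ q) *
          ((q.factorial : ℝ) / (1/4 : ℝ) ^ q * Real.exp (1/4))) *
        (Real.exp (∑ i, (l i - Real.exp (l i) / 2)) *
          Real.exp ((∑ i, Real.exp (l i)) / 4)) := by ring
    _ ≤ ((∏ i, ((x i - 1).factorial : ℝ) / (1/2 : ℝ) ^ (x i - 1)) *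
          Real.sqrt ((q.factorial : ℝ) *
            (1 + ∑ i : m, ∑ r : Fin q, ∑ c : Fin q, |A i r * A i c|) ^ q) *
          ((q.factorial : ℝ) / (1/4 : ℝ) ^ q * Real.exp (1/4))) *
        (Real.exp (8 * (Fintype.card m)) * Real.exp (-(∑ i, |l i|))) := by
        apply mul_le_mul_of_nonneg_left h4 (by positivity)
    _ = ((∏ i, ((x i - 1).factorial : ℝ) / (1/2 : ℝ) ^ (x i - 1)) *
          Real.sqrt ((q.factorial : ℝ) *
            (1 + ∑ i : m, ∑ r : Fin q, ∑ c : Fin q, |A i r * A i c|) ^ q) *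
          ((q.factorial : ℝ) / (1/4 : ℝ) ^ q * Real.exp (1/4)) *
          Real.exp (8 * (Fintype.card m))) * Real.exp (-(∑ i, |l i|)) := by ring
    _ ≤ ((∏ i, ((x i - 1).factorial : ℝ) / (1/2 : ℝ) ^ (x i - 1)) *
          Real.sqrt ((q.factorial : ℝ) *
            (1 + ∑ i : m, ∑ r : Fin q, ∑ c : Fin q, |A i r * A i c|) ^ q) *
          ((q.factorial : ℝ) / (1/4 : ℝ) ^ q * Real.exp (1/4)) *
          Real.exp (8 * (Fintype.card m))) *
        (Real.exp (∑ i, |a0 i|) * Real.exp (-((K:ℝ)⁻¹ * ‖β‖))) := by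
        apply mul_le_mul_of_nonneg_left h5 (by positivity)
    _ = ((∏ i, ((x i - 1).factorial : ℝ) / (1/2 : ℝ) ^ (x i - 1)) *
          Real.sqrt ((q.factorial : ℝ) *
            (1 + ∑ i : m, ∑ r : Fin q, ∑ c : Fin q, |A i r * A i c|) ^ q) *
          ((q.factorial : ℝ) / (1/4 : ℝ) ^ q * Real.exp (1/4)) *
          Real.exp (8 * (Fintype.card m)) * Real.exp (∑ i, |a0 i|)) *
        Real.exp (-((K:ℝ)⁻¹ * ‖β‖)) := by ring
    _ ≤ ((∏ i, ((x i - 1).factorial : ℝ) / (1/2 : ℝ) ^ (x i - 1)) *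
          Real.sqrt ((q.factorial : ℝ) *
            (1 + ∑ i : m, ∑ r : Fin q, ∑ c : Fin q, |A i r * A i c|) ^ q) *
          ((q.factorial : ℝ) / (1/4 : ℝ) ^ q * Real.exp (1/4)) *
          Real.exp (8 * (Fintype.card m)) * Real.exp (∑ i, |a0 i|)) *
        ((((q+1).factorial : ℝ) / ((K:ℝ)⁻¹) ^ (q+1) * Real.exp ((K:ℝ)⁻¹)) *
          (1 + ‖β‖) ^ (-((q : ℝ) + 1))) := by
        apply mul_le_mul_of_nonneg_left h6 (by positivity)
    _ = (∏ i, ((x i - 1).factorial : ℝ) / (1/2 : ℝ) ^ (x i - 1)) *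
        Real.sqrt ((q.factorial : ℝ) *
          (1 + ∑ i : m, ∑ r : Fin q, ∑ c : Fin q, |A i r * A i c|) ^ q) *
        ((q.factorial : ℝ) / (1/4 : ℝ) ^ q * Real.exp (1/4)) *
        Real.exp (8 * (Fintype.card m)) * Real.exp (∑ i, |a0 i|) *
        (((q+1).factorial : ℝ) / ((K:ℝ)⁻¹) ^ (q+1) * Real.exp ((K:ℝ)⁻¹)) *
        (1 + ‖β‖) ^ (-((q : ℝ) + 1)) := by ring

set_option maxHeartbeats 1000000 in
/-- (Theorem 4.2, modified Jeffreys prior case) In the ZIP log-linear regression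
model with `λᵢ(β) = exp(a₀ᵢ + aᵢᵀβ)`, zero counts at indices `i < k` and positive
counts at indices `i ≥ k`, if the submatrix `A₊` of the design matrix corresponding
to the positive counts has rank `q`, then the marginal density under the modified
Jeffreys prior `π₁ᴿ(β) = det(Σ_{i=k+1}^n λᵢ(β) aᵢ aᵢᵀ)^{1/2}` and an independent
uniform prior on `p` is finite. -/
theorem zip_regression_marginal_finite_modified_jeffreys (n q k : ℕ) (hq : 1 ≤ q)
    (hk : k < n)
    (a : Fin n → Fin q → ℝ) (a0 : Fin n → ℝ) (x : Fin n → ℕ)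
    (hx0 : ∀ i : Fin n, (i : ℕ) < k → x i = 0)
    (hx1 : ∀ i : Fin n, k ≤ (i : ℕ) → 1 ≤ x i)
    (hrank : (Matrix.of fun (i : {i : Fin n // k ≤ (i : ℕ)}) (j : Fin q) =>
      a i.1 j).rank = q) :
    (∫⁻ β : Fin q → ℝ, ∫⁻ p in Set.Ioc (0 : ℝ) 1,
        ENNReal.ofReal (
          (∏ i ∈ Finset.univ.filter (fun i : Fin n => (i : ℕ) < k),
            (p + (1 - p) * Real.exp (-(Real.exp (a0 i + ∑ r, a i r * β r))))) *
          (1 - p) ^ (n - k) *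
          (∏ i ∈ Finset.univ.filter (fun i : Fin n => k ≤ (i : ℕ)),
            Real.exp (-(Real.exp (a0 i + ∑ r, a i r * β r))) *
              Real.exp (a0 i + ∑ r, a i r * β r) ^ (x i) /
                ((x i).factorial : ℝ)) *
          Real.sqrt (Matrix.det (Matrix.of fun r c : Fin q =>
            ∑ i ∈ Finset.univ.filter (fun i : Fin n => k ≤ (i : ℕ)),
              Real.exp (a0 i + ∑ r', a i r' * β r') * a i r * a i c)))) ≠ ⊤ := by
  classical
  set A : Matrix {i : Fin n // k ≤ (i : ℕ)} (Fin q) ℝ := Matrix.of fun i j => a i.1 j with hA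
  have hker : LinearMap.ker A.mulVecLin = ⊥ := by
    have h1 : Module.finrank ℝ (LinearMap.range A.mulVecLin) = q := hrank
    have h2 := LinearMap.finrank_range_add_finrank_ker A.mulVecLin
    rw [h1, Module.finrank_pi, Fintype.card_fin] at h2
    exact Submodule.finrank_eq_zero.mp (by omega)
  obtain ⟨C, hC0, hCb⟩ := zip_master A hker (fun i => a0 i.1) (fun i => x i.1)
    (fun i => hx1 i.1 i.2)
  -- pointwise bound on the β-dependent part
  have hpoint : ∀ β : Fin q → ℝ,
      (∏ i ∈ Finset.univ.filter (fun i : Fin n => k ≤ (i : ℕ)),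
        Real.exp (-(Real.exp (a0 i + ∑ r, a i r * β r))) *
          Real.exp (a0 i + ∑ r, a i r * β r) ^ (x i) / ((x i).factorial : ℝ)) *
        Real.sqrt (Matrix.det (Matrix.of fun r c : Fin q =>
          ∑ i ∈ Finset.univ.filter (fun i : Fin n => k ≤ (i : ℕ)),
            Real.exp (a0 i + ∑ r', a i r' * β r') * a i r * a i c)) ≤
      C * (1 + ‖β‖) ^ (-((q : ℝ) + 1)) := by
    intro β
    have hprod : (∏ i ∈ Finset.univ.filter (fun i : Fin n => k ≤ (i : ℕ)),
        Real.exp (-(Real.exp (a0 i + ∑ r, a i r * β r))) *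
          Real.exp (a0 i + ∑ r, a i r * β r) ^ (x i) / ((x i).factorial : ℝ)) =
        ∏ i : {i : Fin n // k ≤ (i : ℕ)},
          Real.exp (-(Real.exp (a0 i.1 + ∑ r, a i.1 r * β r))) *
            Real.exp (a0 i.1 + ∑ r, a i.1 r * β r) ^ (x i.1) / ((x i.1).factorial : ℝ) :=
      Finset.prod_subtype _ (fun i => by simp) _
    have hM : (Matrix.of fun r c : Fin q =>
        ∑ i ∈ Finset.univ.filter (fun i : Fin n => k ≤ (i : ℕ)),
          Real.exp (a0 i + ∑ r', a i r' * β r') * a i r * a i c) =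
        (Matrix.of fun r c : Fin q =>
          ∑ i : {i : Fin n // k ≤ (i : ℕ)},
            Real.exp (a0 i.1 + ∑ r', a i.1 r' * β r') * a i.1 r * a i.1 c) := by
      ext r c
      simp only [Matrix.of_apply]
      exact Finset.sum_subtype _ (fun i => by simp) _
    rw [hprod, hM]
    exact hCb β
  -- the p-integral bound
  have key : ∀ β : Fin q → ℝ,
      (∫⁻ p in Set.Ioc (0 : ℝ) 1,
        ENNReal.ofReal (
          (∏ i ∈ Finset.univ.filter (fun i : Fin n => (i : ℕ) < k),
            (p + (1 - p) * Real.exp (-(Real.exp (a0 i + ∑ r, a i r * β r))))) *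
          (1 - p) ^ (n - k) *
          (∏ i ∈ Finset.univ.filter (fun i : Fin n => k ≤ (i : ℕ)),
            Real.exp (-(Real.exp (a0 i + ∑ r, a i r * β r))) *
              Real.exp (a0 i + ∑ r, a i r * β r) ^ (x i) /
                ((x i).factorial : ℝ)) *
          Real.sqrt (Matrix.det (Matrix.of fun r c : Fin q =>
            ∑ i ∈ Finset.univ.filter (fun i : Fin n => k ≤ (i : ℕ)),
              Real.exp (a0 i + ∑ r', a i r' * β r') * a i r * a i c)))) ≤
      ENNReal.ofReal (C * (1 + ‖β‖) ^ (-((q : ℝ) + 1))) := by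
    intro β
    have hmono : ∀ p ∈ Set.Ioc (0:ℝ) 1,
        (∏ i ∈ Finset.univ.filter (fun i : Fin n => (i : ℕ) < k),
            (p + (1 - p) * Real.exp (-(Real.exp (a0 i + ∑ r, a i r * β r))))) *
          (1 - p) ^ (n - k) *
          (∏ i ∈ Finset.univ.filter (fun i : Fin n => k ≤ (i : ℕ)),
            Real.exp (-(Real.exp (a0 i + ∑ r, a i r * β r))) *
              Real.exp (a0 i + ∑ r, a i r * β r) ^ (x i) /
                ((x i).factorial : ℝ)) *
          Real.sqrt (Matrix.det (Matrix.of fun r c : Fin q =>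
            ∑ i ∈ Finset.univ.filter (fun i : Fin n => k ≤ (i : ℕ)),
              Real.exp (a0 i + ∑ r', a i r' * β r') * a i r * a i c)) ≤
        C * (1 + ‖β‖) ^ (-((q : ℝ) + 1)) := by
      intro p hp
      obtain ⟨hp0, hp1⟩ := hp
      have hA1 : (∏ i ∈ Finset.univ.filter (fun i : Fin n => (i : ℕ) < k),
          (p + (1 - p) * Real.exp (-(Real.exp (a0 i + ∑ r, a i r * β r))))) ≤ 1 := by
        apply Finset.prod_le_one
        · intro i _
          have he := Real.exp_pos (-(Real.exp (a0 i + ∑ r, a i r * β r)))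
          nlinarith
        · intro i _
          have he := Real.exp_pos (-(Real.exp (a0 i + ∑ r, a i r * β r)))
          have he1 : Real.exp (-(Real.exp (a0 i + ∑ r, a i r * β r))) ≤ 1 := by
            rw [Real.exp_le_one_iff]
            have := Real.exp_pos (a0 i + ∑ r, a i r * β r)
            linarith
          nlinarith
      have hA0 : (0:ℝ) ≤ ∏ i ∈ Finset.univ.filter (fun i : Fin n => (i : ℕ) < k),
          (p + (1 - p) * Real.exp (-(Real.exp (a0 i + ∑ r, a i r * β r)))) := by
        apply Finset.prod_nonneg
        intro i _
        have he := Real.exp_pos (-(Real.exp (a0 i + ∑ r, a i r * β r)))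
        nlinarith
      have hB1 : (1 - p) ^ (n - k) ≤ 1 := pow_le_one₀ (by linarith) (by linarith)
      have hB0 : (0:ℝ) ≤ (1 - p) ^ (n - k) := pow_nonneg (by linarith) _
      have hPS : (0:ℝ) ≤ (∏ i ∈ Finset.univ.filter (fun i : Fin n => k ≤ (i : ℕ)),
            Real.exp (-(Real.exp (a0 i + ∑ r, a i r * β r))) *
              Real.exp (a0 i + ∑ r, a i r * β r) ^ (x i) /
                ((x i).factorial : ℝ)) *
          Real.sqrt (Matrix.det (Matrix.of fun r c : Fin q =>
            ∑ i ∈ Finset.univ.filter (fun i : Fin n => k ≤ (i : ℕ)),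
              Real.exp (a0 i + ∑ r', a i r' * β r') * a i r * a i c)) := by
        apply mul_nonneg _ (Real.sqrt_nonneg _)
        apply Finset.prod_nonneg
        intro i _
        positivity
      calc (∏ i ∈ Finset.univ.filter (fun i : Fin n => (i : ℕ) < k),
            (p + (1 - p) * Real.exp (-(Real.exp (a0 i + ∑ r, a i r * β r))))) *
          (1 - p) ^ (n - k) *
          (∏ i ∈ Finset.univ.filter (fun i : Fin n => k ≤ (i : ℕ)),
            Real.exp (-(Real.exp (a0 i + ∑ r, a i r * β r))) *
              Real.exp (a0 i + ∑ r, a i r * β r) ^ (x i) /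
                ((x i).factorial : ℝ)) *
          Real.sqrt (Matrix.det (Matrix.of fun r c : Fin q =>
            ∑ i ∈ Finset.univ.filter (fun i : Fin n => k ≤ (i : ℕ)),
              Real.exp (a0 i + ∑ r', a i r' * β r') * a i r * a i c))
          = ((∏ i ∈ Finset.univ.filter (fun i : Fin n => (i : ℕ) < k),
              (p + (1 - p) * Real.exp (-(Real.exp (a0 i + ∑ r, a i r * β r))))) *
            (1 - p) ^ (n - k)) *
            ((∏ i ∈ Finset.univ.filter (fun i : Fin n => k ≤ (i : ℕ)),
              Real.exp (-(Real.exp (a0 i + ∑ r, a i r * β r))) *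
                Real.exp (a0 i + ∑ r, a i r * β r) ^ (x i) /
                  ((x i).factorial : ℝ)) *
            Real.sqrt (Matrix.det (Matrix.of fun r c : Fin q =>
              ∑ i ∈ Finset.univ.filter (fun i : Fin n => k ≤ (i : ℕ)),
                Real.exp (a0 i + ∑ r', a i r' * β r') * a i r * a i c))) := by ring
        _ ≤ 1 * ((∏ i ∈ Finset.univ.filter (fun i : Fin n => k ≤ (i : ℕ)),
              Real.exp (-(Real.exp (a0 i + ∑ r, a i r * β r))) *
                Real.exp (a0 i + ∑ r, a i r * β r) ^ (x i) /
                  ((x i).factorial : ℝ)) *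
            Real.sqrt (Matrix.det (Matrix.of fun r c : Fin q =>
              ∑ i ∈ Finset.univ.filter (fun i : Fin n => k ≤ (i : ℕ)),
                Real.exp (a0 i + ∑ r', a i r' * β r') * a i r * a i c))) := by
            apply mul_le_mul_of_nonneg_right _ hPS
            exact mul_le_one₀ hA1 hB0 hB1
        _ = _ := one_mul _
        _ ≤ C * (1 + ‖β‖) ^ (-((q : ℝ) + 1)) := hpoint β
    calc (∫⁻ p in Set.Ioc (0 : ℝ) 1, ENNReal.ofReal _)
        ≤ ∫⁻ _ in Set.Ioc (0 : ℝ) 1,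
            ENNReal.ofReal (C * (1 + ‖β‖) ^ (-((q : ℝ) + 1))) := by
          apply setLIntegral_mono measurable_const
          intro p hp
          exact ENNReal.ofReal_le_ofReal (hmono p hp)
      _ = ENNReal.ofReal (C * (1 + ‖β‖) ^ (-((q : ℝ) + 1))) *
            volume (Set.Ioc (0:ℝ) 1) := setLIntegral_const _ _
      _ = ENNReal.ofReal (C * (1 + ‖β‖) ^ (-((q : ℝ) + 1))) := by
          simp [Real.volume_Ioc]
  -- conclude
  have hfin : (∫⁻ β : Fin q → ℝ, ENNReal.ofReal ((1 + ‖β‖) ^ (-((q : ℝ) + 1)))) < ⊤ := by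
    apply finite_integral_one_add_norm
    rw [Module.finrank_pi, Fintype.card_fin]
    exact lt_add_one _
  refine ne_top_of_le_ne_top ?_ (lintegral_mono key)
  rw [show (fun β : Fin q → ℝ => ENNReal.ofReal (C * (1 + ‖β‖) ^ (-((q : ℝ) + 1)))) =
    (fun β : Fin q → ℝ => ENNReal.ofReal C * ENNReal.ofReal ((1 + ‖β‖) ^ (-((q : ℝ) + 1)))) from
    funext fun β => ENNReal.ofReal_mul hC0]
  rw [lintegral_const_mul' _ _ ENNReal.ofReal_ne_top]
  exact (ENNReal.mul_lt_top ENNReal.ofReal_lt_top hfin).ne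
end

section
/- (Remark 4.1) Let n = 3, q = 2, with zero offsets, covariate vectors a₁ = (c₁, c₂)ᵀ, a₂ = (1, 0)ᵀ, a₃ = (0, 1)ᵀ where c₁ ≠ 0, so that λ₂ = e^{β₁}, λ₃ = e^{β₂}, λ₁ = λ₂^{c₁} λ₃^{c₂}. Let x₁ = 0 and x₂, x₃ ∈ ℕ. If x₂ ≤ −c₁/2 or x₃ ≤ −(1 + c₂)/2, then ∫_{ℝ²} e^{−λ₂} λ₂^{x₂} e^{−λ₃} λ₃^{x₃} · det(Σ_{i=1}^3 λᵢ aᵢ aᵢᵀ)^{1/2} dβ = ∞; hence the ZIP-regression marginal density under the full Jeffreys prior π₀ᴿ(β) = det(Σ_{i=1}^3 λᵢ aᵢ aᵢᵀ)^{1/2} is infinite. In particular, det(Σ_{i=1}^3 λᵢ aᵢ aᵢᵀ) = λ₂λ₃ + c₁² λ₂^{c₁} λ₃^{c₂+1} + c₂² λ₂^{c₁+1} λ₃^{c₂}. -/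
open MeasureTheory Real Set
open scoped ENNReal

lemma aux_meas (k α : ℝ) :
    Measurable fun t : ℝ => ENNReal.ofReal (k * (Real.exp (-(Real.exp t)) * Real.exp (α * t))) :=
  ((Real.measurable_exp.neg.exp.mul ((measurable_id.const_mul α).exp)).const_mul k).ennreal_ofReal

lemma aux_top (k α : ℝ) (hk : 0 < k) (hα : α ≤ 0) :
    ∫⁻ t : ℝ, ENNReal.ofReal (k * (Real.exp (-(Real.exp t)) * Real.exp (α * t))) = ⊤ := by
  rw [eq_top_iff]
  calc (⊤ : ℝ≥0∞) = ENNReal.ofReal (k * Real.exp (-1)) * volume (Iic (0:ℝ)) := by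
        rw [Real.volume_Iic, ENNReal.mul_top]
        positivity
    _ = ∫⁻ t : ℝ, (Iic (0:ℝ)).indicator (fun _ => ENNReal.ofReal (k * Real.exp (-1))) t := by
        rw [lintegral_indicator measurableSet_Iic, setLIntegral_const]
    _ ≤ _ := by
        refine lintegral_mono fun t => ?_
        by_cases ht : t ∈ Iic (0:ℝ)
        · rw [indicator_of_mem ht]
          refine ENNReal.ofReal_le_ofReal ?_
          have h1 : Real.exp (-1) ≤ Real.exp (-(Real.exp t)) := by
            apply Real.exp_le_exp.mpr
            simp only [neg_le_neg_iff]
            exact Real.exp_le_one_iff.mpr ht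
          have h2 : (1:ℝ) ≤ Real.exp (α * t) := by
            apply Real.one_le_exp
            have := mul_nonneg (neg_nonneg.2 hα) (neg_nonneg.2 (mem_Iic.1 ht))
            nlinarith
          rw [show k * Real.exp (-1) = k * (Real.exp (-1) * 1) by ring]
          gcongr
        · rw [indicator_of_notMem ht]; exact zero_le

lemma aux_pos (k α : ℝ) (hk : 0 < k) :
    ∫⁻ t : ℝ, ENNReal.ofReal (k * (Real.exp (-(Real.exp t)) * Real.exp (α * t))) ≠ 0 := by
  have hC : (0:ℝ) < k * (Real.exp (-(Real.exp 1)) * Real.exp (-|α|)) := by positivity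
  have hle : (Icc (0:ℝ) 1).indicator
      (fun _ => ENNReal.ofReal (k * (Real.exp (-(Real.exp 1)) * Real.exp (-|α|)))) ≤
      fun t => ENNReal.ofReal (k * (Real.exp (-(Real.exp t)) * Real.exp (α * t))) := by
    intro t
    by_cases ht : t ∈ Icc (0:ℝ) 1
    · rw [indicator_of_mem ht]
      refine ENNReal.ofReal_le_ofReal ?_
      obtain ⟨ht0, ht1⟩ := ht
      have h1 : Real.exp (-(Real.exp 1)) ≤ Real.exp (-(Real.exp t)) := by
        apply Real.exp_le_exp.mpr
        simp only [neg_le_neg_iff]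
        exact Real.exp_le_exp.mpr ht1
      have h2 : Real.exp (-|α|) ≤ Real.exp (α * t) := by
        apply Real.exp_le_exp.mpr
        have habs : |α * t| ≤ |α| := by
          rw [abs_mul]
          calc |α| * |t| ≤ |α| * 1 :=
                mul_le_mul_of_nonneg_left (abs_le.mpr ⟨by linarith, ht1⟩) (abs_nonneg α)
            _ = |α| := mul_one _
        linarith [neg_abs_le (α * t)]
      gcongr
    · rw [indicator_of_notMem ht]; exact zero_le
  have hlb := lintegral_mono (μ := volume) hle
  rw [lintegral_indicator measurableSet_Icc, setLIntegral_const, Real.volume_Icc] at hlb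
  have hpos : (0:ℝ≥0∞) <
      ENNReal.ofReal (k * (Real.exp (-(Real.exp 1)) * Real.exp (-|α|))) * ENNReal.ofReal (1-0) := by
    rw [show (1:ℝ)-0 = 1 by ring, ENNReal.ofReal_one, mul_one]
    exact ENNReal.ofReal_pos.mpr hC
  exact ne_of_gt (lt_of_lt_of_le hpos hlb)

lemma det_eq' (c1 c2 b1 b2 : ℝ) :
    Matrix.det (Matrix.of fun r c : Fin 2 =>
        Real.exp (c1 * b1 + c2 * b2) * (![c1, c2] r) * (![c1, c2] c) +
        Real.exp b1 * (![(1 : ℝ), 0] r) * (![(1 : ℝ), 0] c) +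
        Real.exp b2 * (![(0 : ℝ), 1] r) * (![(0 : ℝ), 1] c)) =
      Real.exp b1 * Real.exp b2 + c1 ^ 2 * Real.exp b1 ^ c1 * Real.exp b2 ^ (c2 + 1) +
        c2 ^ 2 * Real.exp b1 ^ (c1 + 1) * Real.exp b2 ^ c2 := by
  rw [Matrix.det_fin_two]
  simp only [Matrix.of_apply, Matrix.cons_val_zero, Matrix.cons_val_one, Matrix.head_cons]
  rw [← Real.exp_mul, ← Real.exp_mul, ← Real.exp_mul, ← Real.exp_mul]
  rw [show b1*(c1+1) = b1*c1 + b1 by ring, show b2*(c2+1) = b2*c2 + b2 by ring,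
    show c1*b1+c2*b2 = (b1*c1) + (b2*c2) by ring]
  simp only [Real.exp_add]
  ring

lemma sqrt_exp' (a : ℝ) : Real.sqrt (Real.exp a) = Real.exp (a/2) := by
  rw [show Real.exp a = Real.exp (a/2) * Real.exp (a/2) by rw [← Real.exp_add]; ring_nf,
    Real.sqrt_mul_self (Real.exp_pos _).le]

lemma sqrt_ge' (c1 c2 b1 b2 : ℝ) :
    |c1| * (Real.exp (b1 * (c1/2)) * Real.exp (b2 * ((c2+1)/2))) ≤
    Real.sqrt (Real.exp b1 * Real.exp b2 + c1 ^ 2 * Real.exp b1 ^ c1 * Real.exp b2 ^ (c2 + 1) +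
      c2 ^ 2 * Real.exp b1 ^ (c1 + 1) * Real.exp b2 ^ c2) := by
  have key : Real.sqrt (c1^2 * Real.exp b1 ^ c1 * Real.exp b2 ^ (c2+1)) =
      |c1| * (Real.exp (b1 * (c1/2)) * Real.exp (b2 * ((c2+1)/2))) := by
    rw [← Real.exp_mul, ← Real.exp_mul, mul_assoc,
      Real.sqrt_mul (sq_nonneg c1), Real.sqrt_sq_eq_abs,
      Real.sqrt_mul (Real.exp_pos _).le, sqrt_exp', sqrt_exp']
    ring_nf
  rw [← key]
  apply Real.sqrt_le_sqrt
  have h1 : 0 < Real.exp b1 * Real.exp b2 := by positivity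
  have h2 : 0 ≤ c2 ^ 2 * Real.exp b1 ^ (c1 + 1) * Real.exp b2 ^ c2 := by positivity
  linarith

/-- (Remark 4.1) With `n = 3`, `q = 2`, zero offsets, covariates
`a₁ = (c₁,c₂)ᵀ, a₂ = (1,0)ᵀ, a₃ = (0,1)ᵀ` (so `λ₂ = e^{β₁}`, `λ₃ = e^{β₂}`,
`λ₁ = λ₂^{c₁}λ₃^{c₂}`), zero count `x₁ = 0`, and positive-count observations
`x₂, x₃`: we have
`det(Σᵢ λᵢaᵢaᵢᵀ) = λ₂λ₃ + c₁²λ₂^{c₁}λ₃^{c₂+1} + c₂²λ₂^{c₁+1}λ₃^{c₂}`, and if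
`x₂ ≤ −c₁/2` or `x₃ ≤ −(1+c₂)/2` then the marginal density of the ZIP regression
model under the full Jeffreys prior is infinite. -/
theorem zip_regression_jeffreys_marginal_infinite (c1 c2 : ℝ) (hc1 : c1 ≠ 0)
    (x2 x3 : ℕ) (hx : (x2 : ℝ) ≤ -c1 / 2 ∨ (x3 : ℝ) ≤ -(1 + c2) / 2) :
    (∀ β : ℝ × ℝ,
      Matrix.det (Matrix.of fun r c : Fin 2 =>
          Real.exp (c1 * β.1 + c2 * β.2) * (![c1, c2] r) * (![c1, c2] c) +
          Real.exp β.1 * (![(1 : ℝ), 0] r) * (![(1 : ℝ), 0] c) +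
          Real.exp β.2 * (![(0 : ℝ), 1] r) * (![(0 : ℝ), 1] c)) =
        Real.exp β.1 * Real.exp β.2 +
          c1 ^ 2 * Real.exp β.1 ^ c1 * Real.exp β.2 ^ (c2 + 1) +
          c2 ^ 2 * Real.exp β.1 ^ (c1 + 1) * Real.exp β.2 ^ c2) ∧
    (∫⁻ β : ℝ × ℝ,
        ENNReal.ofReal (Real.exp (-(Real.exp β.1)) * Real.exp β.1 ^ x2 *
          Real.exp (-(Real.exp β.2)) * Real.exp β.2 ^ x3 *
          Real.sqrt (Matrix.det (Matrix.of fun r c : Fin 2 =>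
            Real.exp (c1 * β.1 + c2 * β.2) * (![c1, c2] r) * (![c1, c2] c) +
            Real.exp β.1 * (![(1 : ℝ), 0] r) * (![(1 : ℝ), 0] c) +
            Real.exp β.2 * (![(0 : ℝ), 1] r) * (![(0 : ℝ), 1] c))))) = ⊤ := by
  refine ⟨fun β => det_eq' c1 c2 β.1 β.2, ?_⟩
  set α1 : ℝ := (x2 : ℝ) + c1/2 with hα1
  set α2 : ℝ := (x3 : ℝ) + (c2+1)/2 with hα2
  have hkpos : (0:ℝ) < |c1| := abs_pos.mpr hc1
  -- pointwise lower bound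
  have hpt : ∀ β : ℝ × ℝ,
      ENNReal.ofReal (|c1| * (Real.exp (-(Real.exp β.1)) * Real.exp (α1 * β.1))) *
        ENNReal.ofReal (1 * (Real.exp (-(Real.exp β.2)) * Real.exp (α2 * β.2))) ≤
      ENNReal.ofReal (Real.exp (-(Real.exp β.1)) * Real.exp β.1 ^ x2 *
          Real.exp (-(Real.exp β.2)) * Real.exp β.2 ^ x3 *
          Real.sqrt (Matrix.det (Matrix.of fun r c : Fin 2 =>
            Real.exp (c1 * β.1 + c2 * β.2) * (![c1, c2] r) * (![c1, c2] c) +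
            Real.exp β.1 * (![(1 : ℝ), 0] r) * (![(1 : ℝ), 0] c) +
            Real.exp β.2 * (![(0 : ℝ), 1] r) * (![(0 : ℝ), 1] c)))) := by
    intro β
    rw [← ENNReal.ofReal_mul (by positivity)]
    refine ENNReal.ofReal_le_ofReal ?_
    rw [det_eq' c1 c2 β.1 β.2]
    calc |c1| * (Real.exp (-(Real.exp β.1)) * Real.exp (α1 * β.1)) *
          (1 * (Real.exp (-(Real.exp β.2)) * Real.exp (α2 * β.2)))
        = (Real.exp (-(Real.exp β.1)) * Real.exp β.1 ^ x2 *
            Real.exp (-(Real.exp β.2)) * Real.exp β.2 ^ x3) *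
          (|c1| * (Real.exp (β.1 * (c1/2)) * Real.exp (β.2 * ((c2+1)/2)))) := by
          rw [← Real.exp_nat_mul, ← Real.exp_nat_mul, hα1, hα2,
            show ((x2:ℝ) + c1/2) * β.1 = (x2:ℝ)*β.1 + β.1*(c1/2) by ring,
            show ((x3:ℝ) + (c2+1)/2) * β.2 = (x3:ℝ)*β.2 + β.2*((c2+1)/2) by ring,
            Real.exp_add, Real.exp_add]
          ring
      _ ≤ _ := by
          refine mul_le_mul_of_nonneg_left (sqrt_ge' c1 c2 β.1 β.2) ?_
          positivity
  refine eq_top_iff.mpr (le_trans ?_ (lintegral_mono hpt))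
  have hprod := MeasureTheory.lintegral_prod_mul (μ := (volume : Measure ℝ))
    (ν := (volume : Measure ℝ))
    (aux_meas |c1| α1).aemeasurable (aux_meas 1 α2).aemeasurable
  rw [← MeasureTheory.Measure.volume_eq_prod] at hprod
  rw [hprod]
  rcases hx with h | h
  · have hα1le : α1 ≤ 0 := by rw [hα1]; linarith
    rw [aux_top |c1| α1 hkpos hα1le]
    exact le_of_eq (ENNReal.top_mul (aux_pos 1 α2 one_pos)).symm
  · have hα2le : α2 ≤ 0 := by rw [hα2]; linarith
    rw [aux_top 1 α2 one_pos hα2le]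
    exact le_of_eq (ENNReal.mul_top (aux_pos |c1| α1 hkpos)).symm
end

section
/- Let n ≥ 1 and a > 0, b > 0. Then ∫₀^1 ∫₀^∞ (p + (1−p)e^{−λ})^n · (b^a/Γ(a)) e^{−bλ} λ^{a−1} dλ dp = (b^a/(n+1)) · Σ_{j=0}^{n} (j+b)^{−a}. Consequently, since ∫₀^∞ e^{−nλ} (b^a/Γ(a)) e^{−bλ} λ^{a−1} dλ = (b/(n+b))^a, the Bayes factor for the all-zero sample equals B₁₀(0⃗) = ((n+b)^a/(n+1)) · Σ_{j=0}^{n} (j+b)^{−a}, and B₁₀(0⃗) ≥ 1. -/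
open MeasureTheory Real Set

lemma gamma_lint_aux (a r : ℝ) (ha : 0 < a) (hr : 0 < r) :
    ∫⁻ l in Ioi (0:ℝ), ENNReal.ofReal (l ^ (a-1) * Real.exp (-(r*l))) =
      ENNReal.ofReal (Real.Gamma a * r ^ (-a)) := by
  have hΓ : 0 < Real.Gamma a := Real.Gamma_pos_of_pos ha
  have h1 := ProbabilityTheory.lintegral_gammaPDF_eq_one ha hr
  rw [← lintegral_add_compl _ (measurableSet_Ici (a := (0:ℝ))), compl_Ici,
    ProbabilityTheory.lintegral_gammaPDF_of_nonpos le_rfl, add_zero] at h1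
  rw [setLIntegral_congr (Ioi_ae_eq_Ici (a := (0:ℝ)))]
  have h2 : ∫⁻ x in Ici (0:ℝ), ProbabilityTheory.gammaPDF a r x =
      ENNReal.ofReal (r ^ a / Real.Gamma a) *
        ∫⁻ x in Ici (0:ℝ), ENNReal.ofReal (x ^ (a-1) * Real.exp (-(r*x))) := by
    rw [← lintegral_const_mul]
    · refine setLIntegral_congr_fun measurableSet_Ici (fun x hx => ?_)
      rw [ProbabilityTheory.gammaPDF_of_nonneg hx, ← ENNReal.ofReal_mul (by positivity),
        mul_assoc]
    · fun_prop
  rw [h2] at h1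
  have hc : ENNReal.ofReal (r ^ a / Real.Gamma a) ≠ 0 := by
    simp only [ne_eq, ENNReal.ofReal_eq_zero, not_le]
    positivity
  have := (ENNReal.eq_inv_of_mul_eq_one_left (by rwa [mul_comm] at h1))
  rw [this, ← ENNReal.ofReal_inv_of_pos (by positivity)]
  congr 1
  rw [Real.rpow_neg hr.le]
  field_simp

lemma gamma_tilt_aux (a b c : ℝ) (ha : 0 < a) (hb : 0 < b) (hc : 0 ≤ c) :
    ∫⁻ l in Ioi (0:ℝ), ENNReal.ofReal (Real.exp (-c*l) *
        (b ^ a / Real.Gamma a * Real.exp (-b * l) * l ^ (a - 1))) =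
      ENNReal.ofReal (b ^ a * (c + b) ^ (-a)) := by
  have hΓ : 0 < Real.Gamma a := Real.Gamma_pos_of_pos ha
  have step : ∀ l : ℝ, Real.exp (-c*l) *
      (b ^ a / Real.Gamma a * Real.exp (-b * l) * l ^ (a - 1)) =
      (b ^ a / Real.Gamma a) * (l ^ (a-1) * Real.exp (-((c+b)*l))) := by
    intro l
    rw [show (-((c+b)*l)) = (-c*l) + (-b*l) by ring, Real.exp_add]
    ring
  simp_rw [step]
  have : ∀ l : ℝ, ENNReal.ofReal ((b ^ a / Real.Gamma a) * (l ^ (a-1) * Real.exp (-((c+b)*l)))) =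
      ENNReal.ofReal (b ^ a / Real.Gamma a) * ENNReal.ofReal (l ^ (a-1) * Real.exp (-((c+b)*l))) :=
    fun l => ENNReal.ofReal_mul (by positivity)
  simp_rw [this]
  rw [lintegral_const_mul _ (by fun_prop), gamma_lint_aux a (c+b) ha (by linarith),
    ← ENNReal.ofReal_mul (by positivity)]
  congr 1
  field_simp

lemma beta_like_aux (n : ℕ) (E : ℝ) (hE0 : 0 < E) (hE1 : E < 1) :
    ∫⁻ p in Ioo (0:ℝ) 1, ENNReal.ofReal ((p + (1 - p) * E) ^ n) =
      ENNReal.ofReal ((∑ j ∈ Finset.range (n+1), E^j) / (n+1)) := by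
  have hcont : Continuous fun p : ℝ => (p + (1 - p) * E) ^ n := by continuity
  have hint : IntegrableOn (fun p : ℝ => (p + (1 - p) * E) ^ n) (Ioo 0 1) :=
    (hcont.integrableOn_Icc (a := 0) (b := 1)).mono_set Ioo_subset_Icc_self
  have hnn : 0 ≤ᵐ[volume.restrict (Ioo (0:ℝ) 1)] fun p : ℝ => (p + (1 - p) * E) ^ n := by
    filter_upwards [self_mem_ae_restrict measurableSet_Ioo] with p hp
    have h1 : 0 < p := hp.1
    have h2 : p < 1 := hp.2
    have : 0 < p + (1 - p) * E := by nlinarith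
    positivity
  rw [← ofReal_integral_eq_lintegral_ofReal hint hnn]
  congr 1
  have key : ∀ p : ℝ, (p + (1 - p) * E) ^ n = ((1-E) * p + E) ^ n := by
    intro p; ring_nf
  simp_rw [key]
  have h1E : (1 - E) ≠ 0 := by linarith
  rw [← integral_Ioc_eq_integral_Ioo, ← intervalIntegral.integral_of_le zero_le_one,
    intervalIntegral.integral_comp_mul_add (fun x => x ^ n) h1E E]
  rw [mul_zero, zero_add, mul_one, show (1 - E) + E = 1 by ring, integral_pow]
  rw [geom_sum_eq hE1.ne (n+1)]
  have hE1' : E - 1 ≠ 0 := by linarith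
  have hn1 : ((n:ℝ)+1) ≠ 0 := by positivity
  rw [smul_eq_mul]
  field_simp
  ring

/-- For the all-zero sample of size `n`, with a `Gamma(a,b)` prior for `λ` and a
uniform prior for `p`:
`∫₀^1 ∫₀^∞ (p+(1−p)e^{−λ})^n g(λ|a,b) dλ dp = (b^a/(n+1)) Σ_{j=0}^n (j+b)^{−a}`;
since `∫₀^∞ e^{−nλ} g(λ|a,b) dλ = (b/(n+b))^a`, the Bayes factor is
`B₁₀(0) = ((n+b)^a/(n+1)) Σ_{j=0}^n (j+b)^{−a} ≥ 1`. -/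
theorem zip_all_zero_gamma_bayes_factor (n : ℕ) (hn : 1 ≤ n) (a b : ℝ)
    (ha : 0 < a) (hb : 0 < b) :
    (∫⁻ p in Set.Ioo (0 : ℝ) 1, ∫⁻ l in Set.Ioi (0 : ℝ),
        ENNReal.ofReal ((p + (1 - p) * Real.exp (-l)) ^ n *
          (b ^ a / Real.Gamma a * Real.exp (-b * l) * l ^ (a - 1))) =
      ENNReal.ofReal (b ^ a / ((n : ℝ) + 1) *
        ∑ j ∈ Finset.range (n + 1), ((j : ℝ) + b) ^ (-a))) ∧
    (∫⁻ l in Set.Ioi (0 : ℝ),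
        ENNReal.ofReal (Real.exp (-(n : ℝ) * l) *
          (b ^ a / Real.Gamma a * Real.exp (-b * l) * l ^ (a - 1))) =
      ENNReal.ofReal ((b / ((n : ℝ) + b)) ^ a)) ∧
    (b ^ a / ((n : ℝ) + 1) * ∑ j ∈ Finset.range (n + 1), ((j : ℝ) + b) ^ (-a)) /
        (b / ((n : ℝ) + b)) ^ a =
      ((n : ℝ) + b) ^ a / ((n : ℝ) + 1) *
        ∑ j ∈ Finset.range (n + 1), ((j : ℝ) + b) ^ (-a) ∧
    1 ≤ ((n : ℝ) + b) ^ a / ((n : ℝ) + 1) *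
        ∑ j ∈ Finset.range (n + 1), ((j : ℝ) + b) ^ (-a) := by
  have hΓ : 0 < Real.Gamma a := Real.Gamma_pos_of_pos ha
  have hnb : (0:ℝ) < (n:ℝ) + b := by positivity
  have hn1 : (0:ℝ) < (n:ℝ) + 1 := by positivity
  refine ⟨?_, ?_, ?_, ?_⟩
  · -- Part 1
    rw [lintegral_lintegral_swap (by apply Measurable.aemeasurable; fun_prop)]
    have inner : ∀ l ∈ Ioi (0:ℝ),
        (∫⁻ p in Ioo (0:ℝ) 1, ENNReal.ofReal ((p + (1 - p) * Real.exp (-l)) ^ n *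
          (b ^ a / Real.Gamma a * Real.exp (-b * l) * l ^ (a - 1)))) =
        ENNReal.ofReal ((∑ j ∈ Finset.range (n+1), Real.exp (-(j:ℝ)*l) / ((n:ℝ)+1)) *
          (b ^ a / Real.Gamma a * Real.exp (-b * l) * l ^ (a - 1))) := by
      intro l hl
      have hl0 : (0:ℝ) < l := hl
      have hDnn : 0 ≤ b ^ a / Real.Gamma a * Real.exp (-b * l) * l ^ (a - 1) := by
        have : (0:ℝ) ≤ l ^ (a-1) := Real.rpow_nonneg hl0.le _
        positivity
      have hE0 : 0 < Real.exp (-l) := Real.exp_pos _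
      have hE1 : Real.exp (-l) < 1 := Real.exp_lt_one_iff.mpr (by linarith)
      rw [setLIntegral_congr_fun measurableSet_Ioo (fun p hp => by
          rw [ENNReal.ofReal_mul (by
            have h1 : 0 < p := hp.1
            have h2 : p < 1 := hp.2
            have : 0 < p + (1 - p) * Real.exp (-l) := by nlinarith
            positivity)]),
        lintegral_mul_const _ (by fun_prop),
        beta_like_aux n (Real.exp (-l)) hE0 hE1,
        ← ENNReal.ofReal_mul (by positivity)]
      congr 1
      have hsum : (∑ j ∈ Finset.range (n+1), Real.exp (-l) ^ j) =
          ∑ j ∈ Finset.range (n+1), Real.exp (-(j:ℝ)*l) :=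
        Finset.sum_congr rfl fun j _ => by rw [← Real.exp_nat_mul, neg_mul, mul_neg]
      rw [hsum, Finset.sum_div]
    rw [setLIntegral_congr_fun measurableSet_Ioi inner]
    have outer_pt : ∀ l ∈ Ioi (0:ℝ),
        ENNReal.ofReal ((∑ j ∈ Finset.range (n+1), Real.exp (-(j:ℝ)*l) / ((n:ℝ)+1)) *
          (b ^ a / Real.Gamma a * Real.exp (-b * l) * l ^ (a - 1))) =
        ∑ j ∈ Finset.range (n+1), ENNReal.ofReal (1/((n:ℝ)+1) *
          (Real.exp (-(j:ℝ)*l) * (b ^ a / Real.Gamma a * Real.exp (-b * l) * l ^ (a - 1)))) := by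
      intro l hl
      have hl0 : (0:ℝ) < l := hl
      have hDnn : 0 ≤ b ^ a / Real.Gamma a * Real.exp (-b * l) * l ^ (a - 1) := by
        have : (0:ℝ) ≤ l ^ (a-1) := Real.rpow_nonneg hl0.le _
        positivity
      rw [show (∑ j ∈ Finset.range (n+1), Real.exp (-(j:ℝ)*l) / ((n:ℝ)+1)) *
          (b ^ a / Real.Gamma a * Real.exp (-b * l) * l ^ (a - 1)) =
          ∑ j ∈ Finset.range (n+1), (1/((n:ℝ)+1) *
            (Real.exp (-(j:ℝ)*l) * (b ^ a / Real.Gamma a * Real.exp (-b * l) * l ^ (a - 1))))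
        from by rw [Finset.sum_mul]; exact Finset.sum_congr rfl fun j _ => by ring]
      exact ENNReal.ofReal_sum_of_nonneg fun j _ =>
        mul_nonneg (by positivity) (mul_nonneg (Real.exp_nonneg _) hDnn)
    rw [setLIntegral_congr_fun measurableSet_Ioi outer_pt,
      lintegral_finset_sum _ (fun j _ => by fun_prop)]
    calc ∑ j ∈ Finset.range (n+1), ∫⁻ l in Ioi (0:ℝ), ENNReal.ofReal (1/((n:ℝ)+1) *
          (Real.exp (-(j:ℝ)*l) * (b ^ a / Real.Gamma a * Real.exp (-b * l) * l ^ (a - 1))))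
        = ∑ j ∈ Finset.range (n+1),
            ENNReal.ofReal (b ^ a / ((n:ℝ)+1) * ((j:ℝ) + b) ^ (-a)) := by
          refine Finset.sum_congr rfl fun j _ => ?_
          simp_rw [ENNReal.ofReal_mul (show (0:ℝ) ≤ 1/((n:ℝ)+1) by positivity)]
          rw [lintegral_const_mul _ (by fun_prop),
            gamma_tilt_aux a b (j:ℝ) ha hb (Nat.cast_nonneg j),
            ← ENNReal.ofReal_mul (by positivity)]
          congr 1
          ring
      _ = ENNReal.ofReal (∑ j ∈ Finset.range (n+1),
            b ^ a / ((n:ℝ)+1) * ((j:ℝ) + b) ^ (-a)) :=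
          (ENNReal.ofReal_sum_of_nonneg fun j _ => by positivity).symm
      _ = ENNReal.ofReal (b ^ a / ((n : ℝ) + 1) *
            ∑ j ∈ Finset.range (n + 1), ((j : ℝ) + b) ^ (-a)) := by
          rw [← Finset.mul_sum]
  · -- Part 2
    rw [gamma_tilt_aux a b (n:ℝ) ha hb (Nat.cast_nonneg n)]
    congr 1
    rw [Real.div_rpow hb.le hnb.le, Real.rpow_neg hnb.le]
    field_simp
  · -- Part 3
    rw [Real.div_rpow hb.le hnb.le]
    have h1 : b ^ a ≠ 0 := by positivity
    have h2 : ((n:ℝ)+b) ^ a ≠ 0 := by positivity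
    have h3 : ((n:ℝ)+1) ≠ 0 := by positivity
    field_simp
  · -- Part 4
    have hS : ((n:ℝ)+1) * ((n:ℝ)+b)^(-a) ≤
        ∑ j ∈ Finset.range (n + 1), ((j : ℝ) + b) ^ (-a) := by
      have := Finset.card_nsmul_le_sum (Finset.range (n+1))
        (fun j => ((j:ℝ) + b) ^ (-a)) (((n:ℝ)+b)^(-a)) ?_
      · simpa [nsmul_eq_mul, Finset.card_range] using this
      · intro i hi
        have hi' : (i:ℝ) ≤ (n:ℝ) := by
          exact_mod_cast Nat.lt_succ_iff.mp (Finset.mem_range.mp hi)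
        exact Real.rpow_le_rpow_of_nonpos (by positivity) (by linarith) (by linarith)
    calc (1:ℝ) = ((n:ℝ)+b)^a / ((n:ℝ)+1) * (((n:ℝ)+1) * ((n:ℝ)+b)^(-a)) := by
          rw [Real.rpow_neg hnb.le]
          field_simp
      _ ≤ _ := mul_le_mul_of_nonneg_left hS (by positivity)
end
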